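/- arXiv:1303.1346 — 9 statements merged into one kernel-verified Lean document; each statement's English description precedes it below -/
import Mathlib

section
/- For every positive integer n there exists an automorphism φ_n of the free group F_∞ = FreeGroup ℕ on countably many generators whose Reidemeister number is exactly n, i.e., the quotient of F_∞ by the Reidemeister equivalence relation of φ_n has exactly n elements. -/
/-- Two elements `x y : G` are Reidemeister equivalent with respect to an
endomorphism `φ` of `G` if `x = z * y * (φ z)⁻¹` for some `z : G`. -/
def ReidemeisterRel {G : Type*} [Group G] (φ : G →* G) (x y : G) : Prop :=
  ∃ z : G, x = z * y * (φ z)⁻¹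

/-- The set (type) of Reidemeister classes of an endomorphism `φ` of a group `G`. -/
def ReidemeisterClasses {G : Type*} [Group G] (φ : G →* G) : Type _ :=
  Quot (ReidemeisterRel φ)

/-- A group `G` has property `R_∞` if every automorphism of `G` has infinitely
many Reidemeister classes. -/
def PropertyRInfinity (G : Type*) [Group G] : Prop :=
  ∀ φ : G ≃* G, Infinite (ReidemeisterClasses φ.toMonoidHom)

namespace RCon

open FreeGroup

abbrev F : Type := FreeGroup ℕ

/-- Decode a natural number into a word (list of letters with signs). -/
def dec (j : ℕ) : List (ℕ × Bool) := (Encodable.decode (α := List (ℕ × Bool)) j).getD []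

lemma dec_encode (l : List (ℕ × Bool)) : dec (Encodable.encode l) = l := by
  simp [dec, Encodable.encodek]

/-- The word assigned to index `i`, guaranteed to use only letters `< i`. -/
def L (i : ℕ) : List (ℕ × Bool) :=
  if ∀ p ∈ dec (Nat.unpair i).1, p.1 < i then dec (Nat.unpair i).1 else []

lemma L_lt {i : ℕ} : ∀ p ∈ L i, p.1 < i := by
  unfold L; split
  · assumption
  · simp

/-- The "absorbed" element at index `i`. -/
def v (i : ℕ) : F := FreeGroup.mk (L i)

lemma v_zero : v 0 = 1 := by
  have h0 : L 0 = [] := by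
    unfold L
    split
    · rename_i h
      refine List.eq_nil_iff_forall_not_mem.2 fun p hp => ?_
      exact absurd (h p hp) (Nat.not_lt_zero _)
    · rfl
  rw [v, h0, ← one_eq_mk]

lemma exists_v (w : F) : ∃ i, v i = w := by
  classical
  set Lw := w.toWord with hLw
  set j := Encodable.encode Lw with hj
  set K := (Lw.map Prod.fst).sum + 1 with hK
  refine ⟨Nat.pair j K, ?_⟩
  have hd : dec ((Nat.unpair (Nat.pair j K)).1) = Lw := by
    rw [Nat.unpair_pair]; exact dec_encode Lw
  have hcond : ∀ p ∈ dec ((Nat.unpair (Nat.pair j K)).1), p.1 < Nat.pair j K := by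
    rw [hd]
    intro p hp
    have h1 : p.1 ≤ (Lw.map Prod.fst).sum :=
      List.single_le_sum (by intro x _; exact Nat.zero_le x) _ (List.mem_map_of_mem hp)
    have h2 : K ≤ Nat.pair j K := Nat.right_le_pair j K
    omega
  have hL : L (Nat.pair j K) = Lw := by
    rw [L, if_pos hcond, hd]
  rw [v, hL, hLw, FreeGroup.mk_toWord]

/-- If two homomorphisms agree on the letters of a word, they agree on the word. -/
lemma hom_eq_on_mk {G : Type*} [Group G] (g₁ g₂ : F →* G) (l : List (ℕ × Bool))
    (h : ∀ p ∈ l, g₁ (of p.1) = g₂ (of p.1)) :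
    g₁ (FreeGroup.mk l) = g₂ (FreeGroup.mk l) := by
  induction l with
  | nil => rw [← one_eq_mk, _root_.map_one, _root_.map_one]
  | cons p t ih =>
    have hsplit : FreeGroup.mk (p :: t) = FreeGroup.mk [p] * FreeGroup.mk t := by
      rw [mul_mk]; rfl
    rw [hsplit, _root_.map_mul, _root_.map_mul, ih fun q hq => h q (List.mem_cons_of_mem _ hq)]
    congr 1
    rcases p with ⟨a, b⟩
    have ha := h (a, b) List.mem_cons_self
    cases b
    · have hinv : FreeGroup.mk [(a, false)] = (of a)⁻¹ := by
        show FreeGroup.mk [(a, false)] = (FreeGroup.mk [(a, true)])⁻¹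
        rw [inv_mk]
        rfl
      rw [hinv, _root_.map_inv, _root_.map_inv, ha]
    · exact ha

end RCon

namespace RCon

open FreeGroup

variable (n : ℕ)

/-- The invariant homomorphism to `ZMod n`, sending `x_0 ↦ 1` and `x_i ↦ 0` for `i ≥ 1`. -/
def hAdd : F →* Multiplicative (ZMod n) :=
  FreeGroup.lift fun i => Multiplicative.ofAdd (if i = 0 then (1 : ZMod n) else 0)

/-- The additive value of the invariant. -/
def hz (w : F) : ZMod n := Multiplicative.toAdd (hAdd n w)

/-- The exponent used at index `i`. -/
def kk (i : ℕ) : ℕ := (hz n (v i)).val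

lemma hz_one : hz n 1 = 0 := by simp [hz]

lemma kk_zero : kk n 0 = 0 := by
  rw [kk, v_zero, hz_one, ZMod.val_zero]

/-- The automorphism (as a homomorphism): `x_i ↦ x_0^{-k i} x_i v_i`. -/
def phi : F →* F :=
  FreeGroup.lift fun i => (of 0) ^ (-(kk n i : ℤ)) * of i * v i

lemma phi_of (i : ℕ) : phi n (of i) = (of 0) ^ (-(kk n i : ℤ)) * of i * v i :=
  FreeGroup.lift_apply_of

lemma phi_of_zero : phi n (of 0) = of 0 := by
  rw [phi_of, kk_zero, v_zero]
  simp

/-- The inverse on generators, by strong recursion. -/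
def psifun : ℕ → F
  | i =>
    (of 0) ^ ((kk n i : ℤ)) * of i *
      (FreeGroup.lift (fun j => if _h : j < i then psifun j else 1) (v i))⁻¹
  termination_by i => i

/-- The inverse homomorphism. -/
def psi : F →* F := FreeGroup.lift (psifun n)

lemma psifun_eq (i : ℕ) :
    psifun n i = (of 0) ^ ((kk n i : ℤ)) * of i * (psi n (v i))⁻¹ := by
  rw [psifun]
  congr 2
  rw [v]
  exact hom_eq_on_mk _ _ _ fun p hp => by
    rw [FreeGroup.lift_apply_of, dif_pos (L_lt p hp), psi, FreeGroup.lift_apply_of]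

lemma psifun_zero : psifun n 0 = of 0 := by
  rw [psifun_eq, kk_zero, v_zero]
  simp

lemma psi_of (i : ℕ) : psi n (of i) = psifun n i := FreeGroup.lift_apply_of

lemma psi_phi : (psi n).comp (phi n) = MonoidHom.id F := by
  refine FreeGroup.ext_hom _ _ fun i => ?_
  rw [MonoidHom.comp_apply, MonoidHom.id_apply, phi_of, _root_.map_mul, _root_.map_mul,
    map_zpow, psi_of, psifun_zero, psi_of, psifun_eq]
  group

lemma phi_psifun (i : ℕ) : phi n (psifun n i) = of i := by
  induction i using Nat.strong_induction_on with
  | _ i IH =>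
    have hv : phi n (psi n (v i)) = v i := by
      rw [v]
      have := hom_eq_on_mk ((phi n).comp (psi n)) (MonoidHom.id F) (L i) fun p hp => by
        rw [MonoidHom.comp_apply, MonoidHom.id_apply, psi_of, IH p.1 (L_lt p hp)]
      simpa using this
    rw [psifun_eq, _root_.map_mul, _root_.map_mul, map_zpow, _root_.map_inv, phi_of_zero,
      hv, phi_of]
    group

lemma phi_psi : (phi n).comp (psi n) = MonoidHom.id F := by
  refine FreeGroup.ext_hom _ _ fun i => ?_
  rw [MonoidHom.comp_apply, MonoidHom.id_apply, psi_of, phi_psifun]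

/-- The automorphism. -/
def phiEquiv : F ≃* F := MonoidHom.toMulEquiv (phi n) (psi n) (psi_phi n) (phi_psi n)

lemma phiEquiv_toMonoidHom : (phiEquiv n).toMonoidHom = phi n := rfl

end RCon

namespace RCon

open FreeGroup

variable (n : ℕ) [NeZero n]

omit [NeZero n] in
lemma hAdd_of (i : ℕ) :
    hAdd n (of i) = Multiplicative.ofAdd (if i = 0 then (1 : ZMod n) else 0) :=
  FreeGroup.lift_apply_of

lemma hAdd_v (i : ℕ) : hAdd n (v i) = Multiplicative.ofAdd ((kk n i : ZMod n)) := by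
  rw [kk, hz, ZMod.natCast_zmod_val]
  rfl

lemma hAdd_phi : (hAdd n).comp (phi n) = hAdd n := by
  refine FreeGroup.ext_hom _ _ fun i => ?_
  rw [MonoidHom.comp_apply, phi_of, _root_.map_mul, _root_.map_mul, map_zpow,
    hAdd_of, hAdd_of, hAdd_v]
  apply Multiplicative.toAdd.injective
  simp only [toAdd_mul, toAdd_zpow, toAdd_ofAdd, if_pos rfl]
  rw [if_pos trivial, zsmul_eq_mul, mul_one]
  push_cast
  ring

/-- Canonical representative of the class with invariant `c`. -/
def rep (c : ZMod n) : F := (of 0) ^ (c.val)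

lemma hz_rep (c : ZMod n) : hz n (rep n c) = c := by
  rw [hz, rep, map_pow, hAdd_of, if_pos rfl]
  show c.val • (1 : ZMod n) = c
  rw [nsmul_eq_mul, mul_one, ZMod.natCast_zmod_val]

lemma hz_rel {x y : F} (h : ReidemeisterRel (phiEquiv n).toMonoidHom x y) :
    hz n x = hz n y := by
  obtain ⟨z, rfl⟩ := h
  have hphiz : hAdd n (phi n z) = hAdd n z := DFunLike.congr_fun (hAdd_phi n) z
  show hz n (z * y * (phi n z)⁻¹) = hz n y
  have key : hAdd n (z * y * (phi n z)⁻¹) = hAdd n y := by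
    rw [_root_.map_mul, _root_.map_mul, _root_.map_inv, hphiz, mul_inv_cancel_comm]
  rw [hz, hz, key]

omit [NeZero n] in
lemma rel_rep (w : F) :
    ReidemeisterRel (phiEquiv n).toMonoidHom w (rep n (hz n w)) := by
  obtain ⟨i, hi⟩ := exists_v w
  refine ⟨(of i)⁻¹, ?_⟩
  show w = (of i)⁻¹ * rep n (hz n w) * (phi n (of i)⁻¹)⁻¹
  rw [_root_.map_inv, inv_inv, phi_of, rep]
  have hk : kk n i = (hz n w).val := by rw [kk, hi]
  rw [hk, hi, ← zpow_natCast (of 0) (hz n w).val]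
  group

/-- The Reidemeister classes are in bijection with `ZMod n`. -/
def classEquiv : ReidemeisterClasses (phiEquiv n).toMonoidHom ≃ ZMod n where
  toFun := Quot.lift (hz n) fun _ _ h => hz_rel n h
  invFun := fun c => Quot.mk _ (rep n c)
  left_inv := fun q => by
    refine Quot.inductionOn q fun w => ?_
    exact (Quot.sound (rel_rep n w)).symm
  right_inv := fun c => hz_rep n c

end RCon


/-- For every positive integer `n` there is an automorphism `φₙ` of the free group
`F_∞ = FreeGroup ℕ` of countably infinite rank whose Reidemeister number is exactly `n`. -/
theorem exists_automorphism_freeGroupNat_reidemeisterNumber_eq (n : ℕ) (hn : 0 < n) :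
    ∃ φ : FreeGroup ℕ ≃* FreeGroup ℕ,
      Nat.card (ReidemeisterClasses φ.toMonoidHom) = n := by
  haveI : NeZero n := ⟨hn.ne'⟩
  exact ⟨RCon.phiEquiv n, by rw [Nat.card_congr (RCon.classEquiv n), Nat.card_zmod]⟩
end

section
/- Let F = FreeGroup ℕ with generators x_0, x_1, x_2, ..., let φ : F →* F be the homomorphism (via FreeGroup.lift) determined by φ(x_0) = x_0 and φ(x_{i+1}) = x_i * x_{i+1}, and let c ≥ 1. Then φ is bijective, φ induces an endomorphism φ_c on the free nilpotent group N_{∞,c} = F ⧸ γ_{c+1}(F) of class c and countable rank, φ_c is bijective, and φ_c has exactly one Reidemeister class: every g ∈ N_{∞,c} can be written g = z * φ_c(z)⁻¹ for some z ∈ N_{∞,c}. In particular N_{∞,c} does not have property R_∞. -/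
/-- The endomorphism `φ` of `F_∞ = FreeGroup ℕ` determined by `φ(x_0) = x_0` and
`φ(x_{i+1}) = x_i * x_{i+1}`. -/
noncomputable def phiFree : FreeGroup ℕ →* FreeGroup ℕ :=
  FreeGroup.lift fun i =>
    match i with
    | 0 => FreeGroup.of 0
    | Nat.succ j => FreeGroup.of j * FreeGroup.of (j + 1)

/-- `φ` maps `γ_{c+1}(F_∞) = lowerCentralSeries F_∞ c` into itself. -/
theorem phiFree_lcs_le (c : ℕ) :
    Subgroup.lowerCentralSeries (⊤ : Subgroup (FreeGroup ℕ)) c ≤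
      (Subgroup.lowerCentralSeries (⊤ : Subgroup (FreeGroup ℕ)) c).comap phiFree :=
  Subgroup.map_le_iff_le_comap.mp (Subgroup.lowerCentralSeries.map phiFree c)

/-- The endomorphism `φ_c` induced by `φ` on the free nilpotent group
`N_{∞,c} = F_∞ / γ_{c+1}(F_∞)` of class `c` and countable rank. -/
noncomputable def phiFreeNilpotent (c : ℕ) :
    FreeGroup ℕ ⧸ Subgroup.lowerCentralSeries (⊤ : Subgroup (FreeGroup ℕ)) c →*
      FreeGroup ℕ ⧸ Subgroup.lowerCentralSeries (⊤ : Subgroup (FreeGroup ℕ)) c :=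
  QuotientGroup.map _ _ phiFree (phiFree_lcs_le c)

namespace RInf

open scoped commutatorElement

abbrev F := FreeGroup ℕ
abbrev L (k : ℕ) : Subgroup F := Subgroup.lowerCentralSeries (⊤ : Subgroup (FreeGroup ℕ)) k

theorem phi_of_zero : phiFree (FreeGroup.of 0) = FreeGroup.of 0 := FreeGroup.lift_apply_of

theorem phi_of_succ (n : ℕ) :
    phiFree (FreeGroup.of (n + 1)) = FreeGroup.of n * FreeGroup.of (n + 1) := FreeGroup.lift_apply_of

/-- commutator of an `L k` element with anything lies in `L (k+1)` -/
theorem comm_mem {k : ℕ} {u : F} (hu : u ∈ L k) (a : F) : ⁅u, a⁆ ∈ L (k + 1) :=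
  Subgroup.subset_closure ⟨u, hu, a, Subgroup.mem_top a, rfl⟩

theorem mk_center {k : ℕ} {u : F} (hu : u ∈ L k) :
    (QuotientGroup.mk u : F ⧸ L (k + 1)) ∈ Subgroup.center (F ⧸ L (k + 1)) := by
  rw [Subgroup.mem_center_iff]
  intro g
  induction g using QuotientGroup.induction_on with
  | _ a =>
    rw [← QuotientGroup.mk_mul, ← QuotientGroup.mk_mul]
    apply (QuotientGroup.eq (s := L (k+1))).mpr
    have : (a * u)⁻¹ * (u * a) = ⁅u⁻¹, a⁻¹⁆ := by
      simp [commutatorElement_def]; group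
    rw [this]
    exact comm_mem (inv_mem hu) a⁻¹

/-- the twisted translation `η z = z (φ z)⁻¹` -/
noncomputable def eta (z : F) : F := z * (phiFree z)⁻¹

theorem eta_one : eta 1 = 1 := by simp [eta]

theorem eta_mem {k : ℕ} {v : F} (hv : v ∈ L k) : eta v ∈ L k :=
  mul_mem hv (inv_mem (phiFree_lcs_le k hv))

theorem phi_eq {v : F} : phiFree v = (eta v)⁻¹ * v := by
  simp [eta]

theorem eta_mul_eq (a b : F) : eta (a * b) = a * eta b * a⁻¹ * eta a := by
  simp only [eta, map_mul]; group

theorem eta_inv_eq (a : F) : eta a⁻¹ = a⁻¹ * (eta a)⁻¹ * a := by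
  simp only [eta, map_inv]; group

theorem central_conj {G : Type*} [Group G] {z : G} (hz : z ∈ Subgroup.center G) (g : G) :
    g * z * g⁻¹ = z := by
  rw [Subgroup.mem_center_iff.mp hz g, mul_assoc, mul_inv_cancel, mul_one]

/-- `η` is multiplicative mod a modulus in whose quotient `η b` is central -/
theorem eta_mul {k : ℕ} (a b : F)
    (hb : (QuotientGroup.mk (eta b) : F ⧸ L k) ∈ Subgroup.center (F ⧸ L k)) :
    (QuotientGroup.mk (eta (a * b)) : F ⧸ L k)
      = QuotientGroup.mk (eta a) * QuotientGroup.mk (eta b) := by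
  rw [eta_mul_eq]
  rw [show ((a * eta b * a⁻¹ * eta a : F) : F ⧸ L k)
      = ((a : F ⧸ L k) * (eta b : F) * (a : F ⧸ L k)⁻¹) * (eta a : F) by
    rfl]
  rw [central_conj hb]
  exact (Subgroup.mem_center_iff.mp hb (QuotientGroup.mk (eta a))).symm

theorem eta_inv {k : ℕ} (a : F)
    (ha : (QuotientGroup.mk (eta a) : F ⧸ L k) ∈ Subgroup.center (F ⧸ L k)) :
    (QuotientGroup.mk (eta a⁻¹) : F ⧸ L k) = (QuotientGroup.mk (eta a) : F ⧸ L k)⁻¹ := by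
  rw [eta_inv_eq]
  rw [show ((a⁻¹ * (eta a)⁻¹ * a : F) : F ⧸ L k)
      = ((a : F ⧸ L k)⁻¹ * ((eta a : F) : F ⧸ L k)⁻¹ * (a : F ⧸ L k)) by rfl]
  have h := central_conj (inv_mem ha) ((a : F ⧸ L k)⁻¹)
  rwa [inv_inv] at h

theorem comm_central {k : ℕ} {v : F} (hv : v ∈ L k) (C : F) :
    (QuotientGroup.mk ⁅v, C⁆ : F ⧸ L (k + 1 + 1)) ∈ Subgroup.center (F ⧸ L (k + 1 + 1)) :=
  mk_center (comm_mem hv C)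

theorem V2 {k : ℕ} {v w : F} (hv : v ∈ L k) (hw : w ∈ L k) (C : F) :
    (QuotientGroup.mk ⁅v * w, C⁆ : F ⧸ L (k + 1 + 1))
      = QuotientGroup.mk ⁅v, C⁆ * QuotientGroup.mk ⁅w, C⁆ := by
  have hid : ⁅v * w, C⁆ = v * ⁅w, C⁆ * v⁻¹ * ⁅v, C⁆ := by
    simp only [commutatorElement_def]; group
  rw [hid,
    show ((v * ⁅w, C⁆ * v⁻¹ * ⁅v, C⁆ : F) : F ⧸ L (k + 1 + 1))
      = ((v : F ⧸ L (k + 1 + 1)) * QuotientGroup.mk ⁅w, C⁆ * (v : F ⧸ L (k + 1 + 1))⁻¹)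
        * QuotientGroup.mk ⁅v, C⁆ from rfl,
    central_conj (comm_central hw C)]
  exact (Subgroup.mem_center_iff.mp (comm_central hw C) _).symm

theorem V3 {k : ℕ} {v : F} (hv : v ∈ L k) (C : F) :
    (QuotientGroup.mk ⁅v⁻¹, C⁆ : F ⧸ L (k + 1 + 1))
      = (QuotientGroup.mk ⁅v, C⁆ : F ⧸ L (k + 1 + 1))⁻¹ := by
  have hid : ⁅v⁻¹, C⁆ = v⁻¹ * ⁅v, C⁆⁻¹ * v := by
    simp only [commutatorElement_def]; group
  rw [hid,
    show ((v⁻¹ * ⁅v, C⁆⁻¹ * v : F) : F ⧸ L (k + 1 + 1))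
      = ((v : F ⧸ L (k + 1 + 1))⁻¹ * (QuotientGroup.mk ⁅v, C⁆)⁻¹
          * ((v : F ⧸ L (k + 1 + 1))⁻¹)⁻¹) by rw [inv_inv]; rfl,
    central_conj (inv_mem (comm_central hv C))]

theorem V4 {k : ℕ} {v : F} (hv : v ∈ L k) (C D : F) :
    (QuotientGroup.mk ⁅v, C * D⁆ : F ⧸ L (k + 1 + 1))
      = QuotientGroup.mk ⁅v, C⁆ * QuotientGroup.mk ⁅v, D⁆ := by
  have hid : ⁅v, C * D⁆ = ⁅v, C⁆ * (C * ⁅v, D⁆ * C⁻¹) := by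
    simp only [commutatorElement_def]; group
  rw [hid,
    show ((⁅v, C⁆ * (C * ⁅v, D⁆ * C⁻¹) : F) : F ⧸ L (k + 1 + 1))
      = QuotientGroup.mk ⁅v, C⁆
        * ((C : F ⧸ L (k + 1 + 1)) * QuotientGroup.mk ⁅v, D⁆ * (C : F ⧸ L (k + 1 + 1))⁻¹)
      from rfl,
    central_conj (comm_central hv D)]

theorem V5 {k : ℕ} {v : F} (hv : v ∈ L k) (C : F) :
    (QuotientGroup.mk ⁅v, C⁻¹⁆ : F ⧸ L (k + 1 + 1))
      = (QuotientGroup.mk ⁅v, C⁆ : F ⧸ L (k + 1 + 1))⁻¹ := by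
  have hid : ⁅v, C⁻¹⁆ = C⁻¹ * ⁅v, C⁆⁻¹ * C := by
    simp only [commutatorElement_def]; group
  rw [hid,
    show ((C⁻¹ * ⁅v, C⁆⁻¹ * C : F) : F ⧸ L (k + 1 + 1))
      = ((C : F ⧸ L (k + 1 + 1))⁻¹ * (QuotientGroup.mk ⁅v, C⁆)⁻¹
          * ((C : F ⧸ L (k + 1 + 1))⁻¹)⁻¹) by rw [inv_inv]; rfl,
    central_conj (inv_mem (comm_central hv C))]

theorem kill {k : ℕ} {m : F} (hm : m ∈ L (k + 1)) (C : F) :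
    (QuotientGroup.mk ⁅m, C⁆ : F ⧸ L (k + 1 + 1)) = 1 :=
  (QuotientGroup.eq_one_iff _).mpr (comm_mem hm C)

/-- `⁅v*m, C⁆ ≡ ⁅v, C⁆` when `m ∈ L (k+1)` -/
theorem V2' {k : ℕ} {v m : F} (hv : v ∈ L k) (hm : m ∈ L (k + 1)) (C : F) :
    (QuotientGroup.mk ⁅v * m, C⁆ : F ⧸ L (k + 1 + 1)) = QuotientGroup.mk ⁅v, C⁆ := by
  rw [V2 hv (Subgroup.lowerCentralSeries_antitone _ (Nat.le_succ k) hm) C, kill hm, mul_one]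

theorem eta_comm_eq (v C : F) : eta ⁅v, C⁆ = ⁅v, C⁆ * ⁅(eta v)⁻¹ * v, phiFree C⁆⁻¹ := by
  simp only [eta, commutatorElement_def, map_mul, map_inv]
  group

theorem key : ∀ k : ℕ, ∀ h ∈ L k, ∃ w ∈ L k,
    (QuotientGroup.mk (eta w) : F ⧸ L (k + 1)) = QuotientGroup.mk h := by
  intro k
  induction k with
  | zero =>
    have hcen : ∀ x : F ⧸ L (0 + 1), x ∈ Subgroup.center (F ⧸ L (0 + 1)) := by
      intro x
      induction x using QuotientGroup.induction_on with
      | _ a => exact mk_center (k := 0) (Subgroup.mem_top a)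
    intro h hmem
    clear hmem
    induction h using FreeGroup.induction_on with
    | C1 => exact ⟨1, Subgroup.mem_top 1, by rw [eta_one]⟩
    | of n =>
        refine ⟨(FreeGroup.of (n + 1))⁻¹, Subgroup.mem_top _, ?_⟩
        show (QuotientGroup.mk (eta (FreeGroup.of (n + 1))⁻¹) : F ⧸ L (0 + 1))
          = QuotientGroup.mk (FreeGroup.of n)
        apply (QuotientGroup.eq (s := L (0 + 1))).mpr
        have he : (eta (FreeGroup.of (n + 1))⁻¹)⁻¹ * FreeGroup.of n
            = ⁅(FreeGroup.of (n + 1))⁻¹, (FreeGroup.of n)⁻¹⁆ := by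
          simp only [eta, map_inv, phi_of_succ, commutatorElement_def]
          group
        rw [he]
        exact comm_mem (k := 0) (Subgroup.mem_top _) _
    | inv_of n ih =>
        obtain ⟨w, -, hw⟩ := ih
        exact ⟨w⁻¹, Subgroup.mem_top _, by
          rw [eta_inv w (hcen _), hw, ← QuotientGroup.mk_inv]⟩
    | mul x y ihx ihy =>
        obtain ⟨w₁, -, hw₁⟩ := ihx
        obtain ⟨w₂, -, hw₂⟩ := ihy
        exact ⟨w₁ * w₂, Subgroup.mem_top _, by
          rw [eta_mul w₁ w₂ (hcen _), hw₁, hw₂, ← QuotientGroup.mk_mul]⟩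
  | succ k ih =>
    -- core computation: commutators with generators
    have R : ∀ n : ℕ, ∀ v ∈ L k, ∃ w ∈ L (k + 1),
        (QuotientGroup.mk (eta w) : F ⧸ L (k + 1 + 1))
          = QuotientGroup.mk ⁅v, FreeGroup.of n⁆ := by
      intro n
      induction n with
      | zero =>
        intro v hv
        obtain ⟨v', hv', hq⟩ := ih v hv
        have hu' : eta v' ∈ L k := eta_mem hv'
        have hm : (eta v')⁻¹ * v ∈ L (k + 1) := (QuotientGroup.eq (s := L (k + 1))).mp hq
        refine ⟨⁅v', FreeGroup.of 0⁆, comm_mem hv' _, ?_⟩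
        have e1 : (QuotientGroup.mk (eta ⁅v', FreeGroup.of 0⁆) : F ⧸ L (k + 1 + 1))
            = QuotientGroup.mk ⁅eta v', FreeGroup.of 0⁆ := by
          rw [eta_comm_eq, phi_of_zero, QuotientGroup.mk_mul, QuotientGroup.mk_inv,
            V2 (inv_mem hu') hv', V3 hu']
          group
        rw [e1, show v = eta v' * ((eta v')⁻¹ * v) by group, V2' hu' hm]
      | succ n ihn =>
        intro v hv
        obtain ⟨v', hv', hq⟩ := ih v hv
        have hu' : eta v' ∈ L k := eta_mem hv'
        have hm : (eta v')⁻¹ * v ∈ L (k + 1) := (QuotientGroup.eq (s := L (k + 1))).mp hq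
        obtain ⟨w₁, hw₁mem, hw₁⟩ := ihn v' hv'
        obtain ⟨w₂, hw₂mem, hw₂⟩ := ihn (eta v') hu'
        have hc₁ : (QuotientGroup.mk (eta w₁) : F ⧸ L (k + 1 + 1)) ∈ Subgroup.center _ := by
          rw [hw₁]; exact comm_central hv' _
        have hc₂ : (QuotientGroup.mk (eta w₂) : F ⧸ L (k + 1 + 1)) ∈ Subgroup.center _ := by
          rw [hw₂]; exact comm_central hu' _
        refine ⟨⁅v', FreeGroup.of (n + 1)⁆ * (w₂⁻¹ * w₁),
          mul_mem (comm_mem hv' _) (mul_mem (inv_mem hw₂mem) hw₁mem), ?_⟩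
        have e0 : (QuotientGroup.mk (eta ⁅v', FreeGroup.of (n + 1)⁆) : F ⧸ L (k + 1 + 1))
            = QuotientGroup.mk ⁅eta v', FreeGroup.of (n + 1)⁆
              * (QuotientGroup.mk ⁅v', FreeGroup.of n⁆)⁻¹
              * QuotientGroup.mk ⁅eta v', FreeGroup.of n⁆ := by
          rw [eta_comm_eq, phi_of_succ, QuotientGroup.mk_mul, QuotientGroup.mk_inv,
            V4 (mul_mem (inv_mem hu') hv'), V2 (inv_mem hu') hv', V2 (inv_mem hu') hv',
            V3 hu', V3 hu']
          group
        have e2 : (QuotientGroup.mk (eta (w₂⁻¹ * w₁)) : F ⧸ L (k + 1 + 1))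
            = (QuotientGroup.mk (eta w₂))⁻¹ * QuotientGroup.mk (eta w₁) := by
          rw [eta_mul _ _ hc₁, eta_inv _ hc₂]
        have hc₃ : (QuotientGroup.mk (eta (w₂⁻¹ * w₁)) : F ⧸ L (k + 1 + 1))
            ∈ Subgroup.center _ := by
          rw [e2]; exact mul_mem (inv_mem hc₂) hc₁
        rw [eta_mul _ _ hc₃, e2, e0, hw₁, hw₂,
          show v = eta v' * ((eta v')⁻¹ * v) by group, V2' hu' hm]
        group
    -- now the closure induction over L (k+1)
    intro h hh
    refine Subgroup.closure_induction
      (p := fun g _ => ∃ w ∈ L (k + 1),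
        (QuotientGroup.mk (eta w) : F ⧸ L (k + 1 + 1)) = QuotientGroup.mk g)
      ?_ ?_ ?_ ?_ ((Subgroup.mem_lowerCentralSeries_succ_iff _ k h).mp hh)
    · rintro x ⟨p, hp, q, -, rfl⟩
      show ∃ w ∈ L (k + 1), (QuotientGroup.mk (eta w) : F ⧸ L (k + 1 + 1))
        = QuotientGroup.mk ⁅p, q⁆
      induction q using FreeGroup.induction_on with
      | C1 => exact ⟨1, one_mem _, by rw [eta_one, commutatorElement_one_right]⟩
      | of n => exact R n p hp
      | inv_of n ihq =>
          obtain ⟨w, hwmem, hw⟩ := ihq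
          refine ⟨w⁻¹, inv_mem hwmem, ?_⟩
          have hc : (QuotientGroup.mk (eta w) : F ⧸ L (k + 1 + 1)) ∈ Subgroup.center _ := by
            rw [hw]; exact comm_central hp _
          rw [eta_inv _ hc, hw, ← V5 hp]
      | mul x y ihx ihy =>
          obtain ⟨w₁, hw₁mem, hw₁⟩ := ihx
          obtain ⟨w₂, hw₂mem, hw₂⟩ := ihy
          have hc : (QuotientGroup.mk (eta w₂) : F ⧸ L (k + 1 + 1)) ∈ Subgroup.center _ := by
            rw [hw₂]; exact comm_central hp _
          exact ⟨w₁ * w₂, mul_mem hw₁mem hw₂mem, by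
            rw [eta_mul _ _ hc, hw₁, hw₂, ← V4 hp]⟩
    · exact ⟨1, one_mem _, by rw [eta_one]⟩
    · intro x y hx hy ⟨w₁, hw₁mem, hw₁⟩ ⟨w₂, hw₂mem, hw₂⟩
      have hyL : y ∈ L (k + 1) := (Subgroup.mem_lowerCentralSeries_succ_iff _ k y).mpr hy
      have hc : (QuotientGroup.mk (eta w₂) : F ⧸ L (k + 1 + 1)) ∈ Subgroup.center _ := by
        rw [hw₂]; exact mk_center hyL
      exact ⟨w₁ * w₂, mul_mem hw₁mem hw₂mem, by
        rw [eta_mul _ _ hc, hw₁, hw₂, ← QuotientGroup.mk_mul]⟩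
    · intro x hx ⟨w, hwmem, hw⟩
      have hxL : x ∈ L (k + 1) := (Subgroup.mem_lowerCentralSeries_succ_iff _ k x).mpr hx
      have hc : (QuotientGroup.mk (eta w) : F ⧸ L (k + 1 + 1)) ∈ Subgroup.center _ := by
        rw [hw]; exact mk_center hxL
      exact ⟨w⁻¹, inv_mem hwmem, by rw [eta_inv _ hc, hw, ← QuotientGroup.mk_inv]⟩

noncomputable def psiAux : ℕ → F
  | 0 => FreeGroup.of 0
  | n + 1 => (psiAux n)⁻¹ * FreeGroup.of (n + 1)

noncomputable def psiFree : F →* F := FreeGroup.lift psiAux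

theorem phi_psiAux (n : ℕ) : phiFree (psiAux n) = FreeGroup.of n := by
  induction n with
  | zero => simp [psiAux, phi_of_zero]
  | succ m ih => simp [psiAux, map_mul, map_inv, ih, phi_of_succ]

theorem phi_comp_psi : phiFree.comp psiFree = MonoidHom.id F := by
  apply FreeGroup.ext_hom
  intro n
  simp [psiFree, FreeGroup.lift_apply_of, phi_psiAux]

theorem psi_comp_phi : psiFree.comp phiFree = MonoidHom.id F := by
  apply FreeGroup.ext_hom
  intro n
  cases n with
  | zero => simp [phi_of_zero, psiFree, FreeGroup.lift_apply_of, psiAux]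
  | succ m =>
      simp only [MonoidHom.comp_apply, phi_of_succ, map_mul, psiFree, FreeGroup.lift_apply_of,
        MonoidHom.id_apply]
      simp [psiAux]

theorem phiFree_bijective : Function.Bijective phiFree :=
  Function.bijective_iff_has_inverse.mpr
    ⟨psiFree, fun x => DFunLike.congr_fun psi_comp_phi x,
      fun x => DFunLike.congr_fun phi_comp_psi x⟩

noncomputable def psiNil (c : ℕ) : F ⧸ L c →* F ⧸ L c :=
  QuotientGroup.map _ _ psiFree (Subgroup.map_le_iff_le_comap.mp (Subgroup.lowerCentralSeries.map psiFree c))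

theorem phiNil_mk (c : ℕ) (a : F) :
    phiFreeNilpotent c (QuotientGroup.mk a) = QuotientGroup.mk (phiFree a) :=
  QuotientGroup.map_mk _ _ _ _ a

theorem psiNil_mk (c : ℕ) (a : F) :
    psiNil c (QuotientGroup.mk a) = QuotientGroup.mk (psiFree a) :=
  QuotientGroup.map_mk _ _ _ _ a

theorem phiNil_bijective (c : ℕ) : Function.Bijective (phiFreeNilpotent c) := by
  apply Function.bijective_iff_has_inverse.mpr
  refine ⟨psiNil c, fun x => ?_, fun x => ?_⟩
  · induction x using QuotientGroup.induction_on with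
    | _ a =>
        have h : psiFree (phiFree a) = a := DFunLike.congr_fun psi_comp_phi a
        rw [phiNil_mk, psiNil_mk, h]
  · induction x using QuotientGroup.induction_on with
    | _ a =>
        have h : phiFree (psiFree a) = a := DFunLike.congr_fun phi_comp_psi a
        rw [psiNil_mk, phiNil_mk, h]

theorem main (c : ℕ) (g : F) : ∃ z : F,
    (QuotientGroup.mk (eta z) : F ⧸ L c) = QuotientGroup.mk g := by
  induction c with
  | zero =>
    refine ⟨1, (QuotientGroup.eq (s := L 0)).mpr ?_⟩
    exact Subgroup.mem_top _
  | succ c ihc =>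
    obtain ⟨z, hz⟩ := ihc
    have hh : (eta z)⁻¹ * g ∈ L c := (QuotientGroup.eq (s := L c)).mp hz
    obtain ⟨w, hwmem, hq⟩ := key c _ hh
    have hc : (QuotientGroup.mk (eta w) : F ⧸ L (c + 1)) ∈ Subgroup.center _ := by
      rw [hq]; exact mk_center hh
    refine ⟨z * w, ?_⟩
    rw [eta_mul _ _ hc, hq, ← QuotientGroup.mk_mul,
      show (eta z * ((eta z)⁻¹ * g) : F) = g by group]

theorem solved (c : ℕ) : ∀ g : F ⧸ L c, ∃ z, g = z * (phiFreeNilpotent c z)⁻¹ := by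
  intro g
  obtain ⟨g₀, rfl⟩ := QuotientGroup.mk_surjective g
  obtain ⟨z₀, hz⟩ := main c g₀
  refine ⟨QuotientGroup.mk z₀, ?_⟩
  rw [phiNil_mk, ← QuotientGroup.mk_inv, ← QuotientGroup.mk_mul]
  exact hz.symm

end RInf

/-- With `φ : F_∞ →* F_∞` determined by `φ(x_0) = x_0`, `φ(x_{i+1}) = x_i * x_{i+1}` and
`c ≥ 1`: `φ` is bijective, the induced endomorphism `φ_c` of
`N_{∞,c} = F_∞ / γ_{c+1}(F_∞)` is bijective, `φ_c` has exactly one Reidemeister class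
(every `g` equals `z * (φ_c z)⁻¹` for some `z`), and consequently `N_{∞,c}` does not have
property `R_∞`. -/
theorem freeNilpotentInftyRank_not_propertyRInfinity (c : ℕ) (hc : 1 ≤ c) :
    Function.Bijective phiFree ∧
    Function.Bijective (phiFreeNilpotent c) ∧
    (∀ g : FreeGroup ℕ ⧸ Subgroup.lowerCentralSeries (⊤ : Subgroup (FreeGroup ℕ)) c,
      ∃ z, g = z * (phiFreeNilpotent c z)⁻¹) ∧
    ¬ PropertyRInfinity (FreeGroup ℕ ⧸ Subgroup.lowerCentralSeries (⊤ : Subgroup (FreeGroup ℕ)) c) := by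
  refine ⟨RInf.phiFree_bijective, RInf.phiNil_bijective c, RInf.solved c, ?_⟩
  intro hP
  set e := MulEquiv.ofBijective (phiFreeNilpotent c) (RInf.phiNil_bijective c) with he
  have hsub : ∀ x : Quot (ReidemeisterRel e.toMonoidHom), x = Quot.mk _ 1 := by
    intro x
    induction x using Quot.ind with
    | _ g =>
        obtain ⟨z, hz⟩ := RInf.solved c g
        exact Quot.sound ⟨z, by rw [mul_one]; exact hz⟩
  haveI : Subsingleton (ReidemeisterClasses e.toMonoidHom) :=
    ⟨fun a b => (hsub a).trans (hsub b).symm⟩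
  haveI := hP e
  exact not_finite (ReidemeisterClasses e.toMonoidHom)
end

section
/- Let F = FreeGroup ℕ with generators x_0, x_1, x_2, ..., let φ : F →* F be the homomorphism determined by φ(x_0) = x_0 and φ(x_{i+1}) = x_i * x_{i+1}, and let c ≥ 1. Then the endomorphism φ'_c induced by φ on the free metabelian c-step nilpotent group M_{∞,c} = F ⧸ (γ_{c+1}(F) ⊔ F^{(2)}) of countable rank is bijective and has exactly one Reidemeister class: every g ∈ M_{∞,c} can be written g = z * φ'_c(z)⁻¹ for some z. In particular M_{∞,c} does not have property R_∞. -/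
/-- The subgroup `γ_{c+1}(F_∞) ⊔ F_∞^{(2)}` is normal. -/
instance (c : ℕ) :
    ((⊤ : Subgroup (FreeGroup ℕ)).lowerCentralSeries c ⊔ derivedSeries (FreeGroup ℕ) 2).Normal :=
  haveI : (derivedSeries (FreeGroup ℕ) 2).Normal := derivedSeries_normal _ _
  Subgroup.sup_normal _ _

/-- `φ` maps the fully invariant subgroup `γ_{c+1}(F_∞) ⊔ F_∞^{(2)}` into itself. -/
theorem phiFree_join_le (c : ℕ) :
    (⊤ : Subgroup (FreeGroup ℕ)).lowerCentralSeries c ⊔ derivedSeries (FreeGroup ℕ) 2 ≤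
      ((⊤ : Subgroup (FreeGroup ℕ)).lowerCentralSeries c ⊔ derivedSeries (FreeGroup ℕ) 2).comap phiFree := by
  rw [← Subgroup.map_le_iff_le_comap, Subgroup.map_sup]
  exact sup_le ((Subgroup.lowerCentralSeries.map phiFree c).trans le_sup_left)
    ((map_derivedSeries_le_derivedSeries phiFree 2).trans le_sup_right)

/-- The endomorphism `φ'_c` induced by `φ` on the free metabelian `c`-step nilpotent group
`M_{∞,c} = F_∞ / (γ_{c+1}(F_∞) ⊔ F_∞^{(2)})` of countable rank. -/
noncomputable def phiFreeMetabelianNilpotent (c : ℕ) :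
    FreeGroup ℕ ⧸ ((⊤ : Subgroup (FreeGroup ℕ)).lowerCentralSeries c ⊔ derivedSeries (FreeGroup ℕ) 2) →*
      FreeGroup ℕ ⧸ ((⊤ : Subgroup (FreeGroup ℕ)).lowerCentralSeries c ⊔ derivedSeries (FreeGroup ℕ) 2) :=
  QuotientGroup.map _ _ phiFree (phiFree_join_le c)

namespace RinfAux

open scoped commutatorElement

attribute [-simp] Subgroup.lowerCentralSeries_succ


local notation "F" => FreeGroup ℕ

abbrev a (n : ℕ) : F := FreeGroup.of n

lemma phi_a_zero : phiFree (a 0) = a 0 := by simp [phiFree]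

lemma phi_a_succ (n : ℕ) : phiFree (a (n + 1)) = a n * a (n + 1) := by simp [phiFree]

noncomputable def psiGen : ℕ → F
  | 0 => FreeGroup.of 0
  | n + 1 => (psiGen n)⁻¹ * FreeGroup.of (n + 1)

noncomputable def psiFree : F →* F := FreeGroup.lift psiGen

lemma psiFree_a (n : ℕ) : psiFree (a n) = psiGen n := by simp [psiFree]

lemma phi_psiGen (n : ℕ) : phiFree (psiGen n) = a n := by
  induction n with
  | zero => simpa [psiGen] using phi_a_zero
  | succ k ih => simp [psiGen, phi_a_succ, ih]

lemma phi_comp_psi : phiFree.comp psiFree = MonoidHom.id F := by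
  apply FreeGroup.ext_hom
  intro n
  simp [psiFree_a, phi_psiGen]

lemma psi_comp_phi : psiFree.comp phiFree = MonoidHom.id F := by
  apply FreeGroup.ext_hom
  intro n
  cases n with
  | zero => simp [phi_a_zero, psiFree_a, psiGen]
  | succ k => simp [phi_a_succ, psiFree_a, psiGen]




abbrev L (k : ℕ) : Subgroup F := (⊤ : Subgroup F).lowerCentralSeries k


lemma Lsucc (k : ℕ) : L (k + 1) = ⁅L k, (⊤ : Subgroup F)⁆ := rfl

lemma mem_comm_L {k : ℕ} {x : F} (hx : x ∈ L k) (y : F) : ⁅x, y⁆ ∈ L (k + 1) := by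
  rw [Lsucc]; exact Subgroup.commutator_mem_commutator hx (Subgroup.mem_top y)

lemma L_le {j k : ℕ} (h : k ≤ j) : L j ≤ L k := Subgroup.lowerCentralSeries_antitone (S := ⊤) h

lemma phi_mem_L {k : ℕ} {x : F} (hx : x ∈ L k) : phiFree x ∈ L k :=
  Subgroup.lowerCentralSeries.map phiFree k ⟨x, hx, rfl⟩

/-- left-normed iterated commutator -/
def CE (g : F) (t : List F) : F := t.foldl (fun x y => ⁅x, y⁆) g

@[simp] lemma CE_nil (g : F) : CE g [] = g := rfl
@[simp] lemma CE_cons (g h : F) (t : List F) : CE g (h :: t) = CE ⁅g, h⁆ t := rfl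

lemma CE_concat (g : F) (t : List F) (x : F) : CE g (t ++ [x]) = ⁅CE g t, x⁆ := by
  simp [CE, List.foldl_append]

lemma CE_mem {j : ℕ} {g : F} (hg : g ∈ L j) (t : List F) : CE g t ∈ L (j + t.length) := by
  induction t generalizing j g with
  | nil => simpa using hg
  | cons h r ih =>
      have : CE ⁅g, h⁆ r ∈ L (j + 1 + r.length) := ih (mem_comm_L hg h)
      rw [CE_cons]
      convert this using 2
      simp; omega

lemma map_CE (f : F →* F) (g : F) (t : List F) : f (CE g t) = CE (f g) (t.map f) := by
  induction t generalizing g with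
  | nil => rfl
  | cons h r ih => simp [CE_cons, ih, map_commutatorElement]

section K
variable (k : ℕ)

def mkQ : F →* F ⧸ L (k + 1) := QuotientGroup.mk' _

lemma mkQ_eq_one {x : F} (hx : x ∈ L (k + 1)) : mkQ k x = 1 := by
  rw [mkQ, ← (QuotientGroup.mk' (L (k+1))).mem_ker, QuotientGroup.ker_mk']
  exact hx

lemma mkQ_eq_iff {x y : F} : mkQ k x = mkQ k y ↔ x⁻¹ * y ∈ L (k + 1) :=
  QuotientGroup.eq

lemma central_mk {x : F} (hx : x ∈ L k) (q : F ⧸ L (k + 1)) : Commute (mkQ k x) q := by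
  induction q using QuotientGroup.induction_on with
  | H g =>
    have h1 : mkQ k ⁅x, g⁆ = 1 := mkQ_eq_one k (mem_comm_L hx g)
    rw [map_commutatorElement] at h1
    have := commutatorElement_eq_one_iff_commute.mp h1
    exact this

/-- the subgroup of elements `u` that are `τ(v) = v φ(v)⁻¹` for some `v ∈ L k`,
modulo `L (k+1)` -/
def Sgrp : Subgroup F where
  carrier := {u | ∃ v ∈ L k, mkQ k (v * (phiFree v)⁻¹) = mkQ k u}
  one_mem' := ⟨1, one_mem _, by simp⟩
  mul_mem' := by
    rintro u u' ⟨v, hv, e⟩ ⟨v', hv', e'⟩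
    refine ⟨v * v', mul_mem hv hv', ?_⟩
    have hC := central_mk k (phi_mem_L hv)
    simp only [map_mul, map_inv, mul_inv_rev] at e e' ⊢
    set A := mkQ k v with hA'
    set B := mkQ k v' with hB'
    set C := mkQ k (phiFree v) with hC'
    set D := mkQ k (phiFree v') with hD'
    calc A * B * ((D)⁻¹ * (C)⁻¹) = A * (B * D⁻¹ * C⁻¹) := by group
      _ = A * (C⁻¹ * (B * D⁻¹)) := by rw [← ((hC (B * D⁻¹)).inv_left).eq]
      _ = A * C⁻¹ * (B * D⁻¹) := by group
      _ = _ := by rw [e, e']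
  inv_mem' := by
    rintro u ⟨v, hv, e⟩
    refine ⟨v⁻¹, inv_mem hv, ?_⟩
    have hA := central_mk k hv
    simp only [map_mul, map_inv, inv_inv] at e ⊢
    rw [← e, mul_inv_rev, inv_inv]
    exact ((hA (mkQ k (phiFree v))).inv_left).eq
end K

lemma L_succ_le_Sgrp (k : ℕ) : L (k + 1) ≤ Sgrp k := by
  intro u hu
  exact ⟨1, one_mem _, by simp [mkQ_eq_one k hu]⟩

/-- basic commutators of weight j+1 -/
def Bset (j : ℕ) : Set F := {p | ∃ (n : ℕ) (l : List ℕ), l.length = j ∧ p = CE (a n) (l.map a)}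

lemma mem_L0 (g : F) : g ∈ L 0 := Subgroup.mem_top g

lemma Bset_sub_L (j : ℕ) : Bset j ⊆ L j := by
  rintro p ⟨n, l, hl, rfl⟩
  have := CE_mem (mem_L0 (a n)) (l.map a)
  simpa [hl] using this

/-- reduction over the second commutator argument -/
lemma comm_all_of_comm_gen {j : ℕ} (W : Subgroup F) (hW : L (j + 2) ≤ W) {p : F}
    (hp : p ∈ L j) (hgen : ∀ m, ⁅p, a m⁆ ∈ W) : ∀ y, ⁅p, y⁆ ∈ W := by
  have hy : ∀ y : F, y ∈ Subgroup.closure (Set.range (FreeGroup.of : ℕ → F)) := by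
    rw [FreeGroup.closure_range_of]; exact fun y => Subgroup.mem_top y
  intro y
  induction hy y using Subgroup.closure_induction with
  | mem x hx => obtain ⟨m, rfl⟩ := hx; exact hgen m
  | one => simpa using one_mem W
  | mul y z _ _ hyW hzW =>
      have hid : ⁅p, y * z⁆ = ⁅p, y⁆ * (⁅p, z⁆ * ⁅⁅p, z⁆⁻¹, y⁆) := by group
      have h1 : ⁅⁅p, z⁆⁻¹, y⁆ ∈ L (j + 2) := mem_comm_L (inv_mem (mem_comm_L hp z)) y
      rw [hid]
      exact mul_mem hyW (mul_mem hzW (hW h1))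
  | inv y _ hyW =>
      have hid : ⁅p, y⁻¹⁆ = ⁅p, y⁆⁻¹ * ⁅⁅p, y⁆, y⁻¹⁆ := by group
      have h1 : ⁅⁅p, y⁆, y⁻¹⁆ ∈ L (j + 2) := mem_comm_L (mem_comm_L hp y) y⁻¹
      rw [hid]
      exact mul_mem (inv_mem hyW) (hW h1)

/-- reduction over the first commutator argument, assuming generation of `L j` by
basic commutators mod `L (j+1)` -/
lemma comm_all_of_basic {j : ℕ} (W : Subgroup F)
    (hGen : L j ≤ Subgroup.closure (Bset j) ⊔ L (j + 1))
    (hW : L (j + 2) ≤ W)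
    (hbasic : ∀ p ∈ Bset j, ∀ y, ⁅p, y⁆ ∈ W) :
    ∀ p ∈ L j, ∀ y, ⁅p, y⁆ ∈ W := by
  set P : Subgroup F :=
    { carrier := {p | p ∈ L j ∧ ∀ y, ⁅p, y⁆ ∈ W}
      one_mem' := ⟨one_mem _, fun y => by simpa using one_mem W⟩
      mul_mem' := by
        rintro p q ⟨hpL, hpW⟩ ⟨hqL, hqW⟩
        refine ⟨mul_mem hpL hqL, fun y => ?_⟩
        have hid : ⁅p * q, y⁆ = ⁅q, y⁆ * ⁅⁅q, y⁆⁻¹, p⁆ * ⁅p, y⁆ := by group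
        have h1 : ⁅⁅q, y⁆⁻¹, p⁆ ∈ L (j + 2) := mem_comm_L (inv_mem (mem_comm_L hqL y)) _
        rw [hid]
        exact mul_mem (mul_mem (hqW y) (hW h1)) (hpW y)
      inv_mem' := by
        rintro p ⟨hpL, hpW⟩
        refine ⟨inv_mem hpL, fun y => ?_⟩
        have hid : ⁅p⁻¹, y⁆ = ⁅p, y⁆⁻¹ * ⁅⁅p, y⁆, p⁻¹⁆ := by group
        have h1 : ⁅⁅p, y⁆, p⁻¹⁆ ∈ L (j + 2) := mem_comm_L (mem_comm_L hpL y) _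
        rw [hid]
        exact mul_mem (inv_mem (hpW y)) (hW h1) }
  intro p hp y
  have hPle : Subgroup.closure (Bset j) ⊔ L (j + 1) ≤ P := by
    apply sup_le
    · rw [Subgroup.closure_le]
      intro q hq
      exact ⟨Bset_sub_L j hq, hbasic q hq⟩
    · intro q hq
      refine ⟨L_le (Nat.le_succ j) hq, fun y => ?_⟩
      have : ⁅q, y⁆ ∈ L (j + 2) := mem_comm_L hq y
      exact hW this
  exact (hPle (hGen hp)).2 y

lemma GEN : ∀ j : ℕ, L j ≤ Subgroup.closure (Bset j) ⊔ L (j + 1) := by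
  intro j
  induction j with
  | zero =>
      intro g _
      have hy : g ∈ Subgroup.closure (Set.range (FreeGroup.of : ℕ → F)) := by
        rw [FreeGroup.closure_range_of]; exact Subgroup.mem_top g
      refine le_sup_left (α := Subgroup F) ?_
      refine Subgroup.closure_mono ?_ hy
      rintro x ⟨n, rfl⟩
      exact ⟨n, [], rfl, rfl⟩
  | succ j ih =>
      rw [Lsucc]
      rw [Subgroup.commutator_le]
      intro p hp y _
      apply comm_all_of_basic (Subgroup.closure (Bset (j + 1)) ⊔ L (j + 2)) ih
        (le_sup_right.trans (le_refl _)) ?_ p hp y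
      rintro q ⟨n, l, hl, rfl⟩ y
      apply comm_all_of_comm_gen _ (le_sup_right (α := Subgroup F) : L (j+2) ≤ _)
        (Bset_sub_L j ⟨n, l, hl, rfl⟩)
      intro m
      refine le_sup_left (α := Subgroup F) (Subgroup.subset_closure ?_)
      exact ⟨n, l ++ [m], by simp [hl], by simp [List.map_append, CE_concat]⟩

section Model

variable (K : ℕ)

abbrev A := FreeAbelianGroup (List ℕ)

def options : ℕ → List ℕ
  | 0 => [0]
  | m + 1 => [m, m + 1]

def choices : List ℕ → List (List ℕ)
  | [] => [[]]
  | m :: t => (options m).flatMap fun o => (choices t).map (o :: ·)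

lemma mem_choices_length {l l' : List ℕ} (h : l' ∈ choices l) : l'.length = l.length := by
  induction l generalizing l' with
  | nil => simp [choices] at h; simp [h]
  | cons m t ih =>
      simp only [choices, List.mem_flatMap, List.mem_map] at h
      obtain ⟨o, _, t', ht', rfl⟩ := h
      simp [ih ht']

lemma choices_cons_zero (t : List ℕ) : choices (0 :: t) = (choices t).map (0 :: ·) := by
  simp [choices, options]

lemma choices_cons_succ (m : ℕ) (t : List ℕ) :
    choices ((m + 1) :: t) = (choices t).map (m :: ·) ++ (choices t).map ((m + 1) :: ·) := by
  simp [choices, options]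

lemma choices_replicate (i : ℕ) (t : List ℕ) :
    choices (List.replicate i 0 ++ t) = (choices t).map (List.replicate i 0 ++ ·) := by
  induction i with
  | zero => simp
  | succ i ih =>
      rw [List.replicate_succ, List.cons_append, choices_cons_zero, ih, List.map_map]
      rfl

noncomputable def PhiA : A →+ A :=
  FreeAbelianGroup.lift fun l => ((choices l).map FreeAbelianGroup.of).sum

noncomputable def DA : A →+ A := PhiA - AddMonoidHom.id A

lemma PhiA_of (l : List ℕ) :
    PhiA (FreeAbelianGroup.of l) = ((choices l).map FreeAbelianGroup.of).sum := by
  simp [PhiA]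

lemma DA_apply (z : A) : DA z = PhiA z - z := rfl

def SpecSet (r : ℕ) : Set (List ℕ) :=
  {l | l.length = K + 1 ∧ List.replicate (K + 1 - r) 0 <+: l}

noncomputable def Aspec (r : ℕ) : AddSubgroup A :=
  AddSubgroup.closure (FreeAbelianGroup.of '' SpecSet K r)

noncomputable def AIm (r : ℕ) : AddSubgroup A := (Aspec K r).map DA

lemma SpecSet_mono {r s : ℕ} (h : r ≤ s) : SpecSet K r ⊆ SpecSet K s := by
  rintro l ⟨hlen, hpre⟩
  refine ⟨hlen, List.IsPrefix.trans ?_ hpre⟩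
  exact ⟨List.replicate (K + 1 - r - (K + 1 - s)) 0, by
    rw [← List.replicate_add]; congr 1; omega⟩

lemma Aspec_mono {r s : ℕ} (h : r ≤ s) : Aspec K r ≤ Aspec K s :=
  AddSubgroup.closure_mono (Set.image_mono (SpecSet_mono K h))

lemma AIm_mono {r s : ℕ} (h : r ≤ s) : AIm K r ≤ AIm K s :=
  AddSubgroup.map_mono (Aspec_mono K h)

lemma of_mem_Aspec {r : ℕ} {l : List ℕ} (hl : l ∈ SpecSet K r) :
    FreeAbelianGroup.of l ∈ Aspec K r :=
  AddSubgroup.subset_closure ⟨l, hl, rfl⟩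

lemma PhiA_of_rep (j : ℕ) (x : List ℕ) :
    PhiA (FreeAbelianGroup.of (List.replicate j 0 ++ x))
      = ((choices x).map
          (fun t'' => FreeAbelianGroup.of (List.replicate j 0 ++ t''))).sum := by
  rw [PhiA_of, choices_replicate, List.map_map]
  rfl

/-- generic: an additive hom sends `Aspec r` into `S` if it sends its generators there -/
lemma hom_Aspec_le {r : ℕ} (f : A →+ A) (S : AddSubgroup A)
    (h : ∀ l ∈ SpecSet K r, f (FreeAbelianGroup.of l) ∈ S) :
    ∀ z ∈ Aspec K r, f z ∈ S := by
  intro z hz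
  induction hz using AddSubgroup.closure_induction with
  | mem x hx => obtain ⟨l, hl, rfl⟩ := hx; exact h l hl
  | zero => simpa using S.zero_mem
  | add x y _ _ hx hy => rw [map_add]; exact S.add_mem hx hy
  | neg x _ hx => rw [map_neg]; exact S.neg_mem hx


theorem MODEL : ∀ (r : ℕ) (l : List ℕ), l ∈ SpecSet K (r + 1) →
    FreeAbelianGroup.of l ∈ AIm K (r + 1) := by
  intro r
  induction r with
  | zero =>
      rintro l ⟨hlen, s, hs⟩
      have hs' : s.length = 1 := by
        rw [← hs] at hlen; simp [List.length_append] at hlen; omega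
      obtain ⟨m, rfl⟩ : ∃ m, s = [m] := by
        cases s with
        | nil => simp at hs'
        | cons x xs => cases xs with
          | nil => exact ⟨x, rfl⟩
          | cons y ys => simp at hs'
      refine ⟨FreeAbelianGroup.of (List.replicate K 0 ++ [m + 1]), ?_, ?_⟩
      · refine of_mem_Aspec K ⟨by simp, List.prefix_append _ _⟩
      · have hc : choices [m + 1] = [[m], [m + 1]] := by
          simp [choices, options]
        rw [DA_apply, PhiA_of, choices_replicate, hc, ← hs]
        simp
  | succ r ih =>
      rintro l hl
      by_cases hKr : K + 1 ≤ r + 1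
      · have heq : SpecSet K (r + 2) = SpecSet K (r + 1) := by
          unfold SpecSet
          have h1 : K + 1 - (r + 2) = 0 := by omega
          have h2 : K + 1 - (r + 1) = 0 := by omega
          rw [h1, h2]
        exact AIm_mono K (by omega) (ih l (heq ▸ hl))
      push_neg at hKr
      set i := K - (r + 1) with hi
      have hi2 : K + 1 - (r + 2) = i := by omega
      have hi1 : K + 1 - (r + 1) = i + 1 := by omega
      obtain ⟨hlen, s, hs⟩ := hl
      rw [hi2] at hs
      have hslen : s.length = r + 2 := by
        rw [← hs] at hlen; simp [List.length_append] at hlen; omega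
      obtain ⟨b, t, rfl⟩ : ∃ b t, s = b :: t := by
        cases s with
        | nil => simp at hslen
        | cons x xs => exact ⟨x, xs, rfl⟩
      have htlen : t.length = r + 1 := by simpa using hslen
      clear hslen hlen
      suffices h : ∀ (b : ℕ) (t : List ℕ), t.length = r + 1 →
          FreeAbelianGroup.of (List.replicate i 0 ++ b :: t) ∈ AIm K (r + 2) by
        rw [← hs]; exact h b t htlen
      clear hs htlen t b
      have hrep1 : ∀ t' : List ℕ, List.replicate i (0:ℕ) ++ 0 :: t'
          = List.replicate (i + 1) 0 ++ t' := by
        intro t'; rw [List.replicate_succ']; simp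
      -- SpecSet (r+1) elements have the standard form
      have spec_form : ∀ l' ∈ SpecSet K (r + 1),
          ∃ t' : List ℕ, t'.length = r + 1 ∧ l' = List.replicate (i + 1) 0 ++ t' := by
        rintro l' ⟨hlen', s', hs'⟩
        rw [hi1] at hs'
        refine ⟨s', ?_, hs'.symm⟩
        rw [← hs'] at hlen'; simp [List.length_append] at hlen'; omega
      intro b
      induction b with
      | zero =>
          intro t ht
          rw [hrep1 t]
          refine AIm_mono K (by omega) (ih _ ⟨?_, ?_⟩)
          · simp [List.length_append, ht]; omega
          · rw [hi1]; exact List.prefix_append _ _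
      | succ b ihb =>
          intro t ht
          set Tb : ℕ → (A →+ A) := fun c => FreeAbelianGroup.lift
            (fun l' => FreeAbelianGroup.of (List.replicate i 0 ++ c :: l'.drop (i + 1))) with hTb
          have Tb_of : ∀ (c : ℕ) (t' : List ℕ),
              Tb c (FreeAbelianGroup.of (List.replicate (i + 1) 0 ++ t'))
                = FreeAbelianGroup.of (List.replicate i 0 ++ c :: t') := by
            intro c t'
            rw [hTb]
            simp only [FreeAbelianGroup.lift_apply_of]
            congr 2
            have h2 := List.drop_left (l₁ := List.replicate (i + 1) (0:ℕ)) (l₂ := t')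
            simpa using h2
          have expand : ∀ (c : ℕ) (s' : List ℕ),
              Tb c (PhiA (FreeAbelianGroup.of (List.replicate (i + 1) 0 ++ s')))
                = ((choices s').map
                    (fun t'' => FreeAbelianGroup.of (List.replicate i 0 ++ c :: t''))).sum := by
            intro c s'
            rw [PhiA_of, choices_replicate, map_list_sum, List.map_map, List.map_map]
            exact congrArg List.sum (List.map_congr_left (fun t'' _ => Tb_of c t''))
          have key_comm : ∀ z ∈ Aspec K (r + 1),
              PhiA (Tb (b + 1) z) = Tb (b + 1) (PhiA z) + Tb b (PhiA z) := by
            intro z hz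
            induction hz using AddSubgroup.closure_induction with
            | mem x hx =>
                obtain ⟨u, hu, rfl⟩ := hx
                obtain ⟨s', _, rfl⟩ := spec_form u hu
                rw [Tb_of, expand, expand]
                have lhs_eq : PhiA (FreeAbelianGroup.of (List.replicate i 0 ++ (b+1) :: s'))
                    = ((choices s').map
                        (fun t'' => FreeAbelianGroup.of (List.replicate i 0 ++ b :: t''))).sum
                      + ((choices s').map
                        (fun t'' => FreeAbelianGroup.of (List.replicate i 0 ++ (b+1) :: t''))).sum := by
                  rw [PhiA_of_rep, choices_cons_succ, List.map_append, List.sum_append,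
                    List.map_map, List.map_map]
                  rfl
                rw [lhs_eq, add_comm]
            | zero => simp
            | add x y _ _ hx hy => simp only [map_add]; rw [hx, hy]; abel
            | neg x _ hx => simp only [map_neg]; rw [hx]; abel
          -- obtain a witness from the outer induction hypothesis
          have houter : FreeAbelianGroup.of (List.replicate (i + 1) 0 ++ t) ∈ AIm K (r + 1) := by
            refine ih _ ⟨?_, ?_⟩
            · simp [List.length_append, ht]; omega
            · rw [hi1]; exact List.prefix_append _ _
          obtain ⟨z, hzspec, hDz⟩ := AddSubgroup.mem_map.mp houter
          have e1 : FreeAbelianGroup.of (List.replicate i 0 ++ (b + 1) :: t)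
              = Tb (b + 1) (FreeAbelianGroup.of (List.replicate (i + 1) 0 ++ t)) :=
            (Tb_of _ _).symm
          have e2 : Tb (b + 1) (DA z) = DA (Tb (b + 1) z) - Tb b (PhiA z) := by
            simp only [DA_apply, map_sub, key_comm z hzspec]; abel
          have e3 : Tb b (PhiA z) = Tb b (DA z) + Tb b z := by
            simp only [DA_apply, map_sub]; abel
          have m1 : DA (Tb (b + 1) z) ∈ AIm K (r + 2) := by
            refine ⟨Tb (b + 1) z, ?_, rfl⟩
            refine hom_Aspec_le K (Tb (b + 1)) (Aspec K (r + 2)) ?_ z hzspec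
            intro l' hl'
            obtain ⟨s', hs'len, rfl⟩ := spec_form l' hl'
            rw [Tb_of]
            refine of_mem_Aspec K ⟨?_, ?_⟩
            · simp [List.length_append, hs'len]; omega
            · rw [hi2]; exact List.prefix_append _ _
          have m2 : Tb b (DA z) ∈ AIm K (r + 2) := by
            rw [hDz, Tb_of]
            exact ihb t ht
          have m3 : Tb b z ∈ AIm K (r + 2) := by
            refine hom_Aspec_le K (Tb b) (AIm K (r + 2)) ?_ z hzspec
            intro l' hl'
            obtain ⟨s', hs'len, rfl⟩ := spec_form l' hl'
            rw [Tb_of]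
            exact ihb s' hs'len
          rw [e1, ← hDz, e2, e3]
          have : DA (Tb (b + 1) z) - (Tb b (DA z) + Tb b z) ∈ AIm K (r + 2) :=
            AddSubgroup.sub_mem _ m1 (AddSubgroup.add_mem _ m2 m3)
          convert this using 1

theorem MODEL_final (l : List ℕ) (hl : l.length = K + 1) :
    FreeAbelianGroup.of l ∈ AIm K (K + 1) := by
  refine MODEL K K l ⟨hl, ?_⟩
  simp

/-! ### transport to the free group -/

def ClF : List ℕ → F
  | [] => 1
  | n :: t => CE (a n) (t.map a)

lemma ClF_mem {l : List ℕ} (hl : l.length = K + 1) : ClF l ∈ L K := by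
  cases l with
  | nil => simp at hl
  | cons n t =>
      have := CE_mem (mem_L0 (a n)) (t.map a)
      have ht : t.length = K := by simpa using hl
      simpa [ClF, ht] using this

lemma conj_mem_L {m : ℕ} {x : F} (hx : x ∈ L m) (g : F) : g * x * g⁻¹ ∈ L m :=
  Subgroup.Normal.conj_mem (Subgroup.lowerCentralSeries_normal ⊤ m) x hx g

lemma MJUNK : ∀ (t : List F) (j : ℕ) (u v : F), u ∈ L j → v ∈ L (j + 1) →
    K ≤ j + t.length → mkQ K (CE (u * v) t) = mkQ K (CE u t) := by
  intro t
  induction t with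
  | nil =>
      intro j u v hu hv hK
      simp only [List.length_nil] at hK
      simp only [CE_nil, map_mul]
      rw [mkQ_eq_one K (L_le (by omega) hv), mul_one]
  | cons h r ih =>
      intro j u v hu hv hK
      rw [CE_cons, CE_cons]
      have hid : ⁅u * v, h⁆ = ⁅u, h⁆ * (⁅u, h⁆⁻¹ * (u * ⁅v, h⁆ * u⁻¹) * ⁅u, h⁆) := by
        group
      rw [hid]
      have h1 : ⁅u, h⁆ ∈ L (j + 1) := mem_comm_L hu h
      have h2 : ⁅u, h⁆⁻¹ * (u * ⁅v, h⁆ * u⁻¹) * ⁅u, h⁆ ∈ L (j + 2) := by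
        have := conj_mem_L (conj_mem_L (mem_comm_L hv h) u) ⁅u, h⁆⁻¹
        simpa using this
      have := ih (j + 1) _ _ h1 h2 (by simp at hK ⊢; omega)
      exact this

lemma MCONJ : ∀ (t : List F) (j : ℕ) (u g : F), u ∈ L j →
    K ≤ j + t.length → mkQ K (CE (g * u * g⁻¹) t) = mkQ K (CE u t) := by
  intro t j u g hu hK
  have hid : g * u * g⁻¹ = u * ⁅u⁻¹, g⁆ := by group
  rw [hid]
  exact MJUNK K t j u _ hu (mem_comm_L (inv_mem hu) g) hK

lemma MHEAD : ∀ (t : List F) (j : ℕ) (x y : F), x ∈ L j → y ∈ L j →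
    K ≤ j + t.length → mkQ K (CE (x * y) t) = mkQ K (CE x t) * mkQ K (CE y t) := by
  intro t
  induction t with
  | nil => intro j x y _ _ _; simp [map_mul]
  | cons h r ih =>
      intro j x y hx hy hK
      rw [CE_cons, CE_cons, CE_cons]
      have hid : ⁅x * y, h⁆ = (x * ⁅y, h⁆ * x⁻¹) * ⁅x, h⁆ := by group
      rw [hid]
      have h1 : x * ⁅y, h⁆ * x⁻¹ ∈ L (j + 1) := conj_mem_L (mem_comm_L hy h) x
      have h2 : ⁅x, h⁆ ∈ L (j + 1) := mem_comm_L hx h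
      have hKr : K ≤ (j + 1) + r.length := by simp at hK ⊢; omega
      rw [ih (j + 1) _ _ h1 h2 hKr, MCONJ K r (j + 1) _ x (mem_comm_L hy h) hKr]
      have c1 : CE ⁅y, h⁆ r ∈ L K :=
        L_le hKr (CE_mem (mem_comm_L hy h) r)
      exact (central_mk K c1 _).eq

lemma EXPt : ∀ (t : List ℕ) (j : ℕ) (g : F), g ∈ L j → K ≤ j + t.length →
    mkQ K (CE g (t.map (fun m => phiFree (a m))))
      = ((choices t).map (fun t' => mkQ K (CE g (t'.map a)))).prod := by
  intro t
  induction t with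
  | nil => intro j g _ _; simp [choices]
  | cons m r ih =>
      intro j g hg hK
      rw [List.map_cons, CE_cons]
      have hKr : K ≤ (j + 1) + r.length := by simp at hK ⊢; omega
      cases m with
      | zero =>
          rw [phi_a_zero, ih (j + 1) _ (mem_comm_L hg (a 0)) hKr, choices_cons_zero,
            List.map_map]
          rfl
      | succ m =>
          rw [phi_a_succ]
          have hid : ⁅g, a m * a (m + 1)⁆
              = ⁅g, a m⁆ * (a m * ⁅g, a (m + 1)⁆ * (a m)⁻¹) := by group
          rw [hid]
          have h1 : ⁅g, a m⁆ ∈ L (j + 1) := mem_comm_L hg _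
          have h2 : a m * ⁅g, a (m + 1)⁆ * (a m)⁻¹ ∈ L (j + 1) :=
            conj_mem_L (mem_comm_L hg _) _
          rw [MHEAD K _ (j + 1) _ _ h1 h2 (by simpa using hKr),
            MCONJ K _ (j + 1) _ _ (mem_comm_L hg (a (m + 1))) (by simpa using hKr)]
          rw [ih (j + 1) _ h1 hKr, ih (j + 1) _ (mem_comm_L hg (a (m + 1))) hKr]
          rw [choices_cons_succ, List.map_append, List.prod_append, List.map_map, List.map_map]
          rfl

lemma EXP (n : ℕ) (t : List ℕ) (ht : t.length = K) :
    mkQ K (phiFree (ClF (n :: t)))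
      = ((choices (n :: t)).map (fun l' => mkQ K (ClF l'))).prod := by
  have h0 : phiFree (ClF (n :: t))
      = CE (phiFree (a n)) (t.map (fun m => phiFree (a m))) := by
    rw [ClF, map_CE, List.map_map]
    rfl
  rw [h0]
  cases n with
  | zero =>
      rw [phi_a_zero, EXPt K t 0 (a 0) (mem_L0 _) (by omega), choices_cons_zero, List.map_map]
      apply congrArg List.prod
      apply List.map_congr_left
      intro t' _
      rfl
  | succ n =>
      rw [phi_a_succ,
        MHEAD K _ 0 (a n) (a (n + 1)) (mem_L0 _) (mem_L0 _) (by simp [ht]),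
        EXPt K t 0 (a n) (mem_L0 _) (by omega),
        EXPt K t 0 (a (n + 1)) (mem_L0 _) (by omega),
        choices_cons_succ, List.map_append, List.prod_append, List.map_map, List.map_map]
      rfl

noncomputable def ZK : Subgroup (F ⧸ L (K + 1)) := (L K).map (mkQ K)

noncomputable instance : CommGroup (ZK K) :=
  { (inferInstance : Group (ZK K)) with
    mul_comm := by
      rintro ⟨x, hx⟩ ⟨y, hy⟩
      obtain ⟨ξ, hξ, rfl⟩ := hx
      apply Subtype.ext
      exact (central_mk K hξ y).eq }

noncomputable def evf (l : List ℕ) : ZK K :=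
  if h : l.length = K + 1 then ⟨mkQ K (ClF l), Subgroup.mem_map_of_mem _ (ClF_mem K h)⟩
  else 1

noncomputable def ev : A →+ Additive (ZK K) :=
  FreeAbelianGroup.lift fun l => Additive.ofMul (evf K l)

lemma ev_of (l : List ℕ) : ev K (FreeAbelianGroup.of l) = Additive.ofMul (evf K l) := by
  simp [ev]

lemma hphile : L (K + 1) ≤ (L (K + 1)).comap phiFree := fun x hx => phi_mem_L hx

noncomputable def phiQbar : (F ⧸ L (K + 1)) →* (F ⧸ L (K + 1)) :=
  QuotientGroup.map _ _ phiFree (hphile K)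

lemma phiQbar_mk (x : F) : phiQbar K (mkQ K x) = mkQ K (phiFree x) := by
  exact QuotientGroup.map_mk' _ _ _ _ x

noncomputable def phiZ : ZK K →* ZK K :=
  ((phiQbar K).domRestrict (ZK K)).codRestrict (ZK K) (by
    rintro ⟨q, hq⟩
    obtain ⟨ξ, hξ, rfl⟩ := hq
    show phiQbar K (mkQ K ξ) ∈ ZK K
    rw [phiQbar_mk]
    exact Subgroup.mem_map_of_mem _ (phi_mem_L hξ))

lemma phiZ_coe (x : ZK K) : (phiZ K x : F ⧸ L (K + 1)) = phiQbar K (x : F ⧸ L (K + 1)) := rfl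

noncomputable def phiZadd : Additive (ZK K) →+ Additive (ZK K) :=
  AddMonoidHom.mk' (fun x => Additive.ofMul (phiZ K x.toMul)) (by
    intro x y
    apply congrArg Additive.ofMul
    exact map_mul _ _ _)

lemma ofMul_list_sum (lst : List (List ℕ)) (f : List ℕ → ZK K) :
    (lst.map (fun l => Additive.ofMul (f l))).sum = Additive.ofMul ((lst.map f).prod) := by
  induction lst with
  | nil => rfl
  | cons x xs ih => simp only [List.map_cons, List.sum_cons, List.prod_cons, ih]; rfl

lemma ev_Phi (z : A) : ev K (PhiA z) = phiZadd K (ev K z) := by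
  induction z using FreeAbelianGroup.induction_on with
  | zero => simp
  | of l =>
      rw [PhiA_of, map_list_sum, List.map_map, ev_of]
      have h1 : (choices l).map ((ev K) ∘ FreeAbelianGroup.of)
          = (choices l).map (fun l' => Additive.ofMul (evf K l')) := by
        apply List.map_congr_left; intro l' _; exact ev_of K l'
      rw [h1, ofMul_list_sum]
      show _ = Additive.ofMul (phiZ K (evf K l))
      apply congrArg Additive.ofMul
      by_cases hl : l.length = K + 1
      · obtain ⟨n, t, rfl⟩ : ∃ n t, l = n :: t := by
          cases l with
          | nil => simp at hl
          | cons x xs => exact ⟨x, xs, rfl⟩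
        have ht : t.length = K := by simpa using hl
        apply Subtype.ext
        rw [SubmonoidClass.coe_list_prod, List.map_map]
        have h2 : (choices (n :: t)).map (Subtype.val ∘ evf K)
            = (choices (n :: t)).map (fun l' => mkQ K (ClF l')) := by
          apply List.map_congr_left
          intro l' hl'
          have : l'.length = K + 1 := by rw [mem_choices_length hl']; exact hl
          simp [evf, this]
        rw [h2, ← EXP K n t ht]
        show _ = (phiZ K (evf K (n :: t)) : F ⧸ L (K + 1))
        rw [phiZ_coe, evf, dif_pos hl]
        show mkQ K (phiFree (ClF (n :: t))) = phiQbar K (mkQ K (ClF (n :: t)))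
        rw [phiQbar_mk]
      · have hall : ∀ l' ∈ (choices l).map (evf K), l' = 1 := by
          intro x hx
          rw [List.mem_map] at hx
          obtain ⟨l', hl', rfl⟩ := hx
          have : l'.length ≠ K + 1 := by rw [mem_choices_length hl']; exact hl
          simp [evf, this]
        rw [List.prod_eq_one hall, evf, dif_neg hl, map_one]
  | neg l h =>
      rw [PhiA.map_neg, (ev K).map_neg, h, (ev K).map_neg, (phiZadd K).map_neg]
  | add x y hx hy =>
      rw [PhiA.map_add, (ev K).map_add, hx, hy, (ev K).map_add, (phiZadd K).map_add]

theorem CORE : ∀ (j : ℕ), ∀ p ∈ Bset j,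
    ∃ v ∈ L j, mkQ j (v * (phiFree v)⁻¹) = mkQ j p := by
  rintro K p ⟨n, l, hl, rfl⟩
  have hp : CE (a n) (l.map a) = ClF (n :: l) := rfl
  have hm := MODEL_final K (n :: l) (by simp [hl])
  obtain ⟨z, hz, hDz⟩ := AddSubgroup.mem_map.mp hm
  have hev := congrArg (ev K) hDz
  rw [DA_apply, map_sub, ev_Phi] at hev
  set w : ZK K := Additive.toMul (ev K z) with hw
  have hev2 : phiZ K w * w⁻¹ = evf K (n :: l) := by
    have h5 := congrArg Additive.toMul hev
    rw [toMul_sub, ev_of, toMul_ofMul, div_eq_mul_inv] at h5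
    exact h5
  obtain ⟨ζ, hζ, hζ2⟩ := w.2
  have hev3 : mkQ K (phiFree ζ) * (mkQ K ζ)⁻¹ = mkQ K (ClF (n :: l)) := by
    have := congrArg (Subtype.val) hev2
    rw [Subgroup.coe_mul, Subgroup.coe_inv, phiZ_coe, ← hζ2, phiQbar_mk] at this
    rw [this, evf, dif_pos (by simp [hl] : (n :: l).length = K + 1)]
  refine ⟨ζ⁻¹, inv_mem hζ, ?_⟩
  have h6 : ζ⁻¹ * (phiFree ζ⁻¹)⁻¹ = ζ⁻¹ * phiFree ζ := by rw [map_inv, inv_inv]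
  rw [hp, ← hev3, h6, map_mul, map_inv]
  exact ((central_mk K (phi_mem_L hζ) ((mkQ K ζ)⁻¹)).eq).symm

end Model

lemma CORE' : ∀ (j : ℕ), ∀ p ∈ Bset j, p ∈ Sgrp j := by
  intro j p hp
  obtain ⟨v, hv, he⟩ := CORE j p hp
  exact ⟨v, hv, he⟩


lemma L_le_Sgrp : ∀ k : ℕ, L k ≤ Sgrp k := by
  intro k
  cases k with
  | zero =>
      intro g _
      have hy : g ∈ Subgroup.closure (Set.range (FreeGroup.of : ℕ → F)) := by
        rw [FreeGroup.closure_range_of]; exact Subgroup.mem_top g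
      refine Subgroup.closure_le (K := Sgrp 0) (k := Set.range (FreeGroup.of : ℕ → F)) |>.mpr ?_ hy
      rintro x ⟨n, rfl⟩
      exact CORE' 0 _ ⟨n, [], rfl, rfl⟩
  | succ k =>
      rw [Lsucc, Subgroup.commutator_le]
      intro p hp y _
      apply comm_all_of_basic (Sgrp (k + 1)) (GEN k) (L_succ_le_Sgrp (k + 1)) ?_ p hp y
      rintro q ⟨n, l, hl, rfl⟩ y
      apply comm_all_of_comm_gen _ (L_succ_le_Sgrp (k+1) : L (k+2) ≤ _) (Bset_sub_L k ⟨n, l, hl, rfl⟩)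
      intro m
      apply CORE' (k + 1)
      exact ⟨n, l ++ [m], by simp [hl], by simp [List.map_append, CE_concat]⟩

theorem key (c : ℕ) (g : F) : ∃ z : F,
    (z * (phiFree z)⁻¹)⁻¹ * g ∈ (⊤ : Subgroup F).lowerCentralSeries c := by
  induction c generalizing g with
  | zero => exact ⟨1, by simpa using mem_L0 g⟩
  | succ c ih =>
      obtain ⟨z, hz⟩ := ih g
      set r : F := (z * (phiFree z)⁻¹)⁻¹ * g with hr
      have hrL : r ∈ L c := hz
      have hr' : (phiFree z)⁻¹ * r * phiFree z ∈ L c :=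
        Subgroup.Normal.conj_mem' (Subgroup.lowerCentralSeries_normal ⊤ c) r hrL (phiFree z)
      obtain ⟨v, hv, he⟩ := L_le_Sgrp c hr'
      rw [mkQ_eq_iff] at he
      refine ⟨z * v, ?_⟩
      have goal_eq : (z * v * (phiFree (z * v))⁻¹)⁻¹ * g
          = phiFree z * ((v * (phiFree v)⁻¹)⁻¹ * ((phiFree z)⁻¹ * r * phiFree z)) * (phiFree z)⁻¹ := by
        rw [map_mul, hr]
        group
      rw [goal_eq]
      exact Subgroup.Normal.conj_mem (Subgroup.lowerCentralSeries_normal ⊤ (c+1)) _ he (phiFree z)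

theorem hom_join_le (f : F →* F) (c : ℕ) :
    (⊤ : Subgroup F).lowerCentralSeries c ⊔ derivedSeries F 2 ≤
      ((⊤ : Subgroup F).lowerCentralSeries c ⊔ derivedSeries F 2).comap f := by
  rw [← Subgroup.map_le_iff_le_comap, Subgroup.map_sup]
  exact sup_le ((Subgroup.lowerCentralSeries.map f c).trans le_sup_left)
    ((map_derivedSeries_le_derivedSeries f 2).trans le_sup_right)

noncomputable def psiQ (c : ℕ) :
    FreeGroup ℕ ⧸ ((⊤ : Subgroup F).lowerCentralSeries c ⊔ derivedSeries F 2) →*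
      FreeGroup ℕ ⧸ ((⊤ : Subgroup F).lowerCentralSeries c ⊔ derivedSeries F 2) :=
  QuotientGroup.map _ _ psiFree (hom_join_le psiFree c)

lemma phiQ_psiQ (c : ℕ) (x) : phiFreeMetabelianNilpotent c (psiQ c x) = x := by
  induction x using QuotientGroup.induction_on with
  | H z =>
    rw [psiQ, phiFreeMetabelianNilpotent, QuotientGroup.map_mk, QuotientGroup.map_mk]
    have : phiFree (psiFree z) = z := by
      have := DFunLike.congr_fun phi_comp_psi z
      simpa using this
    rw [this]

lemma psiQ_phiQ (c : ℕ) (x) : psiQ c (phiFreeMetabelianNilpotent c x) = x := by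
  induction x using QuotientGroup.induction_on with
  | H z =>
    rw [psiQ, phiFreeMetabelianNilpotent, QuotientGroup.map_mk, QuotientGroup.map_mk]
    have : psiFree (phiFree z) = z := by
      have := DFunLike.congr_fun psi_comp_phi z
      simpa using this
    rw [this]

theorem phiQ_bijective (c : ℕ) : Function.Bijective (phiFreeMetabelianNilpotent c) :=
  Function.bijective_iff_has_inverse.mpr ⟨psiQ c, psiQ_phiQ c, phiQ_psiQ c⟩

theorem single_class (c : ℕ)
    (g : FreeGroup ℕ ⧸ ((⊤ : Subgroup F).lowerCentralSeries c ⊔ derivedSeries F 2)) :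
    ∃ z, g = z * (phiFreeMetabelianNilpotent c z)⁻¹ := by
  induction g using QuotientGroup.induction_on with
  | H g0 =>
    obtain ⟨z0, hz0⟩ := key c g0
    refine ⟨((z0 : F) : FreeGroup ℕ ⧸ ((⊤ : Subgroup F).lowerCentralSeries c ⊔ derivedSeries F 2)), ?_⟩
    rw [phiFreeMetabelianNilpotent, QuotientGroup.map_mk, ← QuotientGroup.mk_inv,
      ← QuotientGroup.mk_mul]
    refine QuotientGroup.eq.mpr (le_sup_left (α := Subgroup F) ?_)
    have := ((⊤ : Subgroup F).lowerCentralSeries c).inv_mem hz0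
    simpa [mul_assoc] using this

theorem not_rinf (c : ℕ) :
    ¬ PropertyRInfinity
        (FreeGroup ℕ ⧸ ((⊤ : Subgroup F).lowerCentralSeries c ⊔ derivedSeries F 2)) := by
  intro h
  set φ' := phiFreeMetabelianNilpotent c
  let e := MulEquiv.ofBijective φ' (phiQ_bijective c)
  have he : e.toMonoidHom = φ' := by ext x; rfl
  have hinf := h e
  rw [he] at hinf
  have : Subsingleton (ReidemeisterClasses φ') := by
    constructor
    intro x y
    induction x using Quot.ind with
    | _ x =>
    induction y using Quot.ind with
    | _ y =>
      apply Quot.sound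
      obtain ⟨z1, hz1⟩ := single_class c x
      obtain ⟨z2, hz2⟩ := single_class c y
      refine ⟨z1 * z2⁻¹, ?_⟩
      rw [hz1, hz2]
      rw [show φ' = phiFreeMetabelianNilpotent c from rfl, map_mul, map_inv]
      group
  haveI := hinf
  haveI := this
  exact not_finite (ReidemeisterClasses φ')


end RinfAux

/-- With `φ : F_∞ →* F_∞` determined by `φ(x_0) = x_0`, `φ(x_{i+1}) = x_i * x_{i+1}` and
`c ≥ 1`: the induced endomorphism `φ'_c` of `M_{∞,c} = F_∞ / (γ_{c+1}(F_∞) ⊔ F_∞^{(2)})`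
is bijective and has exactly one Reidemeister class (every `g` equals `z * (φ'_c z)⁻¹`
for some `z`), and consequently `M_{∞,c}` does not have property `R_∞`. -/
theorem freeMetabelianNilpotentInftyRank_not_propertyRInfinity (c : ℕ) (hc : 1 ≤ c) :
    Function.Bijective (phiFreeMetabelianNilpotent c) ∧
    (∀ g : FreeGroup ℕ ⧸ ((⊤ : Subgroup (FreeGroup ℕ)).lowerCentralSeries c ⊔ derivedSeries (FreeGroup ℕ) 2),
      ∃ z, g = z * (phiFreeMetabelianNilpotent c z)⁻¹) ∧
    ¬ PropertyRInfinity
        (FreeGroup ℕ ⧸ ((⊤ : Subgroup (FreeGroup ℕ)).lowerCentralSeries c ⊔ derivedSeries (FreeGroup ℕ) 2)) :=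
    ⟨RinfAux.phiQ_bijective c, RinfAux.single_class c, RinfAux.not_rinf c⟩
end

section
/- There exists an automorphism φ of the free group F_∞ = FreeGroup ℕ of countably infinite rank with exactly one Reidemeister class, i.e., every v ∈ F_∞ can be written v = z * φ(z)⁻¹ for some z ∈ F_∞ (so R(φ) = 1). Hence F_∞ does not have property R_∞. -/
/-- The subgroup of `FreeGroup ℕ` generated by the first `n` generators. -/
noncomputable def FFsub (n : ℕ) : Subgroup (FreeGroup ℕ) :=
  Subgroup.closure (FreeGroup.of '' Set.Iio n)

lemma FFsub_mono : Monotone FFsub := fun _ _ h =>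
  Subgroup.closure_mono (Set.image_mono (Set.Iio_subset_Iio h))

lemma of_mem_FFsub {k n : ℕ} (h : k < n) : FreeGroup.of k ∈ FFsub n :=
  Subgroup.subset_closure ⟨k, h, rfl⟩

lemma exists_mem_FFsub (w : FreeGroup ℕ) : ∃ n, w ∈ FFsub n := by
  induction w using FreeGroup.induction_on with
  | C1 => exact ⟨0, one_mem _⟩
  | of x => exact ⟨x + 1, of_mem_FFsub (Nat.lt_succ_self x)⟩
  | inv_of x _ => exact ⟨x + 1, inv_mem (of_mem_FFsub (Nat.lt_succ_self x))⟩
  | mul x y hx hy =>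
      obtain ⟨n, hn⟩ := hx
      obtain ⟨m, hm⟩ := hy
      exact ⟨max n m, mul_mem (FFsub_mono (le_max_left _ _) hn)
        (FFsub_mono (le_max_right _ _) hm)⟩

lemma FFsub_zero : FFsub 0 = ⊥ := by
  simp [FFsub]

/-- There is a surjective enumeration `e` of `FreeGroup ℕ` with `e n ∈ FFsub n`. -/
lemma exists_enum : ∃ e : ℕ → FreeGroup ℕ, (∀ n, e n ∈ FFsub n) ∧
    ∀ w : FreeGroup ℕ, ∃ n, e n = w := by
  classical
  have : Countable (FreeGroup ℕ) := FreeGroup.toWord_injective.countable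
  obtain ⟨f, hf⟩ := exists_surjective_nat (FreeGroup ℕ)
  refine ⟨fun n => if f n.unpair.1 ∈ FFsub n then f n.unpair.1 else 1, fun n => ?_, fun w => ?_⟩
  · simp only
    split <;> simp_all [one_mem]
  · obtain ⟨k, hk⟩ := hf w
    obtain ⟨m, hm⟩ := exists_mem_FFsub w
    refine ⟨Nat.pair k m, ?_⟩
    have h1 : f (Nat.pair k m).unpair.1 ∈ FFsub (Nat.pair k m) := by
      rw [Nat.unpair_pair, hk]
      exact FFsub_mono (Nat.right_le_pair k m) hm
    simp only
    rw [if_pos h1, Nat.unpair_pair, hk]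

/-- Triangular endomorphisms surject onto each `FFsub n`. -/
lemma FFsub_le_map (θ : FreeGroup ℕ →* FreeGroup ℕ)
    (h : ∀ n, ∃ u ∈ FFsub n, FreeGroup.of n = u * θ (FreeGroup.of n)) :
    ∀ n, FFsub n ≤ (FFsub n).map θ := by
  intro n
  induction n with
  | zero => rw [FFsub_zero]; exact bot_le
  | succ n ih =>
      rw [FFsub, Subgroup.closure_le]
      rintro - ⟨k, hk, rfl⟩
      rcases Nat.lt_succ_iff_lt_or_eq.mp hk with hk | rfl
      · exact Subgroup.map_mono (FFsub_mono n.le_succ) (ih (of_mem_FFsub hk))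
      · obtain ⟨u, hu, hu'⟩ := h k
        have h1 : u ∈ (FFsub (k + 1)).map θ :=
          Subgroup.map_mono (FFsub_mono k.le_succ) (ih hu)
        have h2 : θ (FreeGroup.of k) ∈ (FFsub (k + 1)).map θ :=
          ⟨FreeGroup.of k, of_mem_FFsub (Nat.lt_succ_self k), rfl⟩
        rw [hu']
        exact mul_mem h1 h2

/-- There exists an automorphism `φ` of the free group `F_∞ = FreeGroup ℕ` of countably
infinite rank with exactly one Reidemeister class: every `v` equals `z * (φ z)⁻¹` for some
`z`. Hence `F_∞` does not have property `R_∞`. -/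
theorem freeGroupNat_not_propertyRInfinity :
    (∃ φ : FreeGroup ℕ ≃* FreeGroup ℕ,
      ∀ v : FreeGroup ℕ, ∃ z : FreeGroup ℕ, v = z * (φ z)⁻¹) ∧
    ¬ PropertyRInfinity (FreeGroup ℕ) := by
  classical
  obtain ⟨e, he, hesurj⟩ := exists_enum
  -- the endomorphism φ
  set φ : FreeGroup ℕ →* FreeGroup ℕ :=
    FreeGroup.lift (fun n => (e n)⁻¹ * FreeGroup.of n) with hφdef
  have hφof : ∀ n, φ (FreeGroup.of n) = (e n)⁻¹ * FreeGroup.of n := fun n => by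
    simp [hφdef]
  -- φ surjects onto each FFsub n
  have hφmap : ∀ n, FFsub n ≤ (FFsub n).map φ := by
    refine FFsub_le_map φ (fun n => ⟨e n, he n, ?_⟩)
    rw [hφof]; group
  -- choose preimages c n ∈ FFsub n of e n
  have hc : ∀ n, ∃ c ∈ FFsub n, φ c = e n := fun n => by
    obtain ⟨c, hc1, hc2⟩ := hφmap n (he n)
    exact ⟨c, hc1, hc2⟩
  choose c hcmem hcval using hc
  -- the inverse endomorphism ψ
  set ψ : FreeGroup ℕ →* FreeGroup ℕ :=
    FreeGroup.lift (fun n => c n * FreeGroup.of n) with hψdef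
  have hψof : ∀ n, ψ (FreeGroup.of n) = c n * FreeGroup.of n := fun n => by
    simp [hψdef]
  have hcomp : ∀ w, φ (ψ w) = w := by
    have : φ.comp ψ = MonoidHom.id _ := by
      apply FreeGroup.ext_hom
      intro n
      simp [hψof, map_mul, hcval, hφof]
    intro w
    exact DFunLike.congr_fun this w
  -- ψ is surjective
  have hψmap : ∀ n, FFsub n ≤ (FFsub n).map ψ := by
    refine FFsub_le_map ψ (fun n => ⟨(c n)⁻¹, inv_mem (hcmem n), ?_⟩)
    rw [hψof]; group
  have hψsurj : Function.Surjective ψ := by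
    intro w
    obtain ⟨m, hm⟩ := exists_mem_FFsub w
    obtain ⟨z, _, hz⟩ := hψmap m hm
    exact ⟨z, hz⟩
  -- φ is bijective
  have hφbij : Function.Bijective φ := by
    constructor
    · intro a b hab
      obtain ⟨a', rfl⟩ := hψsurj a
      obtain ⟨b', rfl⟩ := hψsurj b
      rw [hcomp, hcomp] at hab
      rw [hab]
    · intro w
      exact ⟨ψ w, hcomp w⟩
  set Φ : FreeGroup ℕ ≃* FreeGroup ℕ := MulEquiv.ofBijective φ hφbij with hΦdef
  have hΦapp : ∀ z, Φ z = φ z := fun z => rfl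
  have key : ∀ v : FreeGroup ℕ, ∃ z : FreeGroup ℕ, v = z * (Φ z)⁻¹ := by
    intro v
    obtain ⟨n, hn⟩ := hesurj v
    refine ⟨FreeGroup.of n, ?_⟩
    rw [hΦapp, hφof, ← hn]
    group
  refine ⟨⟨Φ, key⟩, ?_⟩
  intro h
  have hsub : Subsingleton (ReidemeisterClasses Φ.toMonoidHom) := by
    have hone : ∀ x : FreeGroup ℕ,
        Quot.mk (ReidemeisterRel Φ.toMonoidHom) x = Quot.mk _ 1 := by
      intro x
      obtain ⟨z, hz⟩ := key x
      exact Quot.sound ⟨z, by simpa using hz⟩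
    constructor
    intro a b
    induction a using Quot.ind with | _ x =>
    induction b using Quot.ind with | _ y =>
    rw [hone x, hone y]
  exact @not_finite _ (h Φ) (@Finite.of_subsingleton _ hsub)
end

section
/- Let X be an infinite set. Then there exists an automorphism φ of the free group F(X) = FreeGroup X with exactly one Reidemeister class, i.e., every g ∈ FreeGroup X can be written g = z * φ(z)⁻¹ for some z. Hence FreeGroup X does not have property R_∞. -/
universe u

namespace RInfAux

open FreeGroup Cardinal

variable (X : Type u)

/-- `(LB n).1` : generators of level `< n`; `(LB n).2` : generators of level `n`. -/
def LB : ℕ → Type u × Type u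
  | 0 => (PEmpty, X)
  | n + 1 => ((LB n).1 ⊕ (LB n).2, FreeGroup ((LB n).1 ⊕ (LB n).2))

abbrev L (n : ℕ) : Type u := (LB X n).1
abbrev B (n : ℕ) : Type u := (LB X n).2

/-- All generators. -/
def Y : Type u := Σ n : ℕ, B X n

/-- Inclusion of low-level generators into all generators. -/
def ℓ : (n : ℕ) → L X n → Y X
  | 0 => PEmpty.elim
  | n + 1 => Sum.elim (ℓ n) (fun b => ⟨n, b⟩)

/-- The automorphism on generators. -/
def f : Y X → FreeGroup (Y X)
  | ⟨0, b⟩ => of ⟨0, b⟩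
  | ⟨n + 1, g⟩ => (FreeGroup.map (ℓ X (n + 1)) g)⁻¹ * of ⟨n + 1, g⟩

/-- The inverse automorphism on generators (levels `< n` and level `n`). -/
def hLB : (n : ℕ) → (L X n → FreeGroup (Y X)) × (B X n → FreeGroup (Y X))
  | 0 => (PEmpty.elim, fun b => of ⟨0, b⟩)
  | n + 1 =>
    ( Sum.elim (hLB n).1 (hLB n).2,
      fun g => FreeGroup.lift (Sum.elim (hLB n).1 (hLB n).2) g * of ⟨n + 1, g⟩ )

abbrev hL (n : ℕ) : L X n → FreeGroup (Y X) := (hLB X n).1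
abbrev hB (n : ℕ) : B X n → FreeGroup (Y X) := (hLB X n).2

def h : Y X → FreeGroup (Y X) := fun y => hB X y.1 y.2

lemma h_ℓ : ∀ (n : ℕ) (x : L X n), h X (ℓ X n x) = hL X n x := by
  intro n
  induction n with
  | zero => exact fun x => x.elim
  | succ n ih =>
    rintro (x | b)
    · exact ih x
    · rfl

lemma lift_h_map (n : ℕ) (g : FreeGroup (L X (n + 1))) :
    FreeGroup.lift (h X) (FreeGroup.map (ℓ X (n + 1)) g) = FreeGroup.lift (hL X (n + 1)) g := by
  have : (FreeGroup.lift (h X)).comp (FreeGroup.map (ℓ X (n + 1))) =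
      FreeGroup.lift (hL X (n + 1)) := by
    apply FreeGroup.ext_hom
    intro a
    simp [FreeGroup.map.of, FreeGroup.lift_apply_of, h_ℓ]
  exact DFunLike.congr_fun this g

lemma lift_h_f (y : Y X) : FreeGroup.lift (h X) (f X y) = of y := by
  obtain ⟨n, b⟩ := y
  cases n with
  | zero =>
    show FreeGroup.lift (h X) (of ⟨0, b⟩) = of ⟨0, b⟩
    erw [FreeGroup.lift_apply_of]
    rfl
  | succ n =>
    show FreeGroup.lift (h X) ((FreeGroup.map (ℓ X (n + 1)) b)⁻¹ * of ⟨n + 1, b⟩) = _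
    erw [_root_.map_mul, _root_.map_inv, lift_h_map, FreeGroup.lift_apply_of]
    show _ * hB X (n + 1) b = _
    show _ * (FreeGroup.lift (hL X (n+1)) b * of ⟨n + 1, b⟩) = _
    group

lemma lift_f_hL : ∀ (n : ℕ) (x : L X n),
    FreeGroup.lift (f X) (hL X n x) = of (ℓ X n x) := by
  intro n
  induction n with
  | zero => exact fun x => x.elim
  | succ n ih =>
    rintro (x | b)
    · exact ih x
    · show FreeGroup.lift (f X) (hB X n b) = of ⟨n, b⟩
      cases n with
      | zero =>
        show FreeGroup.lift (f X) (of ⟨0, b⟩) = of ⟨0, b⟩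
        erw [FreeGroup.lift_apply_of]
        rfl
      | succ m =>
        have key : (FreeGroup.lift (f X)).comp (FreeGroup.lift (hL X (m + 1))) =
            FreeGroup.map (ℓ X (m + 1)) := by
          apply FreeGroup.ext_hom
          intro a
          simp [FreeGroup.lift_apply_of, FreeGroup.map.of, ih]
        show FreeGroup.lift (f X)
            (FreeGroup.lift (hL X (m + 1)) b * of ⟨m + 1, b⟩) = _
        erw [_root_.map_mul, ← MonoidHom.comp_apply, key, FreeGroup.lift_apply_of]
        show _ * f X ⟨m + 1, b⟩ = _
        show _ * ((FreeGroup.map (ℓ X (m + 1)) b)⁻¹ * of ⟨m + 1, b⟩) = _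
        group

lemma lift_f_h (y : Y X) : FreeGroup.lift (f X) (h X y) = of y := by
  obtain ⟨n, b⟩ := y
  have := lift_f_hL X (n + 1) (Sum.inr b)
  exact this

/-- The automorphism of `FreeGroup (Y X)`. -/
def φY : FreeGroup (Y X) ≃* FreeGroup (Y X) :=
  MonoidHom.toMulEquiv (FreeGroup.lift (f X)) (FreeGroup.lift (h X))
    (FreeGroup.ext_hom _ _ fun y => by
      simp only [MonoidHom.comp_apply, MonoidHom.id_apply, FreeGroup.lift_apply_of]
      exact lift_h_f X y)
    (FreeGroup.ext_hom _ _ fun y => by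
      simp only [MonoidHom.comp_apply, MonoidHom.id_apply, FreeGroup.lift_apply_of]
      exact lift_f_h X y)

lemma map_ℓ_succ (n : ℕ) (g : FreeGroup (L X (n + 1))) :
    FreeGroup.map (ℓ X (n + 2)) (FreeGroup.map Sum.inl g) = FreeGroup.map (ℓ X (n + 1)) g := by
  exact FreeGroup.map.comp Sum.inl (ℓ X (n + 2)) g

lemma exists_rep_up (g : FreeGroup (Y X)) (n m : ℕ) (hnm : n ≤ m)
    (hg : ∃ g' : FreeGroup (L X (n + 1)), FreeGroup.map (ℓ X (n + 1)) g' = g) :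
    ∃ g' : FreeGroup (L X (m + 1)), FreeGroup.map (ℓ X (m + 1)) g' = g := by
  induction m, hnm using Nat.le_induction with
  | base => exact hg
  | succ m _ ih =>
    obtain ⟨g', hg'⟩ := ih
    exact ⟨FreeGroup.map Sum.inl g', by rw [map_ℓ_succ]; exact hg'⟩

lemma exists_rep (g : FreeGroup (Y X)) :
    ∃ (n : ℕ) (g' : FreeGroup (L X (n + 1))), FreeGroup.map (ℓ X (n + 1)) g' = g := by
  induction g using FreeGroup.induction_on with
  | C1 => exact ⟨0, 1, _root_.map_one _⟩
  | of y =>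
    obtain ⟨n, b⟩ := y
    exact ⟨n, of (Sum.inr b), rfl⟩
  | inv_of y hy =>
    obtain ⟨n, g', hg'⟩ := hy
    exact ⟨n, g'⁻¹, by rw [_root_.map_inv, hg']⟩
  | mul x y hx hy =>
    obtain ⟨n, gx, hgx⟩ := hx
    obtain ⟨m, gy, hgy⟩ := hy
    obtain ⟨gx', hgx'⟩ := exists_rep_up X x n (max n m) (le_max_left _ _) ⟨gx, hgx⟩
    obtain ⟨gy', hgy'⟩ := exists_rep_up X y m (max n m) (le_max_right _ _) ⟨gy, hgy⟩
    exact ⟨max n m, gx' * gy', by rw [_root_.map_mul, hgx', hgy']⟩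

lemma main_Y (g : FreeGroup (Y X)) : ∃ z : FreeGroup (Y X), g = z * (φY X z)⁻¹ := by
  obtain ⟨n, g', hg'⟩ := exists_rep X g
  refine ⟨of ⟨n + 1, g'⟩, ?_⟩
  have : φY X (of ⟨n + 1, g'⟩) = (FreeGroup.map (ℓ X (n + 1)) g')⁻¹ * of ⟨n + 1, g'⟩ := by
    show FreeGroup.lift (f X) (of ⟨n + 1, g'⟩) = _
    erw [FreeGroup.lift_apply_of]
    rfl
  rw [this, hg']
  group

lemma mk_B (n : ℕ) [Infinite X] : #(B X n) = #X ∧ #(L X (n + 1)) = #X := by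
  induction n with
  | zero =>
    constructor
    · rfl
    · show #(PEmpty ⊕ X) = #X
      simp
  | succ n ih =>
    obtain ⟨hB, hL⟩ := ih
    have hLn : #(L X (n + 1)) = #X := hL
    have : Nonempty (L X (n + 1)) := by
      rw [← mk_ne_zero_iff, hLn]
      exact mk_ne_zero X
    have hBn : #(B X (n + 1)) = #X := by
      show #(FreeGroup (L X (n + 1))) = #X
      rw [mk_freeGroup, hLn, max_eq_left (aleph0_le_mk X)]
    refine ⟨hBn, ?_⟩
    show #(L X (n + 1) ⊕ B X (n + 1)) = #X
    rw [mk_sum, lift_id, lift_id, hLn, hBn, add_eq_self (aleph0_le_mk X)]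

lemma mk_Y [Infinite X] : #(Y X) = #X := by
  have : #(Y X) = Cardinal.sum fun n : ℕ => #(B X n) := mk_sigma _
  rw [this]
  have : (Cardinal.sum fun n : ℕ => #(B X n)) = Cardinal.sum fun _ : ℕ => #X := by
    congr 1
    ext n
    exact (mk_B X n).1
  rw [this, sum_const, mk_nat, lift_aleph0, lift_uzero]
  exact mul_eq_right (aleph0_le_mk X) (aleph0_le_mk X) aleph0_ne_zero

lemma main_X [Infinite X] : ∃ φ : FreeGroup X ≃* FreeGroup X,
    ∀ g : FreeGroup X, ∃ z : FreeGroup X, g = z * (φ z)⁻¹ := by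
  obtain ⟨e⟩ : Nonempty (X ≃ Y X) := Cardinal.eq.mp (mk_Y X).symm
  set F := FreeGroup.freeGroupCongr e with hF
  refine ⟨(F.trans (φY X)).trans F.symm, fun g => ?_⟩
  obtain ⟨z', hz'⟩ := main_Y X (F g)
  refine ⟨F.symm z', ?_⟩
  have h1 : ((F.trans (φY X)).trans F.symm) (F.symm z') = F.symm (φY X z') := by
    simp [MulEquiv.trans_apply]
  rw [h1, ← _root_.map_inv, ← _root_.map_mul, ← hz']
  simp

end RInfAux

/-- For any infinite set `X`, there exists an automorphism `φ` of the free group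
`FreeGroup X` with exactly one Reidemeister class: every `g` equals `z * (φ z)⁻¹` for some
`z`. Hence `FreeGroup X` does not have property `R_∞`. -/
theorem freeGroup_infinite_not_propertyRInfinity (X : Type*) [Infinite X] :
    (∃ φ : FreeGroup X ≃* FreeGroup X,
      ∀ g : FreeGroup X, ∃ z : FreeGroup X, g = z * (φ z)⁻¹) ∧
    ¬ PropertyRInfinity (FreeGroup X) := by
  obtain ⟨φ, hφ⟩ := RInfAux.main_X X
  refine ⟨⟨φ, hφ⟩, fun H => ?_⟩
  haveI := H φ
  have key : ∀ q : Quot (ReidemeisterRel φ.toMonoidHom), q = Quot.mk _ 1 := by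
    intro q
    induction q using Quot.inductionOn with
    | h x =>
      obtain ⟨z, hz⟩ := hφ x
      exact Quot.sound ⟨z, by rw [mul_one]; exact hz⟩
  obtain ⟨a, b, hab⟩ := exists_pair_ne (ReidemeisterClasses φ.toMonoidHom)
  exact hab ((key a).trans (key b).symm)
end

section
/- Let X be an infinite set equipped with a well-order (a linear order whose strict order is well-founded) such that every proper initial segment {y ∈ X : y < x} has cardinality strictly smaller than the cardinality of X (i.e., the order type of X is the initial ordinal of |X|). Then there exists a surjection h : X → FreeGroup X such that for every x ∈ X, either h(x) = 1 or there exists b ∈ X with b < x and h(x) lying in the subgroup of FreeGroup X generated by the generators {FreeGroup.of y : y < b}. -/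
open Cardinal

private lemma list_exists_upper {X : Type*} [Nonempty X] [LinearOrder X] [NoMaxOrder X] :
    ∀ l : List X, ∃ b : X, ∀ a ∈ l, a < b
  | [] => (exists_gt (Classical.arbitrary X)).imp (fun _ _ a ha => absurd ha List.not_mem_nil)
  | a :: l => by
    obtain ⟨b, hb⟩ := list_exists_upper l
    obtain ⟨c, hc⟩ := exists_gt (max a b)
    refine ⟨c, fun y hy => ?_⟩
    rcases List.mem_cons.mp hy with rfl | hy
    · exact lt_of_le_of_lt (le_max_left _ _) hc
    · exact lt_of_lt_of_le (hb y hy) ((le_max_right a b).trans hc.le)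

private lemma mk_mem_closure_letters {X : Type*} (S : Set X) :
    ∀ L : List (X × Bool), (∀ p ∈ L, p.1 ∈ S) →
      FreeGroup.mk L ∈ Subgroup.closure (FreeGroup.of '' S)
  | [], _ => by
    rw [← FreeGroup.one_eq_mk]; exact (Subgroup.closure _).one_mem
  | p :: L, h => by
    have hmem : FreeGroup.of p.1 ∈ Subgroup.closure (FreeGroup.of '' S) :=
      Subgroup.subset_closure ⟨p.1, h p List.mem_cons_self, rfl⟩
    have h1 : FreeGroup.mk [p] ∈ Subgroup.closure (FreeGroup.of '' S) := by
      rcases p with ⟨x, b⟩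
      cases b
      · have : FreeGroup.mk [(x, false)] = (FreeGroup.of x)⁻¹ := by
          rw [FreeGroup.of, FreeGroup.inv_mk]; rfl
        rw [this]; exact inv_mem hmem
      · exact hmem
    have h2 := mk_mem_closure_letters S L (fun q hq => h q (List.mem_cons_of_mem _ hq))
    have : FreeGroup.mk (p :: L) = FreeGroup.mk [p] * FreeGroup.mk L := by
      rw [FreeGroup.mul_mk]
      rfl
    rw [this]; exact mul_mem h1 h2

private lemma exists_inj_above {X : Type*} [Infinite X] [LinearOrder X] [WellFoundedLT X]
    (hcard : ∀ x : X, Cardinal.mk {y : X // y < x} < Cardinal.mk X) (B : X → X) :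
    ∃ ι : X → X, Function.Injective ι ∧ ∀ x, B x < ι x := by
  classical
  have hκ : ℵ₀ ≤ #X := Cardinal.infinite_iff.mp ‹Infinite X›
  have key : ∀ x : X, ∀ IH : (∀ z, z < x → X), ∃ y, B x < y ∧ ∀ z (hz : z < x), IH z hz ≠ y := by
    intro x IH
    by_contra hc
    push_neg at hc
    choose f hf1 hf2 using hc
    have hinj : #(Set.Ioi (B x)) ≤ #{z : X // z < x} := by
      refine ⟨⟨fun y => ⟨f y.1 y.2, hf1 y.1 y.2⟩, ?_⟩⟩
      intro y1 y2 hy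
      have h12 : f y1.1 y1.2 = f y2.1 y2.2 := congrArg Subtype.val hy
      have e1 := hf2 y1.1 y1.2
      have e2 := hf2 y2.1 y2.2
      apply Subtype.ext
      rw [← e1, ← e2]
      congr 1
    have h1 : #(Set.Iic (B x)) < #X := by
      have hsub : #(Set.Iic (B x)) ≤ #(Set.Iio (B x)) + 1 := by
        rw [← Set.Iio_union_right]
        refine (Cardinal.mk_union_le _ _).trans ?_
        simp
      refine hsub.trans_lt (Cardinal.add_lt_of_lt hκ ?_ ?_)
      · exact hcard (B x)
      · exact lt_of_lt_of_le Cardinal.one_lt_aleph0 hκ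
    have h2 : #X ≤ #(Set.Iic (B x)) + #(Set.Ioi (B x)) := by
      have := Cardinal.mk_union_le (Set.Iic (B x)) (Set.Ioi (B x))
      rw [Set.Iic_union_Ioi] at this
      simpa using this
    have hlt : #(Set.Ioi (B x)) < #X := hinj.trans_lt (hcard x)
    exact absurd (h2.trans_lt (Cardinal.add_lt_of_lt hκ h1 hlt)) (lt_irrefl _)
  let F : ∀ x : X, (∀ z, z < x → X) → X := fun x IH => (key x IH).choose
  let ι : X → X := (IsWellFounded.wf (r := ((· < ·) : X → X → Prop))).fix F
  have hfix : ∀ x, ι x = F x (fun z _ => ι z) := fun x => WellFounded.fix_eq _ _ x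
  have hprop : ∀ x, B x < ι x ∧ ∀ z, z < x → ι z ≠ ι x := by
    intro x
    have h := (key x (fun z _ => ι z)).choose_spec
    rw [hfix x]
    exact ⟨h.1, fun z hz => h.2 z hz⟩
  refine ⟨ι, ?_, fun x => (hprop x).1⟩
  intro a b hab
  by_contra hne
  rcases lt_or_gt_of_ne hne with h | h
  · exact (hprop b).2 a h hab
  · exact (hprop a).2 b h hab.symm

/-- Let `X` be an infinite set with a well-order whose proper initial segments all have
cardinality strictly smaller than `|X|`. Then there is a surjection `h : X → FreeGroup X`
such that each `h x` is either trivial or lies in the subgroup generated by the generators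
with index below some `b < x`. -/
theorem exists_surjection_freeGroup_of_wellOrder (X : Type*) [Infinite X] [LinearOrder X]
    [WellFoundedLT X] (hcard : ∀ x : X, Cardinal.mk {y : X // y < x} < Cardinal.mk X) :
    ∃ h : X → FreeGroup X, Function.Surjective h ∧
      ∀ x : X, h x = 1 ∨ ∃ b : X, b < x ∧
        h x ∈ Subgroup.closure (FreeGroup.of '' {y : X | y < b}) := by
  classical
  have hκ : ℵ₀ ≤ #X := Cardinal.infinite_iff.mp ‹Infinite X›
  haveI : NoMaxOrder X := by
    constructor
    intro m
    by_contra hc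
    push_neg at hc
    have huniv : Set.Iic m = Set.univ := by
      ext y; simpa using hc y
    have h1 : #X ≤ #(Set.Iio m) + 1 := by
      calc #X = #(Set.Iic m) := by rw [huniv, Cardinal.mk_univ]
        _ ≤ #(Set.Iio m) + 1 := by
          rw [← Set.Iio_union_right]
          refine (Cardinal.mk_union_le _ _).trans ?_
          simp
    exact absurd (h1.trans_lt (Cardinal.add_lt_of_lt hκ (hcard m)
      (lt_of_lt_of_le Cardinal.one_lt_aleph0 hκ))) (lt_irrefl _)
  have hbound : ∀ g : FreeGroup X, ∃ b : X,
      g ∈ Subgroup.closure (FreeGroup.of '' {y : X | y < b}) := by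
    intro g
    obtain ⟨b, hb⟩ := list_exists_upper (g.toWord.map Prod.fst)
    refine ⟨b, ?_⟩
    have := mk_mem_closure_letters {y : X | y < b} g.toWord
      (fun p hp => hb p.1 (List.mem_map_of_mem (f := Prod.fst) hp))
    rwa [FreeGroup.mk_toWord] at this
  obtain ⟨k, hk⟩ : ∃ k : FreeGroup X → X, Function.Injective k := by
    have hle : #(FreeGroup X) ≤ #X := by
      rw [Cardinal.mk_freeGroup]; exact max_le le_rfl hκ
    obtain ⟨f⟩ := hle
    exact ⟨f, f.injective⟩
  let B : X → X := fun x =>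
    if hx : ∃ g : FreeGroup X, k g = x then (hbound hx.choose).choose else x
  have hBspec : ∀ g : FreeGroup X, g ∈ Subgroup.closure (FreeGroup.of '' {y : X | y < B (k g)}) := by
    intro g
    have hh : ∃ g' : FreeGroup X, k g' = k g := ⟨g, rfl⟩
    have hB : B (k g) = (hbound hh.choose).choose := dif_pos hh
    have e : hh.choose = g := hk hh.choose_spec
    have spec := (hbound hh.choose).choose_spec
    rw [e] at spec hB
    rw [hB]
    exact spec
  obtain ⟨ι, hιinj, hιB⟩ := exists_inj_above hcard B
  refine ⟨fun x => if hx : ∃ g : FreeGroup X, ι (k g) = x then hx.choose else 1, ?_, ?_⟩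
  · intro g
    refine ⟨ι (k g), ?_⟩
    have hx : ∃ g' : FreeGroup X, ι (k g') = ι (k g) := ⟨g, rfl⟩
    simp only [dif_pos hx]
    exact hk (hιinj hx.choose_spec)
  · intro x
    by_cases hx : ∃ g : FreeGroup X, ι (k g) = x
    · right
      have hgx : ι (k hx.choose) = x := hx.choose_spec
      refine ⟨B (k hx.choose), lt_of_lt_of_eq (hιB (k hx.choose)) hgx, ?_⟩
      simp only [dif_pos hx]
      exact hBspec hx.choose
    · left
      simp only [dif_neg hx]
end

section
/- For every positive integer r there exists a matrix A_r ∈ GL(r, ℤ) whose characteristic polynomial has r distinct complex roots λ_1, λ_2, ..., λ_r, and such that for every k with 1 ≤ k ≤ 2r − 1 and every choice of indices i_1, i_2, ..., i_k ∈ {1, 2, ..., r} (repetitions allowed), the product λ_{i_1} · λ_{i_2} · ... · λ_{i_k} ≠ 1. -/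
open Polynomial

open Finset

namespace EigenAux

noncomputable def bb (r j : ℕ) : ℤ := 2 ^ ((4 * r) ^ j)

noncomputable def pp (r : ℕ) : ℤ[X] :=
  X * ∏ j ∈ Finset.Ico 1 r, (X - C (bb r j)) + C ((-1) ^ (r + 1))

lemma sq1 (m : ℕ) : ((-1 : ℤ)) ^ m = 1 ∨ ((-1 : ℤ)) ^ m = -1 :=
  (Nat.even_or_odd m).imp (fun h => h.neg_one_pow) (fun h => h.neg_one_pow)

lemma prod_sub_comm (s : Finset ℕ) (f : ℕ → ℤ) (t : ℤ) :
    ∏ i ∈ s, (t - f i) = (-1) ^ s.card * ∏ i ∈ s, (f i - t) := by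
  rw [← prod_const, ← prod_mul_distrib]
  exact prod_congr rfl fun i _ => by ring

lemma E_step (r i j : ℕ) (hr : 0 < r) (hij : i < j) : (4 * r) ^ i + 2 ≤ (4 * r) ^ j := by
  have h1 : (4 * r) ^ (i + 1) ≤ (4 * r) ^ j := Nat.pow_le_pow_right (by omega) (by omega)
  have h2 : 1 ≤ (4 * r) ^ i := Nat.one_le_pow _ _ (by omega)
  have h3 : (4 * r) ^ (i + 1) = 4 * r * (4 * r) ^ i := by ring
  have h4 : 4 * (4 * r) ^ i ≤ 4 * r * (4 * r) ^ i := by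
    have : 4 ≤ 4 * r := by omega
    exact Nat.mul_le_mul_right _ this
  omega

lemma E_pos (r j : ℕ) (hr : 0 < r) : 4 ≤ (4 * r) ^ j ∨ j = 0 := by
  rcases Nat.eq_zero_or_pos j with h | h
  · right; exact h
  · left
    calc 4 ≤ 4 * r := by omega
    _ = (4*r)^1 := (pow_one _).symm
    _ ≤ (4*r)^j := Nat.pow_le_pow_right (by omega) h

lemma bb_ge (r j : ℕ) (hr : 0 < r) : (2 : ℤ) ≤ bb r j := by
  have : (2:ℤ) = 2 ^ 1 := rfl
  rw [bb, this]
  exact pow_le_pow_right₀ (by norm_num) (Nat.one_le_pow _ _ (by omega))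

lemma pp_eval (r : ℕ) (t : ℤ) :
    (pp r).eval t = t * ∏ j ∈ Finset.Ico 1 r, (t - bb r j) + (-1) ^ (r + 1) := by
  simp [pp, eval_prod]

lemma pp_coeff_zero (r : ℕ) : (pp r).coeff 0 = (-1) ^ (r + 1) := by
  have h1 : (X * ∏ j ∈ Finset.Ico 1 r, (X - C (bb r j)) : ℤ[X]).coeff 0 = 0 := by
    rw [Polynomial.mul_coeff_zero, Polynomial.coeff_X_zero, zero_mul]
  rw [pp, Polynomial.coeff_add, h1, Polynomial.coeff_C_zero, zero_add]

lemma prodq_monic (r : ℕ) : (X * ∏ j ∈ Finset.Ico 1 r, (X - C (bb r j)) : ℤ[X]).Monic :=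
  monic_X.mul (monic_prod_of_monic _ _ fun j _ => monic_X_sub_C _)

lemma prodq_natDegree (r : ℕ) (hr : 0 < r) :
    (X * ∏ j ∈ Finset.Ico 1 r, (X - C (bb r j)) : ℤ[X]).natDegree = r := by
  rw [(monic_X (R := ℤ)).natDegree_mul (monic_prod_of_monic _ _ fun j _ => monic_X_sub_C _),
    natDegree_X, natDegree_prod_of_monic _ _ (fun j _ => monic_X_sub_C _)]
  simp only [natDegree_X_sub_C, Finset.sum_const, Nat.card_Ico, smul_eq_mul, mul_one]
  omega

lemma pp_monic (r : ℕ) (hr : 0 < r) : (pp r).Monic := by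
  apply (prodq_monic r).add_of_left
  rw [Polynomial.degree_eq_natDegree (prodq_monic r).ne_zero, prodq_natDegree r hr]
  exact lt_of_le_of_lt degree_C_le (by exact_mod_cast WithBot.coe_lt_coe.mpr hr)

lemma pp_natDegree (r : ℕ) (hr : 0 < r) : (pp r).natDegree = r := by
  rw [pp, natDegree_add_C, prodq_natDegree r hr]

end EigenAux

namespace EigenAux

lemma two_pow_pred (m : ℕ) (h : 1 ≤ m) : (2:ℤ)^m = 2 * 2^(m-1) := by
  conv_lhs => rw [show m = (m-1)+1 from by omega]
  rw [pow_succ]; ring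

lemma one_le_prodZ (s : Finset ℕ) (f : ℕ → ℤ) (h : ∀ i ∈ s, 1 ≤ f i) :
    1 ≤ ∏ i ∈ s, f i := by
  calc (1:ℤ) = ∏ _i ∈ s, (1:ℤ) := (Finset.prod_const_one).symm
  _ ≤ ∏ i ∈ s, f i := Finset.prod_le_prod (fun _ _ => zero_le_one) h

lemma single_le_prodZ (s : Finset ℕ) (f : ℕ → ℤ) (h : ∀ i ∈ s, 1 ≤ f i)
    (j : ℕ) (hj : j ∈ s) : f j ≤ ∏ i ∈ s, f i := by
  have h1 : 1 ≤ ∏ i ∈ s.erase j, f i :=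
    one_le_prodZ _ _ fun i hi => h i (Finset.mem_of_mem_erase hi)
  have h2 : 0 ≤ f j := le_trans zero_le_one (h j hj)
  calc f j = 1 * f j := (one_mul _).symm
  _ ≤ (∏ i ∈ s.erase j, f i) * f j := mul_le_mul_of_nonneg_right h1 h2
  _ = ∏ i ∈ s, f i := Finset.prod_erase_mul s f hj

lemma bb_mono (r : ℕ) (hr : 0 < r) (i j : ℕ) (hij : i ≤ j) : bb r i ≤ bb r j := by
  rw [bb, bb]
  exact pow_le_pow_right₀ (by norm_num) (Nat.pow_le_pow_right (by omega) hij)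

lemma eval_neg_one (r : ℕ) (hr : 0 < r) : 0 ≤ (-1:ℤ)^r * (pp r).eval (-1) := by
  obtain ⟨n, rfl⟩ : ∃ n, r = n + 1 := ⟨r - 1, by omega⟩
  have hP : 1 ≤ ∏ j ∈ Ico 1 (n+1), (bb (n+1) j - (-1)) := by
    refine one_le_prodZ _ _ ?_
    intro i _
    linarith [bb_ge (n+1) i (by omega)]
  rw [pp_eval, prod_sub_comm, Nat.card_Ico]
  set P := ∏ j ∈ Ico 1 (n+1), (bb (n+1) j - (-1)) with hPdef
  simp only [Nat.add_sub_cancel]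
  rcases sq1 n with h | h <;> simp only [pow_succ, h] <;> nlinarith

lemma eval_one (r : ℕ) (hr : 0 < r) : (-1:ℤ)^r * (pp r).eval 1 < 0 := by
  obtain ⟨n, rfl⟩ : ∃ n, r = n + 1 := ⟨r - 1, by omega⟩
  have hP : 1 ≤ ∏ j ∈ Ico 1 (n+1), (bb (n+1) j - 1) := by
    refine one_le_prodZ _ _ ?_
    intro i _
    linarith [bb_ge (n+1) i (by omega)]
  rw [pp_eval, prod_sub_comm, Nat.card_Ico]
  set P := ∏ j ∈ Ico 1 (n+1), (bb (n+1) j - 1) with hPdef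
  simp only [Nat.add_sub_cancel]
  rcases sq1 n with h | h <;> simp only [pow_succ, h] <;> nlinarith

lemma eval_low (r : ℕ) (hr : 0 < r) (j : ℕ) (hj1 : 1 ≤ j) (hj2 : j < r) :
    0 < (-1:ℤ)^(r - j) * (pp r).eval (2 ^ ((4*r)^j - 1)) := by
  have hE4 : 4 ≤ (4*r)^j := by
    rcases E_pos r j hr with h | h
    · exact h
    · omega
  set t : ℤ := 2 ^ ((4*r)^j - 1) with ht
  have ht2 : (2:ℤ) ≤ t := by
    rw [ht]
    calc (2:ℤ) = 2^1 := rfl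
    _ ≤ 2^((4*r)^j - 1) := pow_le_pow_right₀ (by norm_num) (by omega)
  have hbbj : bb r j = 2 * t := by
    rw [bb, ht]
    exact two_pow_pred _ (by omega)
  have hA : ∀ i ∈ Ico 1 j, (1:ℤ) ≤ t - bb r i := by
    intro i hi; have hi' := mem_Ico.1 hi
    have hstep : (4*r)^i + 2 ≤ (4*r)^j := E_step r i j hr hi'.2
    have h2 : bb r i * 2 ≤ t := by
      rw [bb, ht]
      calc (2:ℤ)^((4*r)^i) * 2 = 2^((4*r)^i + 1) := by rw [pow_succ]
      _ ≤ 2^((4*r)^j - 1) := pow_le_pow_right₀ (by norm_num) (by omega)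
    linarith [bb_ge r i hr]
  have hA1 : 1 ≤ ∏ i ∈ Ico 1 j, (t - bb r i) := one_le_prodZ _ _ hA
  have hB : ∀ i ∈ Ico j r, (1:ℤ) ≤ bb r i - t := by
    intro i hi; have hi' := mem_Ico.1 hi
    have h3 : bb r j ≤ bb r i := bb_mono r hr j i hi'.1
    linarith
  have hBj : t ≤ bb r j - t := by linarith
  have hB2 : t ≤ ∏ i ∈ Ico j r, (bb r i - t) :=
    le_trans hBj (single_le_prodZ _ _ hB j (mem_Ico.2 ⟨le_refl j, hj2⟩))
  rw [pp_eval, ← prod_Ico_consecutive _ hj1 (le_of_lt hj2), prod_sub_comm (Ico j r), Nat.card_Ico]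
  set A := ∏ i ∈ Ico 1 j, (t - bb r i) with hAdef
  set B := ∏ i ∈ Ico j r, (bb r i - t) with hBdef
  have h4 : 4 ≤ t * (A * B) := by
    have hAB : 2 ≤ A * B := by
      calc (2:ℤ) ≤ B := le_trans ht2 hB2
      _ = 1 * B := (one_mul B).symm
      _ ≤ A * B := mul_le_mul_of_nonneg_right hA1 (by linarith)
    calc (4:ℤ) = 2 * 2 := by norm_num
    _ ≤ t * (A * B) := mul_le_mul ht2 hAB (by norm_num) (by linarith)
  rcases sq1 (r - j) with h | h <;> rcases sq1 (r + 1) with h' | h' <;>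
    rw [h, h'] <;> nlinarith

lemma eval_high (r : ℕ) (hr : 0 < r) (j : ℕ) (hj1 : 1 ≤ j) (hj2 : j < r) :
    0 < (-1:ℤ)^(r - 1 - j) * (pp r).eval (2 ^ ((4*r)^j + 1)) := by
  set t : ℤ := 2 ^ ((4*r)^j + 1) with ht
  have hbbj : t = 2 * bb r j := by rw [bb, ht, pow_succ]; ring
  have ht2 : (2:ℤ) ≤ t := by linarith [bb_ge r j hr]
  have hA : ∀ i ∈ Ico 1 (j+1), (1:ℤ) ≤ t - bb r i := by
    intro i hi; have hi' := mem_Ico.1 hi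
    have h3 : bb r i ≤ bb r j := bb_mono r hr i j (by omega)
    linarith [bb_ge r j hr]
  have hAj : bb r j ≤ t - bb r j := by linarith
  have hA2 : (2:ℤ) ≤ ∏ i ∈ Ico 1 (j+1), (t - bb r i) :=
    le_trans (le_trans (bb_ge r j hr) hAj)
      (single_le_prodZ _ _ hA j (mem_Ico.2 ⟨hj1, by omega⟩))
  have hB : ∀ i ∈ Ico (j+1) r, (1:ℤ) ≤ bb r i - t := by
    intro i hi; have hi' := mem_Ico.1 hi
    have h3 : bb r (j+1) ≤ bb r i := bb_mono r hr (j+1) i hi'.1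
    have h4 : 2 * t ≤ bb r (j+1) := by
      rw [bb, ht]
      have hstep : (4*r)^j + 2 ≤ (4*r)^(j+1) := E_step r j (j+1) hr (by omega)
      calc 2 * (2:ℤ)^((4*r)^j + 1) = 2^((4*r)^j + 2) := by rw [pow_succ]; ring
      _ ≤ 2^((4*r)^(j+1)) := pow_le_pow_right₀ (by norm_num) (by omega)
    linarith
  have hB1 : 1 ≤ ∏ i ∈ Ico (j+1) r, (bb r i - t) := one_le_prodZ _ _ hB
  rw [pp_eval, ← prod_Ico_consecutive _ (by omega : 1 ≤ j + 1) (by omega : j + 1 ≤ r),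
    prod_sub_comm (Ico (j+1) r), Nat.card_Ico]
  have hcard : r - (j+1) = r - 1 - j := by omega
  rw [hcard]
  set A := ∏ i ∈ Ico 1 (j+1), (t - bb r i) with hAdef
  set B := ∏ i ∈ Ico (j+1) r, (bb r i - t) with hBdef
  have h4 : 4 ≤ t * (A * B) := by
    have hAB : 2 ≤ A * B := by
      calc (2:ℤ) ≤ A := hA2
      _ = A * 1 := (mul_one A).symm
      _ ≤ A * B := mul_le_mul_of_nonneg_left hB1 (by linarith)
    calc (4:ℤ) = 2 * 2 := by norm_num
    _ ≤ t * (A * B) := mul_le_mul ht2 hAB (by norm_num) (by linarith)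
  rcases sq1 (r - 1 - j) with h | h <;> rcases sq1 (r + 1) with h' | h' <;>
    rw [h, h'] <;> nlinarith

end EigenAux

namespace EigenAux

lemma ivt_aux (q : ℤ[X]) (m : ℕ) (t1 t2 : ℤ) (h12 : t1 ≤ t2)
    (h1 : 0 ≤ (-1:ℤ)^m * q.eval t1) (h2 : (-1:ℤ)^m * q.eval t2 < 0) :
    ∃ x : ℝ, (q.map (Int.castRingHom ℝ)).eval x = 0 ∧ (t1:ℝ) ≤ x ∧ x < (t2:ℝ) := by
  set F : ℝ → ℝ := fun x => ((-1:ℝ))^m * (q.map (Int.castRingHom ℝ)).eval x with hF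
  have hcont : ContinuousOn F (Set.Icc (t1:ℝ) (t2:ℝ)) :=
    (continuous_const.mul (q.map (Int.castRingHom ℝ)).continuous).continuousOn
  have hFt : ∀ t : ℤ, F (t:ℝ) = (((-1:ℤ)^m * q.eval t : ℤ) : ℝ) := by
    intro t
    rw [hF]
    simp only [eval_intCast_map, eq_intCast]
    push_cast
    ring
  have h0mem : (0:ℝ) ∈ Set.Icc (F (t2:ℝ)) (F (t1:ℝ)) := by
    rw [hFt, hFt]
    constructor
    · exact_mod_cast le_of_lt h2
    · exact_mod_cast h1
  have hsub := intermediate_value_Icc' (by exact_mod_cast h12 : (t1:ℝ) ≤ (t2:ℝ)) hcont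
  obtain ⟨x, hxmem, hx0⟩ := hsub h0mem
  refine ⟨x, ?_, hxmem.1, ?_⟩
  · have hne : ((-1:ℝ))^m ≠ 0 := pow_ne_zero _ (by norm_num)
    have hx0' : ((-1:ℝ))^m * (q.map (Int.castRingHom ℝ)).eval x = 0 := hx0
    rcases mul_eq_zero.1 hx0' with h | h
    · exact absurd h hne
    · exact h
  · rcases lt_or_eq_of_le hxmem.2 with h | h
    · exact h
    · exfalso
      have hx0' : F (t2:ℝ) = 0 := by rw [← h]; exact hx0
      rw [hFt] at hx0'
      have hz : (((-1:ℤ)^m * q.eval t2 : ℤ) : ℝ) < 0 := by exact_mod_cast h2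
      linarith [le_of_eq hx0', ge_of_eq hx0']

lemma ivt_aux' (q : ℤ[X]) (m : ℕ) (t1 t2 : ℤ) (h12 : t1 ≤ t2)
    (h1 : 0 < (-1:ℤ)^m * q.eval t1) (h2 : (-1:ℤ)^m * q.eval t2 < 0) :
    ∃ x : ℝ, (q.map (Int.castRingHom ℝ)).eval x = 0 ∧ (t1:ℝ) < x ∧ x < (t2:ℝ) := by
  obtain ⟨x, hx, hxl, hxu⟩ := ivt_aux q m t1 t2 h12 (le_of_lt h1) h2
  refine ⟨x, hx, ?_, hxu⟩
  rcases lt_or_eq_of_le hxl with hlt | heq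
  · exact hlt
  · exfalso
    have he : (q.map (Int.castRingHom ℝ)).eval ((t1:ℤ):ℝ) = ((q.eval t1 : ℤ) : ℝ) := by
      rw [eval_intCast_map]; simp
    have h0 : ((q.eval t1 : ℤ) : ℝ) = 0 := by rw [← he, heq]; exact hx
    have h0' : q.eval t1 = 0 := by exact_mod_cast h0
    rw [h0', mul_zero] at h1
    exact lt_irrefl _ h1

/-- packaged roots -/
lemma exists_rho (r : ℕ) (hr : 0 < r) :
    ∃ ρ : ℕ → ℝ,
      (∀ j, 1 ≤ j → j < r →
        ((pp r).map (Int.castRingHom ℝ)).eval (ρ j) = 0 ∧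
        ((2:ℝ)^((4*r)^j - 1) < ρ j ∧ ρ j < (2:ℝ)^((4*r)^j + 1))) ∧
      (((pp r).map (Int.castRingHom ℝ)).eval (ρ 0) = 0 ∧ -1 ≤ ρ 0 ∧ ρ 0 ≤ 1) := by
  have hmain : ∀ j : ℕ, ∃ x : ℝ,
      (1 ≤ j → j < r →
        ((pp r).map (Int.castRingHom ℝ)).eval x = 0 ∧
        ((2:ℝ)^((4*r)^j - 1) < x ∧ x < (2:ℝ)^((4*r)^j + 1))) ∧
      (j = 0 →
        ((pp r).map (Int.castRingHom ℝ)).eval x = 0 ∧ -1 ≤ x ∧ x ≤ 1) := by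
    intro j
    rcases Nat.eq_zero_or_pos j with rfl | hj1
    · -- root near zero, use IVT between -1 and 1 with sign m = r
      have h1 := eval_neg_one r hr
      have h2 := eval_one r hr
      obtain ⟨x, hx, hxl, hxu⟩ := ivt_aux (pp r) r (-1) 1 (by omega) h1 h2
      exact ⟨x, fun h _ => absurd h (by omega), fun _ => ⟨hx, by exact_mod_cast hxl, le_of_lt (by exact_mod_cast hxu)⟩⟩
    · by_cases hj2 : j < r
      · have h1 := eval_low r hr j hj1 hj2
        have h2' := eval_high r hr j hj1 hj2
        have hexp : r - j = (r - 1 - j) + 1 := by omega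
        have h2 : (-1:ℤ)^(r-j) * (pp r).eval (2 ^ ((4*r)^j + 1)) < 0 := by
          rw [hexp, pow_succ]
          nlinarith [h2']
        have hle : (2:ℤ) ^ ((4*r)^j - 1) ≤ 2 ^ ((4*r)^j + 1) :=
          pow_le_pow_right₀ (by norm_num) (by omega)
        obtain ⟨x, hx, hxl, hxu⟩ := ivt_aux' (pp r) (r - j) _ _ hle h1 h2
        refine ⟨x, fun _ _ => ⟨hx, ?_, ?_⟩, fun h => by omega⟩
        · calc (2:ℝ)^((4*r)^j - 1) = (((2:ℤ)^((4*r)^j - 1) : ℤ) : ℝ) := by push_cast; ring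
          _ < x := hxl
        · calc x < (((2:ℤ)^((4*r)^j + 1) : ℤ) : ℝ) := hxu
          _ = (2:ℝ)^((4*r)^j + 1) := by push_cast; ring
      · exact ⟨0, fun _ h => absurd h hj2, fun h => by omega⟩
  choose ρ hρ using hmain
  exact ⟨ρ, fun j h1 h2 => (hρ j).1 h1 h2, (hρ 0).2 rfl⟩

end EigenAux

namespace EigenAux

lemma keyIneq (r : ℕ) (hr : 0 < r) :
    ∀ J, 1 ≤ J → 2 * r * (∑ j ∈ Finset.Ico 1 J, ((4*r)^j + 1)) + 2 ≤ (4*r)^J := by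
  intro J
  induction J with
  | zero => omega
  | succ n ih =>
    intro _
    rcases Nat.eq_zero_or_pos n with rfl | hn
    · simp
      omega
    · have h1 := ih hn
      rw [Finset.sum_Ico_succ_top hn]
      have hX : 4 * r ≤ (4*r)^n := by
        calc 4*r = (4*r)^1 := (pow_one _).symm
        _ ≤ (4*r)^n := Nat.pow_le_pow_right (by omega) hn
      have hpow : (4*r)^(n+1) = 4*r*(4*r)^n := by rw [pow_succ]; ring
      nlinarith

/-- The central product comparison lemma over the reals. -/
lemma prodLt (r : ℕ) (hr : 0 < r) (x : ℕ → ℝ)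
    (hxl : ∀ j, 1 ≤ j → j < r → (2:ℝ)^((4*r)^j - 1) < x j)
    (hxu : ∀ j, 1 ≤ j → j < r → x j < (2:ℝ)^((4*r)^j + 1))
    (a c : ℕ → ℕ) (ha : ∀ j, a j ≤ 2*r) (hcb : ∀ j, c j ≤ 2*r)
    (J : ℕ) (hJ1 : 1 ≤ J) (hJ2 : J < r) (hJlt : a J < c J)
    (htail : ∀ i, J < i → i < r → a i = c i) :
    ∏ j ∈ Finset.Ico 1 r, x j ^ a j < ∏ j ∈ Finset.Ico 1 r, x j ^ c j := by
  have hx1 : ∀ j, 1 ≤ j → j < r → (1:ℝ) < x j := by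
    intro j h1 h2
    have hE4 : 4 ≤ (4*r)^j := by
      rcases E_pos r j hr with h | h
      · exact h
      · omega
    calc (1:ℝ) < 2^((4*r)^j - 1) := one_lt_pow₀ (by norm_num) (by omega)
    _ < x j := hxl j h1 h2
  have hxpos : ∀ j, 1 ≤ j → j < r → (0:ℝ) < x j :=
    fun j h1 h2 => lt_trans zero_lt_one (hx1 j h1 h2)
  -- split off the tail
  rw [← Finset.prod_Ico_consecutive _ (by omega : 1 ≤ J + 1) (by omega : J + 1 ≤ r),
      ← Finset.prod_Ico_consecutive _ (by omega : 1 ≤ J + 1) (by omega : J + 1 ≤ r)]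
  have htaileq : ∏ j ∈ Finset.Ico (J+1) r, x j ^ a j = ∏ j ∈ Finset.Ico (J+1) r, x j ^ c j := by
    refine Finset.prod_congr rfl ?_
    intro i hi
    have hi' := Finset.mem_Ico.1 hi
    rw [htail i (by omega) hi'.2]
  rw [htaileq]
  have htailpos : 0 < ∏ j ∈ Finset.Ico (J+1) r, x j ^ c j := by
    refine Finset.prod_pos ?_
    intro i hi
    have hi' := Finset.mem_Ico.1 hi
    exact pow_pos (hxpos i (by omega) hi'.2) _
  refine mul_lt_mul_of_pos_right ?_ htailpos
  -- now compare on Ico 1 (J+1)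
  rw [Finset.prod_Ico_succ_top hJ1, Finset.prod_Ico_succ_top hJ1]
  -- bound head of LHS
  have hhead : ∏ j ∈ Finset.Ico 1 J, x j ^ a j ≤ (2:ℝ) ^ (2 * r * ∑ j ∈ Finset.Ico 1 J, ((4*r)^j + 1)) := by
    have h1 : ∏ j ∈ Finset.Ico 1 J, x j ^ a j ≤ ∏ j ∈ Finset.Ico 1 J, ((2:ℝ)^((4*r)^j + 1)) ^ (2*r) := by
      refine Finset.prod_le_prod ?_ ?_
      · intro i hi
        have hi' := Finset.mem_Ico.1 hi
        exact le_of_lt (pow_pos (hxpos i hi'.1 (by omega)) _)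
      · intro i hi
        have hi' := Finset.mem_Ico.1 hi
        have hilt : i < r := by omega
        calc x i ^ a i ≤ x i ^ (2*r) :=
          pow_le_pow_right₀ (le_of_lt (hx1 i hi'.1 hilt)) (ha i)
        _ ≤ ((2:ℝ)^((4*r)^i + 1)) ^ (2*r) :=
          pow_le_pow_left₀ (le_of_lt (hxpos i hi'.1 hilt)) (le_of_lt (hxu i hi'.1 hilt)) _
    calc ∏ j ∈ Finset.Ico 1 J, x j ^ a j
        ≤ ∏ j ∈ Finset.Ico 1 J, ((2:ℝ)^((4*r)^j + 1)) ^ (2*r) := h1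
    _ = ∏ j ∈ Finset.Ico 1 J, (2:ℝ)^(((4*r)^j + 1) * (2*r)) := by
        refine Finset.prod_congr rfl fun i _ => ?_
        rw [← pow_mul]
    _ = (2:ℝ) ^ (∑ j ∈ Finset.Ico 1 J, ((4*r)^j + 1) * (2*r)) := Finset.prod_pow_eq_pow_sum _ _ _
    _ = (2:ℝ) ^ (2 * r * ∑ j ∈ Finset.Ico 1 J, ((4*r)^j + 1)) := by
        rw [← Finset.sum_mul]; congr 1; ring
  have hkey := keyIneq r hr J hJ1
  have hhead2 : (2:ℝ) ^ (2 * r * ∑ j ∈ Finset.Ico 1 J, ((4*r)^j + 1)) < x J := by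
    calc (2:ℝ) ^ (2 * r * ∑ j ∈ Finset.Ico 1 J, ((4*r)^j + 1)) ≤ 2 ^ ((4*r)^J - 1) :=
      pow_le_pow_right₀ (by norm_num) (by omega)
    _ < x J := hxl J hJ1 hJ2
  have hxJpos : (0:ℝ) < x J := hxpos J hJ1 hJ2
  have honele : (1:ℝ) ≤ ∏ j ∈ Finset.Ico 1 J, x j ^ c j := by
    calc (1:ℝ) = ∏ _j ∈ Finset.Ico 1 J, (1:ℝ) := (Finset.prod_const_one).symm
    _ ≤ ∏ j ∈ Finset.Ico 1 J, x j ^ c j := by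
      refine Finset.prod_le_prod (fun _ _ => zero_le_one) ?_
      intro i hi
      have hi' := Finset.mem_Ico.1 hi
      exact one_le_pow₀ (le_of_lt (hx1 i hi'.1 (by omega)))
  calc (∏ j ∈ Finset.Ico 1 J, x j ^ a j) * x J ^ a J
      ≤ (2:ℝ) ^ (2 * r * ∑ j ∈ Finset.Ico 1 J, ((4*r)^j + 1)) * x J ^ a J :=
        mul_le_mul_of_nonneg_right hhead (le_of_lt (pow_pos hxJpos _))
  _ < x J * x J ^ a J := mul_lt_mul_of_pos_right hhead2 (pow_pos hxJpos _)
  _ = x J ^ (a J + 1) := by rw [pow_succ]; ring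
  _ ≤ x J ^ c J := pow_le_pow_right₀ (le_of_lt (hx1 J hJ1 hJ2)) (by omega)
  _ = 1 * x J ^ c J := (one_mul _).symm
  _ ≤ (∏ j ∈ Finset.Ico 1 J, x j ^ c j) * x J ^ c J :=
        mul_le_mul_of_nonneg_right honele (le_of_lt (pow_pos hxJpos _))

end EigenAux

namespace EigenAux

lemma minpoly_pp (r : ℕ) (hr : 0 < r) :
    minpoly ℤ (AdjoinRoot.root (pp r)) = pp r := by
  symm
  refine minpoly.unique' ℤ _ (pp_monic r hr) ?_ ?_
  · rw [AdjoinRoot.aeval_eq, AdjoinRoot.mk_self]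
  · intro q hq
    by_cases h0 : q = 0
    · exact Or.inl h0
    · refine Or.inr ?_
      intro hq0
      rw [AdjoinRoot.aeval_eq, AdjoinRoot.mk_eq_zero] at hq0
      exact absurd hq (not_lt.2 (Polynomial.degree_le_of_dvd hq0 h0))

noncomputable def AM (r : ℕ) (hr : 0 < r) : Matrix (Fin r) (Fin r) ℤ :=
  Matrix.reindex (finCongr (pp_natDegree r hr)) (finCongr (pp_natDegree r hr))
    (Algebra.leftMulMatrix (AdjoinRoot.powerBasis' (pp_monic r hr)).basis
      (AdjoinRoot.powerBasis' (pp_monic r hr)).gen)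

lemma AM_charpoly (r : ℕ) (hr : 0 < r) : (AM r hr).charpoly = pp r := by
  rw [AM]
  erw [Matrix.charpoly_reindex]
  erw [charpoly_leftMulMatrix]
  rw [AdjoinRoot.powerBasis'_gen]
  exact minpoly_pp r hr

lemma AM_det (r : ℕ) (hr : 0 < r) : (AM r hr).det = -1 := by
  rw [Matrix.det_eq_sign_charpoly_coeff, AM_charpoly, pp_coeff_zero, Fintype.card_fin,
    ← pow_add]
  exact Odd.neg_one_pow ⟨r, by omega⟩

lemma AM_charpoly_C (r : ℕ) (hr : 0 < r) :
    ((AM r hr).map (Int.cast : ℤ → ℂ)).charpoly = (pp r).map (Int.castRingHom ℂ) := by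
  have h := Matrix.charpoly_map (AM r hr) (Int.castRingHom ℂ)
  rw [show (Int.cast : ℤ → ℂ) = ⇑(Int.castRingHom ℂ) from rfl, h, AM_charpoly]

end EigenAux

open EigenAux

/-- For every positive integer `r` there is a matrix `A_r ∈ GL(r, ℤ)` whose characteristic
polynomial has `r` distinct complex roots `λ_1, …, λ_r`, such that no product of between
`1` and `2r - 1` of the `λ_i` (repetitions allowed) equals `1`. -/
theorem exists_integerMatrix_eigenvalue_products_ne_one (r : ℕ) (hr : 0 < r) :
    ∃ A : Matrix.GeneralLinearGroup (Fin r) ℤ, ∃ lam : Fin r → ℂ,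
      Function.Injective lam ∧
      ((A : Matrix (Fin r) (Fin r) ℤ).map (Int.cast : ℤ → ℂ)).charpoly =
        ∏ j : Fin r, (X - C (lam j)) ∧
      ∀ k : ℕ, 1 ≤ k → k ≤ 2 * r - 1 →
        ∀ idx : Fin k → Fin r, (∏ t : Fin k, lam (idx t)) ≠ 1 := by
  classical
  obtain ⟨ρ, hbig, hzero⟩ := exists_rho r hr
  set Pc : Polynomial ℂ := (pp r).map (Int.castRingHom ℂ) with hPc
  have hmonic := pp_monic r hr
  have hdeg : (pp r).natDegree = r := pp_natDegree r hr
  have hPcmonic : Pc.Monic := hmonic.map _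
  have hPcdeg : Pc.natDegree = r := by
    rw [hPc, hmonic.natDegree_map, hdeg]
  have hPcne : Pc ≠ 0 := hPcmonic.ne_zero
  have hmapfac : Pc = ((pp r).map (Int.castRingHom ℝ)).map (algebraMap ℝ ℂ) := by
    rw [hPc, Polynomial.map_map]
    congr 1
  set lam' : ℕ → ℂ := fun j => ((ρ j : ℝ) : ℂ) with hlam'
  have hrootC : ∀ j, j < r → Pc.eval (lam' j) = 0 := by
    intro j hj
    have hRroot : ((pp r).map (Int.castRingHom ℝ)).eval (ρ j) = 0 := by
      rcases Nat.eq_zero_or_pos j with rfl | hj1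
      · exact hzero.1
      · exact (hbig j hj1 hj).1
    have hcast : (algebraMap ℝ ℂ) (ρ j) = lam' j := rfl
    rw [hmapfac, ← hcast, Polynomial.eval_map, Polynomial.eval₂_at_apply, hRroot, map_zero]
  have hord : ∀ i j, i < j → j < r → ρ i < ρ j := by
    intro i j hij hjr
    have hj1 : 1 ≤ j := by omega
    have hjb := hbig j hj1 hjr
    have hE4 : 4 ≤ (4*r)^j := by
      rcases E_pos r j hr with h | h
      · exact h
      · omega
    have h1ltpow : (1:ℝ) < 2 ^ ((4*r)^j - 1) := one_lt_pow₀ (by norm_num) (by omega)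
    rcases Nat.eq_zero_or_pos i with rfl | hi1
    · calc ρ 0 ≤ 1 := hzero.2.2
      _ < 2 ^ ((4*r)^j - 1) := h1ltpow
      _ < ρ j := hjb.2.1
    · have hib := hbig i hi1 (by omega)
      have hEE : (4*r)^i + 2 ≤ (4*r)^j := E_step r i j hr hij
      calc ρ i < 2 ^ ((4*r)^i + 1) := hib.2.2
      _ ≤ (2:ℝ) ^ ((4*r)^j - 1) := pow_le_pow_right₀ (by norm_num) (by omega)
      _ < ρ j := hjb.2.1
  have hinj : ∀ i j, i < r → j < r → ρ i = ρ j → i = j := by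
    intro i j hi hj he
    rcases lt_trichotomy i j with h | h | h
    · exact absurd he (ne_of_lt (hord i j h hj))
    · exact h
    · exact absurd he.symm (ne_of_lt (hord j i h hi))
  set S : Multiset ℂ := (Multiset.range r).map lam' with hS
  have hSnodup : S.Nodup := by
    refine Multiset.Nodup.map_on ?_ (Multiset.nodup_range r)
    intro i hi j hj he
    rw [Multiset.mem_range] at hi hj
    refine hinj i j hi hj ?_
    have he' : ((ρ i : ℝ) : ℂ) = ((ρ j : ℝ) : ℂ) := he
    exact_mod_cast he'
  have hScard : Multiset.card S = r := by rw [hS, Multiset.card_map, Multiset.card_range]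
  have hSle : S ≤ Pc.roots := by
    rw [Multiset.le_iff_subset hSnodup]
    intro z hz
    rw [hS] at hz
    obtain ⟨j, hj, rfl⟩ := Multiset.mem_map.1 hz
    rw [Multiset.mem_range] at hj
    exact Polynomial.mem_roots'.2 ⟨hPcne, hrootC j hj⟩
  have hcardroots : Multiset.card Pc.roots = r := by
    refine le_antisymm ?_ ?_
    · calc Multiset.card Pc.roots ≤ Pc.natDegree := Pc.card_roots'
      _ = r := hPcdeg
    · calc r = Multiset.card S := hScard.symm
      _ ≤ Multiset.card Pc.roots := Multiset.card_le_card hSle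
  have hSeq : S = Pc.roots := Multiset.eq_of_le_of_card_le hSle (by rw [hScard, hcardroots])
  have hsplits : Pc.Splits := IsAlgClosed.splits Pc
  have hfact : Pc = (Pc.roots.map fun a => X - C a).prod :=
    hsplits.eq_prod_roots_of_monic hPcmonic
  have hfact2 : Pc = ∏ j ∈ Finset.range r, (X - C (lam' j)) := by
    rw [hfact, ← hSeq, hS, Multiset.map_map]
    rw [Finset.prod_eq_multiset_prod, Finset.range_val]
    rfl
  have hprodC : ∏ j ∈ Finset.range r, lam' j = -1 := by
    have he : Pc.eval 0 = (((-1:ℤ)^(r+1) : ℤ) : ℂ) := by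
      rw [hPc, Polynomial.eval_map, Polynomial.eval₂_at_zero, pp_coeff_zero]
      simp
    have he2 : Pc.eval 0 = (-1:ℂ)^r * ∏ j ∈ Finset.range r, lam' j := by
      rw [hfact2, Polynomial.eval_prod]
      have h1 : ∀ j ∈ Finset.range r, (X - C (lam' j)).eval 0 = (-1) * lam' j := by
        intro j _
        simp only [Polynomial.eval_sub, Polynomial.eval_X, Polynomial.eval_C]
        ring
      rw [Finset.prod_congr rfl h1, Finset.prod_mul_distrib, Finset.prod_const,
        Finset.card_range]
    have heq : (((-1:ℤ)^(r+1) : ℤ) : ℂ) = (-1:ℂ)^r * ∏ j ∈ Finset.range r, lam' j := by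
      rw [← he, he2]
    have heq2 : (-1:ℂ)^(r+1) = (-1:ℂ)^r * ∏ j ∈ Finset.range r, lam' j := by
      push_cast at heq
      exact heq
    rcases Nat.even_or_odd r with hev | hod
    · have h1 : (-1:ℂ)^r = 1 := hev.neg_one_pow
      have h2 : (-1:ℂ)^(r+1) = -1 := (Even.add_one hev).neg_one_pow
      rw [h1, h2, one_mul] at heq2
      exact heq2.symm
    · have h1 : (-1:ℂ)^r = -1 := hod.neg_one_pow
      have h2 : (-1:ℂ)^(r+1) = 1 := (Odd.add_one hod).neg_one_pow
      rw [h1, h2] at heq2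
      linear_combination heq2
  have hprodR : ∏ j ∈ Finset.range r, ρ j = -1 := by
    have hcast : ((∏ j ∈ Finset.range r, ρ j : ℝ) : ℂ) = ∏ j ∈ Finset.range r, lam' j := by
      push_cast
      rfl
    have : ((∏ j ∈ Finset.range r, ρ j : ℝ) : ℂ) = ((-1 : ℝ) : ℂ) := by
      rw [hcast, hprodC]
      norm_num
    exact_mod_cast this
  -- the matrix
  have hU : IsUnit (AM r hr).det := by
    rw [AM_det r hr]
    exact (isUnit_one (M := ℤ)).neg
  have hA : IsUnit (AM r hr) := (Matrix.isUnit_iff_isUnit_det _).2 hU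
  refine ⟨hA.unit, fun j => lam' (j : ℕ), ?_, ?_, ?_⟩
  · -- injectivity
    intro i j h
    have h' : ((ρ (i:ℕ) : ℝ) : ℂ) = ((ρ (j:ℕ) : ℝ) : ℂ) := h
    exact Fin.ext (hinj i j i.isLt j.isLt (by exact_mod_cast h'))
  · -- charpoly
    have hcoe : ((hA.unit : Matrix.GeneralLinearGroup (Fin r) ℤ) : Matrix (Fin r) (Fin r) ℤ)
        = AM r hr := hA.unit_spec
    rw [hcoe, AM_charpoly_C r hr, ← hPc, hfact2]
    exact (Fin.prod_univ_eq_prod_range (fun j => X - C (lam' j)) r).symm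
  · -- products of eigenvalues
    intro k hk1 hk2 idx hcontra
    set m : ℕ → ℕ := fun j => (Finset.univ.filter fun t : Fin k => (idx t : ℕ) = j).card with hm
    have hprodfib : ∏ t : Fin k, lam' (idx t : ℕ) = ∏ j ∈ Finset.range r, lam' j ^ m j := by
      rw [Finset.prod_comp lam' (fun t : Fin k => (idx t : ℕ))]
      refine Finset.prod_subset ?_ ?_
      · intro b hb
        obtain ⟨t, _, rfl⟩ := Finset.mem_image.1 hb
        exact Finset.mem_range.2 (idx t).isLt
      · intro b _ hnb
        have hemp : (Finset.univ.filter fun t : Fin k => (idx t : ℕ) = b) = ∅ := by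
          rw [Finset.filter_eq_empty_iff]
          intro t _
          exact fun he => hnb (Finset.mem_image.2 ⟨t, Finset.mem_univ t, he⟩)
        rw [hemp, Finset.card_empty, pow_zero]
    have hsumm : ∑ j ∈ Finset.range r, m j = k := by
      have h := Finset.card_eq_sum_card_fiberwise
        (f := fun t : Fin k => (idx t : ℕ)) (s := Finset.univ) (t := Finset.range r)
        (fun t _ => Finset.mem_range.2 (idx t).isLt)
      rw [Finset.card_univ, Fintype.card_fin] at h
      exact h.symm
    have hmle : ∀ j, m j ≤ 2 * r := by
      intro j
      calc m j ≤ (Finset.univ : Finset (Fin k)).card := Finset.card_filter_le _ _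
      _ = k := by rw [Finset.card_univ, Fintype.card_fin]
      _ ≤ 2 * r := by omega
    have hQR : ((∏ j ∈ Finset.range r, ρ j ^ m j : ℝ) : ℂ) = ((1:ℝ) : ℂ) := by
      push_cast
      rw [← hprodfib]
      exact_mod_cast hcontra
    have hQ : ∏ j ∈ Finset.range r, ρ j ^ m j = 1 := by exact_mod_cast hQR
    set XX := ∏ j ∈ Finset.Ico 1 r, ρ j with hXX
    have hρpos : ∀ j, 1 ≤ j → j < r → 0 < ρ j := by
      intro j h1 h2
      have := (hbig j h1 h2).2.1
      have hp : (0:ℝ) < 2 ^ ((4*r)^j - 1) := by positivity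
      linarith
    have hXpos : 0 < XX := by
      refine Finset.prod_pos ?_
      intro i hi
      have hi' := Finset.mem_Ico.1 hi
      exact hρpos i hi'.1 hi'.2
    have hsplitρ : ∏ j ∈ Finset.range r, ρ j = ρ 0 * XX := by
      rw [hXX, Finset.range_eq_Ico]
      exact Finset.prod_eq_prod_Ico_succ_bot hr ρ
    have hρ0X : ρ 0 * XX = -1 := by rw [← hsplitρ]; exact hprodR
    have hρ0neg : ρ 0 < 0 := by nlinarith
    set x0 : ℝ := -ρ 0 with hx0def
    have hx0X : x0 * XX = 1 := by rw [hx0def]; linarith [hρ0X]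
    have hx0pos : 0 < x0 := by rw [hx0def]; linarith
    set W := ∏ j ∈ Finset.Ico 1 r, ρ j ^ m j with hW
    have hWpos : 0 < W := by
      refine Finset.prod_pos ?_
      intro i hi
      have hi' := Finset.mem_Ico.1 hi
      exact pow_pos (hρpos i hi'.1 hi'.2) _
    have hQ' : ρ 0 ^ m 0 * W = 1 := by
      have hsplitQ : ∏ j ∈ Finset.range r, ρ j ^ m j = ρ 0 ^ m 0 * W := by
        rw [hW, Finset.range_eq_Ico]
        exact Finset.prod_eq_prod_Ico_succ_bot hr _
      rw [← hsplitQ]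
      exact hQ
    have hsign : ρ 0 ^ m 0 = (-1:ℝ)^(m 0) * x0 ^ m 0 := by
      rw [hx0def, ← neg_pow]
      ring_nf
    have hpos2 : 0 < x0 ^ m 0 * W := mul_pos (pow_pos hx0pos _) hWpos
    have hm0WX : Even (m 0) ∧ x0 ^ m 0 * W = 1 := by
      rcases Nat.even_or_odd (m 0) with he | ho
      · refine ⟨he, ?_⟩
        have h1 : ((-1:ℝ))^(m 0) = 1 := he.neg_one_pow
        rw [hsign, h1, one_mul] at hQ'
        linarith [hQ']
      · exfalso
        have h1 : ((-1:ℝ))^(m 0) = -1 := ho.neg_one_pow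
        rw [hsign, h1] at hQ'
        nlinarith [hpos2]
    obtain ⟨hm0even, hQpos⟩ := hm0WX
    have hWX : W = XX ^ m 0 := by
      have h1 : x0 ^ m 0 * XX ^ m 0 = 1 := by rw [← mul_pow, hx0X, one_pow]
      have h2 : x0 ^ m 0 ≠ 0 := ne_of_gt (pow_pos hx0pos _)
      have h3 : x0 ^ m 0 * W = x0 ^ m 0 * XX ^ m 0 := by rw [hQpos, h1]
      exact mul_left_cancel₀ h2 h3
    have hXm : XX ^ m 0 = ∏ j ∈ Finset.Ico 1 r, ρ j ^ m 0 := by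
      rw [hXX, ← Finset.prod_pow]
    by_cases hall : ∀ j ∈ Finset.Ico 1 r, m j = m 0
    · have hks : k = r * m 0 := by
        have h1 : ∑ j ∈ Finset.Ico 1 r, m j = (r - 1) * m 0 := by
          rw [Finset.sum_congr rfl hall, Finset.sum_const, Nat.card_Ico, smul_eq_mul]
        have h2 : ∑ j ∈ Finset.range r, m j = m 0 + (r - 1) * m 0 := by
          rw [Finset.range_eq_Ico, Finset.sum_eq_sum_Ico_succ_bot hr, h1]
        rw [← hsumm, h2]
        cases r with
        | zero => omega
        | succ n => simp [Nat.succ_sub_one]; ring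
      have hm01 : m 0 = 1 := by
        have h0 : m 0 ≠ 0 := by
          intro h0
          rw [h0, Nat.mul_zero] at hks
          omega
        by_contra hne
        have h2 : 2 ≤ m 0 := by omega
        have h3 : r * 2 ≤ r * m 0 := Nat.mul_le_mul_left r h2
        rw [← hks] at h3
        omega
      rw [hm01] at hm0even
      exact Nat.not_even_one hm0even
    · push_neg at hall
      obtain ⟨j0, hj0mem, hj0ne⟩ := hall
      have hsne : ((Finset.Ico 1 r).filter (fun j => m j ≠ m 0)).Nonempty :=
        ⟨j0, Finset.mem_filter.2 ⟨hj0mem, hj0ne⟩⟩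
      set J := ((Finset.Ico 1 r).filter (fun j => m j ≠ m 0)).max' hsne with hJdef
      have hJs : J ∈ (Finset.Ico 1 r).filter (fun j => m j ≠ m 0) :=
        Finset.max'_mem _ hsne
      have hJfil := Finset.mem_filter.1 hJs
      have hJ1 : 1 ≤ J := (Finset.mem_Ico.1 hJfil.1).1
      have hJ2 : J < r := (Finset.mem_Ico.1 hJfil.1).2
      have htail : ∀ i, J < i → i < r → m i = m 0 := by
        intro i hJi hir
        by_contra hne
        have hi : i ∈ (Finset.Ico 1 r).filter (fun j => m j ≠ m 0) :=
          Finset.mem_filter.2 ⟨Finset.mem_Ico.2 ⟨by omega, hir⟩, hne⟩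
        have := Finset.le_max' _ i hi
        omega
      have hρl : ∀ j, 1 ≤ j → j < r → (2:ℝ)^((4*r)^j - 1) < ρ j :=
        fun j a b => (hbig j a b).2.1
      have hρu : ∀ j, 1 ≤ j → j < r → ρ j < (2:ℝ)^((4*r)^j + 1) :=
        fun j a b => (hbig j a b).2.2
      rcases Nat.lt_or_ge (m J) (m 0) with hlt | hge
      · have hcomp := prodLt r hr ρ hρl hρu m (fun _ => m 0) hmle (fun _ => hmle 0)
          J hJ1 hJ2 hlt (fun i h1 h2 => htail i h1 h2)
        rw [← hXm, ← hWX, ← hW] at hcomp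
        exact lt_irrefl _ hcomp
      · have hgt : m 0 < m J := by omega
        have hcomp := prodLt r hr ρ hρl hρu (fun _ => m 0) m (fun _ => hmle 0) hmle
          J hJ1 hJ2 hgt (fun i h1 h2 => (htail i h1 h2).symm)
        rw [← hXm, ← hWX, ← hW] at hcomp
        exact lt_irrefl _ hcomp
end

section
/- Let n > 1 be an integer and let p(x) = x^n + a_{n−1}x^{n−1} + ... + a_2 x^2 + a_1 x + (−1)^{n+1} be a polynomial with integer coefficients a_1, ..., a_{n−1} satisfying |a_{n−1}| > |a_{n−2}| + ... + |a_2| + |a_1| + 2. Then p has exactly one root θ_1 ∈ ℂ with |θ_1| ≥ 1; this root is real and satisfies |θ_1| > 1, and all other complex roots of p have modulus strictly less than 1. -/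
open Polynomial

/-- The polynomial `p(x) = x^n + a_{n-1} x^{n-1} + ⋯ + a_2 x^2 + a_1 x + (-1)^{n+1}`
with integer coefficients. -/
noncomputable def pisotPoly (n : ℕ) (a : ℕ → ℤ) : Polynomial ℤ :=
  X ^ n + ∑ i ∈ Finset.Ico 1 n, C (a i) * X ^ i + C ((-1 : ℤ) ^ (n + 1))

private noncomputable def cabs : AbsoluteValue ℂ ℝ :=
  IsAbsoluteValue.toAbsoluteValue (norm : ℂ → ℝ)

private lemma cabs_apply (z : ℂ) : cabs z = ‖z‖ := rfl

private lemma cabs_intCast (n : ℤ) : cabs (n : ℂ) = |(n : ℝ)| := by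
  simp [cabs_apply]

private lemma cabs_conj (z : ℂ) : cabs ((starRingEnd ℂ) z) = cabs z := by
  simp [cabs_apply]

private lemma abs_multiset_prod_le_one (m : Multiset ℂ) (h : ∀ r ∈ m, cabs r < 1) :
    cabs m.prod ≤ 1 := by
  induction m using Multiset.induction with
  | empty => simp
  | cons x s ih =>
    rw [Multiset.prod_cons, map_mul]
    have hx := h x (Multiset.mem_cons_self x s)
    have hs := ih (fun r hr => h r (Multiset.mem_cons_of_mem hr))
    nlinarith [AbsoluteValue.nonneg cabs s.prod, AbsoluteValue.nonneg cabs x]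

/-- If `|a_{n-1}| > |a_{n-2}| + ⋯ + |a_1| + 2` then `p` has exactly one complex root `θ₁`
of modulus `≥ 1`; this root is real, has modulus `> 1`, and all other complex roots of `p`
lie strictly inside the unit circle. -/
theorem pisotPoly_roots (n : ℕ) (hn : 1 < n) (a : ℕ → ℤ)
    (ha : (∑ i ∈ Finset.Ico 1 (n - 1), |a i|) + 2 < |a (n - 1)|) :
    ∃ θ₁ : ℂ, aeval θ₁ (pisotPoly n a) = 0 ∧ θ₁.im = 0 ∧ 1 < ‖θ₁‖ ∧
      ∀ θ : ℂ, aeval θ (pisotPoly n a) = 0 → θ ≠ θ₁ → ‖θ‖ < 1 := by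
  classical
  obtain ⟨k, rfl⟩ : ∃ k, n = k + 2 := ⟨n - 2, by omega⟩
  rw [show k + 2 - 1 = k + 1 from by omega] at ha
  set S : ℤ := ∑ i ∈ Finset.Ico 1 (k + 1), |a i| with hSdef
  have hS0 : 0 ≤ S := Finset.sum_nonneg fun i _ => abs_nonneg _
  set A : ℤ := |a (k + 1)| with hAdef
  have hA3 : 3 ≤ A := by omega
  set Sr : ℝ := (S : ℝ) with hSr
  set Ar : ℝ := (A : ℝ) with hArdef
  have hSr0 : 0 ≤ Sr := hSr ▸ Int.cast_nonneg hS0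
  have harA : Sr + 3 ≤ Ar := by
    rw [hSr, hArdef]; exact_mod_cast (by omega : S + 3 ≤ A)
  -- the complex polynomial
  set P : Polynomial ℂ :=
    X ^ (k + 2) + (∑ i ∈ Finset.Ico 1 (k + 2), C ((a i : ℂ)) * X ^ i
      + C ((-1 : ℂ) ^ (k + 2 + 1))) with hPdef
  have heval : ∀ θ : ℂ, aeval θ (pisotPoly (k + 2) a) = P.eval θ := by
    intro θ
    simp [pisotPoly, hPdef, eval_finset_sum, add_assoc]
  -- degree facts
  have hbot : (⊥ : WithBot ℕ) < ((k + 2 : ℕ) : WithBot ℕ) := WithBot.bot_lt_coe _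
  have hdegR : (∑ i ∈ Finset.Ico 1 (k + 2), C ((a i : ℂ)) * X ^ i
      + C ((-1 : ℂ) ^ (k + 2 + 1))).degree < ((k + 2 : ℕ) : WithBot ℕ) := by
    apply lt_of_le_of_lt (degree_add_le _ _)
    apply max_lt
    · apply lt_of_le_of_lt (degree_sum_le _ _)
      rw [Finset.sup_lt_iff hbot]
      intro i hi
      refine lt_of_le_of_lt (degree_C_mul_X_pow_le _ _) ?_
      exact_mod_cast (Finset.mem_Ico.mp hi).2
    · refine lt_of_le_of_lt degree_C_le ?_
      exact_mod_cast (by omega : (0 : ℕ) < k + 2)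
  have hmonic : P.Monic := monic_X_pow_add hdegR
  have hP0 : P ≠ 0 := hmonic.ne_zero
  have hdegP : P.degree = ((k + 2 : ℕ) : WithBot ℕ) := by
    rw [hPdef, degree_add_eq_left_of_degree_lt (by rwa [degree_X_pow]), degree_X_pow]
  have hndP : P.natDegree = k + 2 := natDegree_eq_of_degree_eq_some hdegP
  -- coefficients
  have hcoeffP : ∀ i : ℕ, 1 ≤ i → i < k + 2 → P.coeff i = ((a i : ℂ)) := by
    intro i h1 h2
    rw [hPdef, coeff_add, coeff_add, coeff_X_pow, finset_sum_coeff]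
    simp only [coeff_C_mul, coeff_X_pow, mul_ite, mul_one, mul_zero, coeff_C]
    rw [Finset.sum_ite_eq (Finset.Ico 1 (k + 2)) i]
    have hi0 : ¬ i = 0 := by omega
    have hin : ¬ i = k + 2 := by omega
    simp [Finset.mem_Ico, h1, h2, hi0, hin]
  have hcoeff0 : P.coeff 0 = (-1 : ℂ) ^ (k + 2 + 1) := by
    rw [hPdef, coeff_add, coeff_add, coeff_X_pow, finset_sum_coeff]
    simp only [coeff_C_mul, coeff_X_pow, mul_ite, mul_one, mul_zero, coeff_C]
    rw [Finset.sum_ite_eq (Finset.Ico 1 (k + 2)) 0]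
    simp
  have hevalzero : cabs (P.eval 0) = 1 := by
    rw [← coeff_zero_eq_eval_zero, hcoeff0]
    simp [map_pow]
  -- root location: any root of modulus ≥ 1 has modulus > Ar - 1
  have hloc : ∀ z : ℂ, P.eval z = 0 → 1 ≤ cabs z → Ar - 1 < cabs z := by
    intro z hz h1
    have he : z ^ (k + 2) + ∑ i ∈ Finset.Ico 1 (k + 2), (a i : ℂ) * z ^ i
        + (-1 : ℂ) ^ (k + 2 + 1) = 0 := by
      rw [hPdef] at hz
      simpa [eval_finset_sum, add_assoc] using hz
    rw [Finset.sum_Ico_succ_top (by omega : 1 ≤ k + 1)] at he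
    have he2 : z ^ (k + 1) * (z + (a (k + 1) : ℂ))
        = -(∑ i ∈ Finset.Ico 1 (k + 1), (a i : ℂ) * z ^ i) - (-1 : ℂ) ^ (k + 2 + 1) := by
      linear_combination he
    set t : ℝ := cabs z with htdef
    have ht0 : (0 : ℝ) < t := by linarith
    have habs : t ^ (k + 1) * cabs (z + (a (k + 1) : ℂ)) ≤ (Sr + 1) * t ^ k := by
      have h3 : cabs (z ^ (k + 1) * (z + (a (k + 1) : ℂ)))
          ≤ Sr * t ^ k + 1 * t ^ k := by
        rw [he2]
        refine le_trans (cabs.sub_le_add _ _) (add_le_add ?_ ?_)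
        · rw [AbsoluteValue.map_neg]
          refine le_trans (AbsoluteValue.sum_le _ _ _) ?_
          rw [hSr, hSdef, Int.cast_sum, Finset.sum_mul]
          refine Finset.sum_le_sum ?_
          intro i hi
          rw [map_mul, map_pow, cabs_intCast, ← htdef, ← Int.cast_abs]
          have hik : i < k + 1 := (Finset.mem_Ico.mp hi).2
          have hti : t ^ i ≤ t ^ k := pow_le_pow_right₀ h1 (by omega : i ≤ k)
          exact mul_le_mul_of_nonneg_left hti (by positivity)
        · rw [one_mul, map_pow]
          have hm1 : cabs (-1) = 1 := by simp
          rw [hm1, one_pow]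
          exact one_le_pow₀ h1
      rw [map_mul, map_pow, ← htdef] at h3
      linarith
    have habs2 : t * cabs (z + (a (k + 1) : ℂ)) ≤ Sr + 1 := by
      have htk : (0 : ℝ) < t ^ k := pow_pos ht0 k
      rw [pow_succ] at habs
      have h4 : t ^ k * (t * cabs (z + (a (k + 1) : ℂ))) ≤ t ^ k * (Sr + 1) := by
        nlinarith [habs]
      exact le_of_mul_le_mul_left h4 htk
    by_contra hcon
    push_neg at hcon
    have hAc : cabs ((a (k + 1) : ℂ)) = Ar := by
      rw [cabs_intCast, ← Int.cast_abs, hArdef, hAdef]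
    have htri : Ar - t ≤ cabs (z + (a (k + 1) : ℂ)) := by
      have h5 : cabs ((a (k + 1) : ℂ))
          ≤ cabs (z + (a (k + 1) : ℂ)) + cabs z := by
        calc cabs ((a (k + 1) : ℂ))
            = cabs ((z + (a (k + 1) : ℂ)) + (-z)) := by congr 1; ring
          _ ≤ cabs (z + (a (k + 1) : ℂ)) + cabs (-z) :=
              cabs.add_le _ _
          _ = cabs (z + (a (k + 1) : ℂ)) + cabs z := by
              rw [AbsoluteValue.map_neg]
      rw [hAc, ← htdef] at h5
      linarith
    have hq : t * (Ar - t) ≤ Sr + 1 := by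
      calc t * (Ar - t) ≤ t * cabs (z + (a (k + 1) : ℂ)) :=
            mul_le_mul_of_nonneg_left htri (le_of_lt ht0)
        _ ≤ Sr + 1 := habs2
    nlinarith [mul_nonneg (sub_nonneg.mpr h1) (sub_nonneg.mpr hcon)]
  -- existence of a root of modulus ≥ 1
  have hsplits : P.Splits := IsAlgClosed.splits P
  have hcard : P.roots.card = k + 2 := by
    rw [← hndP]; exact splits_iff_card_roots.mp hsplits
  have hprod : P = (P.roots.map fun r => X - C r).prod := by
    have h2 := hsplits.eq_prod_roots
    rwa [hmonic.leadingCoeff, map_one, one_mul] at h2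
  have hprodeval : P.eval 0 = (P.roots.map fun r => -r).prod := by
    conv_lhs => rw [hprod]
    rw [eval_multiset_prod, Multiset.map_map]
    congr 1
    refine Multiset.map_congr rfl ?_
    intro r _
    simp
  have hex : ∃ θ₁ : ℂ, P.eval θ₁ = 0 ∧ 1 ≤ cabs θ₁ := by
    by_contra hcontra
    push_neg at hcontra
    have hroots0 : P.roots ≠ 0 := by
      intro h0; rw [h0] at hcard; simp at hcard
    obtain ⟨r₀, hr₀⟩ := Multiset.exists_mem_of_ne_zero hroots0
    have hr₀root : P.eval r₀ = 0 := (mem_roots hP0).mp hr₀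
    obtain ⟨M, hM⟩ := Multiset.exists_cons_of_mem
      (Multiset.mem_map_of_mem (fun r => -r) hr₀)
    have hsmallM : ∀ r ∈ M, cabs r < 1 := by
      intro r hr
      have hrmem : r ∈ P.roots.map fun r => -r := by
        rw [hM]; exact Multiset.mem_cons_of_mem hr
      obtain ⟨r', hr', rfl⟩ := Multiset.mem_map.mp hrmem
      rw [AbsoluteValue.map_neg]
      exact hcontra r' ((mem_roots hP0).mp hr')
    have hlt : cabs ((P.roots.map fun r => -r).prod) < 1 := by
      rw [hM, Multiset.prod_cons, map_mul, AbsoluteValue.map_neg]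
      have h1 := hcontra r₀ hr₀root
      have h2 := abs_multiset_prod_le_one M hsmallM
      nlinarith [AbsoluteValue.nonneg cabs M.prod,
        AbsoluteValue.nonneg cabs r₀]
    rw [hprodeval] at hevalzero
    linarith [hlt, hevalzero.ge]
  obtain ⟨θ₁, hθroot, hθ1⟩ := hex
  -- factor out θ₁
  obtain ⟨g, hg⟩ : ∃ g, P = (X - C θ₁) * g := dvd_iff_isRoot.mpr hθroot
  have hgmonic : g.Monic := (monic_X_sub_C θ₁).of_mul_monic_left (hg ▸ hmonic)
  have hg0 : g ≠ 0 := hgmonic.ne_zero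
  have hgdeg : g.natDegree = k + 1 := by
    have hmul := natDegree_mul (X_sub_C_ne_zero θ₁) hg0
    rw [← hg, hndP, natDegree_X_sub_C] at hmul
    omega
  -- coefficient recurrence
  have hrel : ∀ i : ℕ, θ₁ * g.coeff (i + 1) = g.coeff i - P.coeff (i + 1) := by
    intro i
    have h6 : P.coeff (i + 1) = ((X - C θ₁) * g).coeff (i + 1) := by rw [← hg]
    rw [sub_mul, coeff_sub, coeff_X_mul, coeff_C_mul] at h6
    linear_combination h6
  have hrel0 : θ₁ * g.coeff 0 = -P.coeff 0 := by
    have h6 : P.coeff 0 = ((X - C θ₁) * g).coeff 0 := by rw [← hg]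
    rw [mul_coeff_zero, coeff_sub, coeff_X_zero, coeff_C_zero] at h6
    linear_combination h6
  -- the sum of moduli of coefficients of g is < 1
  set T : ℝ := cabs θ₁ with hTdef
  have hT : Ar - 1 < T := hloc θ₁ hθroot hθ1
  set B : ℝ := ∑ i ∈ Finset.range (k + 1), cabs (g.coeff i) with hBdef
  have hB0 : 0 ≤ B :=
    Finset.sum_nonneg fun i _ => AbsoluteValue.nonneg _ _
  have hTB : T * B ≤ 1 + Sr + B := by
    rw [hBdef, Finset.mul_sum]
    have hcong : ∀ i ∈ Finset.range (k + 1),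
        T * cabs (g.coeff i) = cabs (θ₁ * g.coeff i) := by
      intro i _; rw [map_mul, hTdef]
    rw [Finset.sum_congr rfl hcong, Finset.sum_range_succ']
    have h0 : cabs (θ₁ * g.coeff 0) = 1 := by
      rw [hrel0, AbsoluteValue.map_neg, hcoeff0, map_pow]
      simp
    rw [h0]
    have hstep : ∀ i ∈ Finset.range k,
        cabs (θ₁ * g.coeff (i + 1))
          ≤ cabs (g.coeff i) + ((|a (i + 1)| : ℤ) : ℝ) := by
      intro i hi
      have hik : i < k := Finset.mem_range.mp hi
      rw [hrel i, hcoeffP (i + 1) (by omega) (by omega)]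
      refine le_trans (cabs.sub_le_add _ _) ?_
      rw [cabs_intCast, ← Int.cast_abs]
    refine le_trans (add_le_add_left (Finset.sum_le_sum hstep) 1) ?_
    rw [Finset.sum_add_distrib]
    have hsub : ∑ i ∈ Finset.range k, cabs (g.coeff i) ≤ B := by
      rw [hBdef]
      refine Finset.sum_le_sum_of_subset_of_nonneg
        (Finset.range_subset_range.mpr (by omega)) ?_
      intro i _ _; exact AbsoluteValue.nonneg _ _
    have hsum : ∑ i ∈ Finset.range k, ((|a (i + 1)| : ℤ) : ℝ) = Sr := by
      rw [hSr, hSdef, Int.cast_sum, Finset.sum_Ico_eq_sum_range]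
      simp [add_comm]
    rw [hsum]
    linarith
  have hBlt : B < 1 := by
    by_contra hB1
    push_neg at hB1
    have h7 : 1 * (T - 1) ≤ B * (T - 1) := by
      apply mul_le_mul_of_nonneg_right hB1
      linarith
    nlinarith
  -- all roots of g lie strictly inside the unit circle
  have hgsmall : ∀ w : ℂ, g.eval w = 0 → cabs w < 1 := by
    intro w hw
    by_contra hcon
    push_neg at hcon
    have hwP : P.eval w = 0 := by rw [hg, eval_mul, hw, mul_zero]
    have hwbig : Ar - 1 < cabs w := hloc w hwP hcon
    have he : g.eval w = ∑ i ∈ Finset.range (k + 2), g.coeff i * w ^ i := by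
      rw [eval_eq_sum_range, hgdeg]
    rw [Finset.sum_range_succ] at he
    have hlead : g.coeff (k + 1) = 1 := by
      have := hgmonic
      rwa [Monic, Polynomial.leadingCoeff, hgdeg] at this
    rw [hlead, one_mul, hw] at he
    have he2 : w ^ (k + 1) = -∑ i ∈ Finset.range (k + 1), g.coeff i * w ^ i := by
      linear_combination -he
    set t : ℝ := cabs w with htdef
    have ht1 : (1 : ℝ) ≤ t := hcon
    have ht0 : (0 : ℝ) < t := by linarith
    have habs : t ^ (k + 1) ≤ B * t ^ k := by
      calc t ^ (k + 1) = cabs (w ^ (k + 1)) := by rw [map_pow]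
        _ = cabs (∑ i ∈ Finset.range (k + 1), g.coeff i * w ^ i) := by
            rw [he2, AbsoluteValue.map_neg]
        _ ≤ ∑ i ∈ Finset.range (k + 1), cabs (g.coeff i * w ^ i) :=
            AbsoluteValue.sum_le _ _ _
        _ ≤ ∑ i ∈ Finset.range (k + 1), cabs (g.coeff i) * t ^ k := by
            refine Finset.sum_le_sum ?_
            intro i hi
            have hik : i < k + 1 := Finset.mem_range.mp hi
            rw [map_mul, map_pow, ← htdef]
            exact mul_le_mul_of_nonneg_left
              (pow_le_pow_right₀ ht1 (by omega : i ≤ k))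
              (AbsoluteValue.nonneg _ _)
        _ = B * t ^ k := by rw [hBdef, Finset.sum_mul]
    have htk : (0 : ℝ) < t ^ k := pow_pos ht0 k
    nlinarith [pow_succ t k]
  -- assemble the result
  have hA3r : (3 : ℝ) ≤ Ar := by rw [hArdef]; exact_mod_cast hA3
  have hθbig : 1 < cabs θ₁ := by
    rw [← hTdef]; linarith
  refine ⟨θ₁, ?_, ?_, ?_, ?_⟩
  · rw [heval]; exact hθroot
  · -- θ₁ is real
    by_contra him
    have hne : (starRingEnd ℂ) θ₁ ≠ θ₁ := by
      intro hc
      exact him ((Complex.conj_eq_iff_im).mp hc)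
    have hconjroot : P.eval ((starRingEnd ℂ) θ₁) = 0 := by
      have hcalc : P.eval ((starRingEnd ℂ) θ₁) = (starRingEnd ℂ) (P.eval θ₁) := by
        rw [hPdef]
        simp [eval_finset_sum, map_sum, map_mul, map_pow]
      rw [hcalc, hθroot, map_zero]
    have hgconj : g.eval ((starRingEnd ℂ) θ₁) = 0 := by
      have h8 := hconjroot
      rw [hg, eval_mul] at h8
      rcases mul_eq_zero.mp h8 with h9 | h9
      · exfalso
        apply hne
        have : (starRingEnd ℂ) θ₁ - θ₁ = 0 := by
          simpa [eval_sub, eval_X, eval_C] using h9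
        exact sub_eq_zero.mp this
      · exact h9
    have hsm := hgsmall _ hgconj
    rw [cabs_conj] at hsm
    linarith [hθbig]
  · exact hθbig
  · intro θ hθ hneq
    rw [heval] at hθ
    rw [hg, eval_mul] at hθ
    rcases mul_eq_zero.mp hθ with h9 | h9
    · exfalso
      apply hneq
      have : θ - θ₁ = 0 := by simpa [eval_sub, eval_X, eval_C] using h9
      exact sub_eq_zero.mp this
    · exact hgsmall θ h9
end

section
/- Let n > 1 be an integer and let p(x) = x^n + a_{n−1}x^{n−1} + ... + a_2 x^2 + a_1 x + (−1)^{n+1} be a polynomial with integer coefficients a_1, ..., a_{n−1} satisfying |a_{n−1}| > |a_{n−2}| + ... + |a_2| + |a_1| + 2. Then p is irreducible over ℚ. -/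
open Polynomial

/-! ### Auxiliary lemmas -/

lemma int_norm_complex' (m : ℤ) : ‖(m : ℂ)‖ = |(m : ℝ)| := by
  rw [show ((m:ℂ)) = ((m:ℝ):ℂ) by push_cast; ring, Complex.norm_real, Real.norm_eq_abs]

lemma nat_norm_complex' (k : ℕ) : ‖(k : ℂ)‖ = (k : ℝ) := by
  rw [show ((k:ℂ)) = ((k:ℝ):ℂ) by push_cast; ring, Complex.norm_real, Real.norm_eq_abs,
    abs_of_nonneg (Nat.cast_nonneg k)]

lemma nat_two_mul_le_two_pow {k : ℕ} (hk : 1 ≤ k) : 2 * k ≤ 2 ^ k := by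
  have h1 : k - 1 < 2 ^ (k-1) := Nat.lt_two_pow_self
  have h2 : 2 ^ k = 2 * 2 ^ (k-1) := by rw [← pow_succ']; congr 1; omega
  omega

lemma real_le_pow_of_two_le {x : ℝ} (hx : 2 ≤ x) {c k : ℕ} (hc : c ≤ 2^k) :
    (c : ℝ) ≤ x ^ k := by
  calc (c:ℝ) ≤ (2:ℝ)^k := by exact_mod_cast Nat.cast_le.mpr hc |>.trans_eq (by push_cast; ring)
  _ ≤ x^k := by apply pow_le_pow_left₀ (by norm_num) hx

lemma multiset_prod_lt_one : ∀ (t : Multiset ℝ), (∀ x ∈ t, 0 ≤ x) → (∀ x ∈ t, x < 1) →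
    t ≠ 0 → t.prod < 1 := by
  intro t
  induction t using Multiset.induction with
  | empty => intro _ _ hne; simp at hne
  | cons x s ih =>
    intro h0 h1 _
    rw [Multiset.prod_cons]
    have hx1 : x < 1 := h1 x (Multiset.mem_cons_self x s)
    have hx0 : 0 ≤ x := h0 x (Multiset.mem_cons_self x s)
    rcases eq_or_ne s 0 with rfl | hs
    · simpa using hx1
    · have hsp : s.prod < 1 := ih (fun y hy => h0 y (Multiset.mem_cons_of_mem hy))
        (fun y hy => h1 y (Multiset.mem_cons_of_mem hy)) hs
      have hsp0 : 0 ≤ s.prod :=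
        Multiset.prod_nonneg (fun y hy => h0 y (Multiset.mem_cons_of_mem hy))
      nlinarith

/-! ### Basic facts about `pisotPoly` -/

lemma pisot_deglt (n : ℕ) (hn : 1 ≤ n) (a : ℕ → ℤ) :
    degree (∑ i ∈ Finset.Ico 1 n, C (a i) * X ^ i + C ((-1 : ℤ) ^ (n + 1))) < (n : WithBot ℕ) := by
  apply lt_of_le_of_lt (degree_add_le _ _)
  rw [max_lt_iff]
  constructor
  · apply lt_of_le_of_lt (degree_sum_le _ _)
    refine (Finset.sup_lt_iff (WithBot.bot_lt_coe n)).mpr fun i hi => ?_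
    apply lt_of_le_of_lt (degree_C_mul_X_pow_le _ _)
    exact Nat.cast_lt.mpr (Finset.mem_Ico.mp hi).2
  · exact lt_of_le_of_lt degree_C_le (by exact_mod_cast hn)

lemma pisot_monic (n : ℕ) (hn : 1 ≤ n) (a : ℕ → ℤ) : (pisotPoly n a).Monic := by
  unfold pisotPoly
  rw [add_assoc]
  exact monic_X_pow_add (pisot_deglt n hn a)

lemma pisot_degree (n : ℕ) (hn : 1 ≤ n) (a : ℕ → ℤ) : (pisotPoly n a).degree = n := by
  unfold pisotPoly
  rw [add_assoc, ← degree_X_pow (R := ℤ) n] at *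
  exact degree_add_eq_left_of_degree_lt (by rw [degree_X_pow]; exact pisot_deglt n hn a)

lemma pisot_natDegree (n : ℕ) (hn : 1 ≤ n) (a : ℕ → ℤ) : (pisotPoly n a).natDegree = n :=
  natDegree_eq_of_degree_eq_some (pisot_degree n hn a)

lemma pisot_coeff_zero (n : ℕ) (hn : 1 ≤ n) (a : ℕ → ℤ) :
    (pisotPoly n a).coeff 0 = (-1:ℤ)^(n+1) := by
  rw [pisotPoly]
  rw [coeff_add, coeff_add, coeff_X_pow, if_neg (by omega : ¬ (0:ℕ) = n), finset_sum_coeff]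
  rw [Finset.sum_eq_zero (fun i hi => ?_), coeff_C]
  · simp
  · have h1i : 1 ≤ i := (Finset.mem_Ico.mp hi).1
    rw [coeff_C_mul, coeff_X_pow, if_neg (by omega : ¬ 0 = i), mul_zero]

lemma pisot_rootEq_full (n : ℕ) (a : ℕ → ℤ) (z : ℂ)
    (hz : ((pisotPoly n a).map (Int.castRingHom ℂ)).IsRoot z) :
    z^n + (∑ i ∈ Finset.Ico 1 n, (a i : ℂ) * z^i) + (-1:ℂ)^(n+1) = 0 := by
  rw [Polynomial.IsRoot, eval_map, pisotPoly] at hz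
  simp only [eval₂_add, eval₂_finset_sum, eval₂_mul, eval₂_C, eval₂_X_pow,
    eval₂_pow, eval₂_X, eval₂_neg, Int.coe_castRingHom, eval₂_one, map_pow, map_neg, map_one,
    Int.cast_neg, Int.cast_one, Int.cast_pow] at hz
  linear_combination hz

lemma pisot_rootEq (n : ℕ) (hn : 1 < n) (a : ℕ → ℤ) (z : ℂ)
    (hz : ((pisotPoly n a).map (Int.castRingHom ℂ)).IsRoot z) :
    z^n + (∑ i ∈ Finset.Ico 1 (n-1), (a i : ℂ) * z^i) + (a (n-1) : ℂ) * z^(n-1)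
      + (-1:ℂ)^(n+1) = 0 := by
  have h := Finset.sum_Ico_succ_top (show 1 ≤ n-1 by omega) (fun i => (a i : ℂ) * z^i)
  have hn1 : n - 1 + 1 = n := by omega
  rw [hn1] at h
  have hz' := pisot_rootEq_full n a z hz
  rw [h] at hz'
  linear_combination hz'

lemma pisot_deriv_rootEq (n : ℕ) (a : ℕ → ℤ) (z : ℂ)
    (hz : Polynomial.eval z (Polynomial.derivative ((pisotPoly n a).map (Int.castRingHom ℂ)))
      = 0) :
    (n:ℂ) * z^(n-1) + (∑ i ∈ Finset.Ico 1 n, (i:ℂ) * (a i:ℂ) * z^(i-1)) = 0 := by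
  rw [derivative_map, pisotPoly] at hz
  simp only [derivative_add, derivative_X_pow, derivative_sum, derivative_C_mul,
    derivative_C, add_zero, Polynomial.map_add, Polynomial.map_mul, Polynomial.map_pow,
    Polynomial.map_natCast, eval_natCast, map_C, map_X, Polynomial.map_sum, eval_add, eval_mul,
    eval_pow, eval_natCast, eval_C, eval_X, eval_finset_sum, Int.coe_castRingHom] at hz
  rw [← hz]
  refine congrArg₂ HAdd.hAdd rfl (Finset.sum_congr rfl fun i hi => by push_cast; ring)

/-! ### Analytic lemmas about the roots -/

lemma big_root (n : ℕ) (hn : 1 < n) (a : ℕ → ℤ) (z : ℂ)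
    (heq : z^n + (∑ i ∈ Finset.Ico 1 (n-1), (a i : ℂ) * z^i) + (a (n-1) : ℂ) * z^(n-1)
      + (-1:ℂ)^(n+1) = 0)
    (hSA : (∑ i ∈ Finset.Ico 1 (n-1), |(a i : ℝ)|) + 3 ≤ |(a (n-1) : ℝ)|)
    (h1 : 1 ≤ ‖z‖) :
    2 ≤ ‖z‖ ∧ ((∑ i ∈ Finset.Ico 1 (n-1), |(a i : ℝ)|) + 5)/2 ≤ ‖z‖ := by
  set S : ℝ := ∑ i ∈ Finset.Ico 1 (n-1), |(a i : ℝ)| with hS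
  set A : ℝ := |(a (n-1) : ℝ)| with hA
  have hz0 : (0:ℝ) < ‖z‖ := lt_of_lt_of_le one_pos h1
  have key : z^(n-1) * (z + (a (n-1) : ℂ))
      = -((∑ i ∈ Finset.Ico 1 (n-1), (a i : ℂ) * z^i) + (-1:ℂ)^(n+1)) := by
    have hzz : z^(n-1) * z = z^n := by rw [← pow_succ]; congr 1; omega
    rw [mul_add, hzz]; linear_combination heq
  have hT : ‖(∑ i ∈ Finset.Ico 1 (n-1), (a i : ℂ) * z^i) + (-1:ℂ)^(n+1)‖
      ≤ (S + 1) * ‖z‖^(n-2) := by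
    apply le_trans (norm_add_le _ _)
    have h2 : ‖(-1:ℂ)^(n+1)‖ = 1 := by
      rw [norm_pow, norm_neg, norm_one, one_pow]
    have h3 : ‖∑ i ∈ Finset.Ico 1 (n-1), (a i : ℂ) * z^i‖ ≤ S * ‖z‖^(n-2) := by
      apply le_trans (norm_sum_le _ _)
      rw [hS, Finset.sum_mul]
      apply Finset.sum_le_sum
      intro i hi
      rw [norm_mul, norm_pow, int_norm_complex']
      apply mul_le_mul_of_nonneg_left _ (abs_nonneg _)
      exact pow_le_pow_right₀ h1 (by have := (Finset.mem_Ico.mp hi).2; omega)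
    have h4 : (1:ℝ) ≤ ‖z‖^(n-2) := one_le_pow₀ h1
    nlinarith [h3, h2]
  have hkey : ‖z‖^(n-1) * ‖z + (a (n-1) : ℂ)‖ ≤ (S+1) * ‖z‖^(n-2) := by
    rw [← norm_pow, ← norm_mul, key, norm_neg]; exact hT
  have hsplit : ‖z‖^(n-1) = ‖z‖^(n-2) * ‖z‖ := by rw [← pow_succ]; congr 1; omega
  have hq : ‖z‖ * ‖z + (a (n-1) : ℂ)‖ ≤ S + 1 := by
    have hp : (0:ℝ) < ‖z‖^(n-2) := by positivity
    rw [hsplit] at hkey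
    nlinarith [hkey, hp]
  have hS0 : 0 ≤ S := Finset.sum_nonneg fun i _ => abs_nonneg _
  have htri : A ≤ ‖z + (a (n-1) : ℂ)‖ + ‖z‖ := by
    calc A = ‖(z + (a (n-1) : ℂ)) - z‖ := by rw [add_sub_cancel_left, int_norm_complex']
    _ ≤ ‖z + (a (n-1) : ℂ)‖ + ‖z‖ := norm_sub_le _ _
  have hnn : 0 ≤ ‖z + (a (n-1) : ℂ)‖ := norm_nonneg _
  have h2z : 2 ≤ ‖z‖ := by nlinarith [hq, htri, hSA, h1, hnn]
  refine ⟨h2z, ?_⟩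
  nlinarith [hq, htri, hSA, h2z, hnn]

lemma no_double (m : ℕ) (hm : 1 ≤ m) (a : ℕ → ℤ) (z : ℂ)
    (heq : z^(m+1) + (∑ i ∈ Finset.Ico 1 (m+1), (a i:ℂ) * z^i) + (-1:ℂ)^(m+2) = 0)
    (hd : ((m:ℂ)+1) * z^m + (∑ i ∈ Finset.Ico 1 (m+1), (i:ℂ) * (a i:ℂ) * z^(i-1)) = 0)
    (hSA : (∑ i ∈ Finset.Ico 1 m, |(a i : ℝ)|) + 3 ≤ |(a m : ℝ)|)
    (h2z : 2 ≤ ‖z‖) : False := by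
  set S : ℝ := ∑ i ∈ Finset.Ico 1 m, |(a i : ℝ)| with hS
  have hsub : ((m:ℂ)+1) * (∑ i ∈ Finset.Ico 1 (m+1), (a i:ℂ) * z^i)
      - z * (∑ i ∈ Finset.Ico 1 (m+1), (i:ℂ) * (a i:ℂ) * z^(i-1))
      = ∑ i ∈ Finset.Ico 1 (m+1), (((m:ℂ)+1) - (i:ℂ)) * (a i:ℂ) * z^i := by
    rw [Finset.mul_sum, Finset.mul_sum, ← Finset.sum_sub_distrib]
    refine Finset.sum_congr rfl fun i hi => ?_
    have h1i : 1 ≤ i := (Finset.mem_Ico.mp hi).1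
    have hzz : z * z^(i-1) = z^i := by rw [← pow_succ']; congr 1; omega
    linear_combination (-(i:ℂ) * (a i:ℂ)) * hzz
  have hcomb : ∑ i ∈ Finset.Ico 1 (m+1), (((m:ℂ)+1) - (i:ℂ)) * (a i:ℂ) * z^i
      + ((m:ℂ)+1) * (-1:ℂ)^(m+2) = 0 := by
    linear_combination ((m:ℂ)+1) * heq - z * hd - hsub
  rw [Finset.sum_Ico_succ_top hm] at hcomb
  have htop : (a m:ℂ) * z^m
      = -((∑ i ∈ Finset.Ico 1 m, (((m:ℂ)+1) - (i:ℂ)) * (a i:ℂ) * z^i)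
        + ((m:ℂ)+1) * (-1:ℂ)^(m+2)) := by
    linear_combination hcomb
  have hz0 : (0:ℝ) < ‖z‖ := by linarith
  have hzm : (0:ℝ) < ‖z‖^m := by positivity
  have hnorm : |(a m:ℝ)| * ‖z‖^m ≤ (S + 1) * ‖z‖^m := by
    have hL : |(a m:ℝ)| * ‖z‖^m = ‖(a m:ℂ) * z^m‖ := by
      rw [norm_mul, norm_pow, int_norm_complex']
    rw [hL, htop, norm_neg]
    apply le_trans (norm_add_le _ _)
    have hterm : ∀ i ∈ Finset.Ico 1 m,
        ‖(((m:ℂ)+1) - (i:ℂ)) * (a i:ℂ) * z^i‖ ≤ |(a i:ℝ)| * ‖z‖^m := by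
      intro i hi
      obtain ⟨h1i, him⟩ := Finset.mem_Ico.mp hi
      rw [norm_mul, norm_mul, int_norm_complex']
      have hc : (((m:ℂ)+1) - (i:ℂ)) = ((m+1-i : ℕ) : ℂ) := by
        push_cast [Nat.cast_sub (by omega : i ≤ m+1)]; ring
      rw [hc, nat_norm_complex', norm_pow]
      have hkey : ((m+1-i:ℕ):ℝ) * ‖z‖^i ≤ ‖z‖^m := by
        have h1 : ((m+1-i:ℕ):ℝ) ≤ ‖z‖^(m-i) := by
          apply real_le_pow_of_two_le h2z
          have hk : 1 ≤ m - i := by omega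
          have := nat_two_mul_le_two_pow hk
          omega
        calc ((m+1-i:ℕ):ℝ) * ‖z‖^i ≤ ‖z‖^(m-i) * ‖z‖^i :=
          mul_le_mul_of_nonneg_right h1 (by positivity)
        _ = ‖z‖^m := by rw [← pow_add]; congr 1; omega
      calc ((m+1-i:ℕ):ℝ) * |(a i:ℝ)| * ‖z‖^i = |(a i:ℝ)| * (((m+1-i:ℕ):ℝ) * ‖z‖^i) := by ring
      _ ≤ |(a i:ℝ)| * ‖z‖^m := mul_le_mul_of_nonneg_left hkey (abs_nonneg _)
    have hsum2 := Finset.sum_le_sum hterm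
    have heps : ‖((m:ℂ)+1) * (-1:ℂ)^(m+2)‖ ≤ ‖z‖^m := by
      rw [norm_mul, norm_pow, norm_neg, norm_one, one_pow, mul_one,
        show ((m:ℂ)+1) = ((m+1:ℕ):ℂ) by push_cast; ring, nat_norm_complex']
      apply real_le_pow_of_two_le h2z
      have := nat_two_mul_le_two_pow hm
      omega
    have : ∑ i ∈ Finset.Ico 1 m, |(a i:ℝ)| * ‖z‖^m = S * ‖z‖^m := by
      rw [hS, Finset.sum_mul]
    calc ‖∑ i ∈ Finset.Ico 1 m, (((m:ℂ)+1) - (i:ℂ)) * (a i:ℂ) * z^i‖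
        + ‖((m:ℂ)+1) * (-1:ℂ)^(m+2)‖
        ≤ (∑ i ∈ Finset.Ico 1 m, |(a i:ℝ)| * ‖z‖^m) + ‖z‖^m := by
          apply add_le_add _ heps
          exact le_trans (norm_sum_le _ _) hsum2
    _ = (S+1) * ‖z‖^m := by rw [this]; ring
  have : |(a m:ℝ)| ≤ S + 1 := le_of_mul_le_mul_right (by linarith [hnorm]) hzm
  linarith [hSA, this]

lemma no_two_roots (m : ℕ) (hm : 1 ≤ m) (a : ℕ → ℤ) (z w : ℂ) (hzw : z ≠ w)
    (heqz : z^(m+1) + (∑ i ∈ Finset.Ico 1 (m+1), (a i:ℂ) * z^i) + (-1:ℂ)^(m+2) = 0)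
    (heqw : w^(m+1) + (∑ i ∈ Finset.Ico 1 (m+1), (a i:ℂ) * w^i) + (-1:ℂ)^(m+2) = 0)
    (hle : ‖w‖ ≤ ‖z‖) (h2w : 2 ≤ ‖w‖)
    (hbig : ((∑ i ∈ Finset.Ico 1 m, |(a i : ℝ)|) + 5)/2 ≤ ‖z‖) : False := by
  set S : ℝ := ∑ i ∈ Finset.Ico 1 m, |(a i : ℝ)| with hS
  set u : ℝ := ‖z‖ with hu
  set v : ℝ := ‖w‖ with hv
  have h2u : 2 ≤ u := le_trans h2w hle
  have hu0 : (0:ℝ) < u := by linarith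
  have hv0 : (0:ℝ) < v := by linarith
  set s : ℕ → ℂ := fun k => ∑ j ∈ Finset.range k, z^j * w^(k-1-j) with hs
  have hgeom : ∀ k : ℕ, s k * (z - w) = z^k - w^k := fun k => geom_sum₂_mul z w k
  have hzsub : z - w ≠ 0 := sub_ne_zero.mpr hzw
  have main : (z*w)^m = (∑ i ∈ Finset.Ico 1 m, (a i:ℂ) * ((z*w)^i * s (m-i)))
      + (-1:ℂ)^(m+2) * s m := by
    apply mul_right_cancel₀ hzsub
    rw [add_mul, Finset.sum_mul, mul_assoc, hgeom m]
    have hR : ∀ i ∈ Finset.Ico 1 m, (a i:ℂ) * ((z*w)^i * s (m-i)) * (z-w)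
        = (a i:ℂ) * ((z*w)^i * (z^(m-i) - w^(m-i))) := by
      intro i hi
      calc (a i:ℂ) * ((z*w)^i * s (m-i)) * (z-w)
          = (a i:ℂ) * ((z*w)^i * (s (m-i) * (z-w))) := by ring
      _ = _ := by rw [hgeom (m-i)]
    rw [Finset.sum_congr rfl hR]
    have hsum : z^m * (∑ i ∈ Finset.Ico 1 (m+1), (a i:ℂ) * w^i)
        - w^m * (∑ i ∈ Finset.Ico 1 (m+1), (a i:ℂ) * z^i)
        = ∑ i ∈ Finset.Ico 1 (m+1), (a i:ℂ) * ((z*w)^i * (z^(m-i) - w^(m-i))) := by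
      rw [Finset.mul_sum, Finset.mul_sum, ← Finset.sum_sub_distrib]
      refine Finset.sum_congr rfl fun i hi => ?_
      obtain ⟨h1i, him⟩ := Finset.mem_Ico.mp hi
      have hzp : z^m = z^i * z^(m-i) := by rw [← pow_add]; congr 1; omega
      have hwp : w^m = w^i * w^(m-i) := by rw [← pow_add]; congr 1; omega
      rw [hzp, hwp]; ring
    conv at hsum => rw [show (∑ i ∈ Finset.Ico 1 (m+1), (a i:ℂ) * ((z*w)^i * (z^(m-i) - w^(m-i))))
      = (∑ i ∈ Finset.Ico 1 m, (a i:ℂ) * ((z*w)^i * (z^(m-i) - w^(m-i))))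
        + (a m:ℂ) * ((z*w)^m * (z^(m-m) - w^(m-m))) from Finset.sum_Ico_succ_top hm _]
    have htop0 : (a m:ℂ) * ((z*w)^m * (z^(m-m) - w^(m-m))) = 0 := by
      simp [Nat.sub_self]
    rw [htop0, add_zero] at hsum
    linear_combination hsum + w^m * heqz - z^m * heqw
  have hσ : ∀ k : ℕ, ‖s k‖ ≤ (k:ℝ) * u^(k-1) := by
    intro k
    apply le_trans (norm_sum_le _ _)
    have hterm : ∀ j ∈ Finset.range k, ‖z^j * w^(k-1-j)‖ ≤ u^(k-1) := by
      intro j hj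
      have hjk := Finset.mem_range.mp hj
      rw [norm_mul, norm_pow, norm_pow]
      calc u^j * v^(k-1-j) ≤ u^j * u^(k-1-j) := by
            apply mul_le_mul_of_nonneg_left (pow_le_pow_left₀ (by linarith) hle _) (by positivity)
      _ = u^(k-1) := by rw [← pow_add]; congr 1; omega
    apply le_trans (Finset.sum_le_sum hterm)
    rw [Finset.sum_const, Finset.card_range, nsmul_eq_mul]
  have hnorm : (u*v)^m ≤ (∑ i ∈ Finset.Ico 1 m, |(a i:ℝ)| * ((u*v)^i * ((m-i:ℕ) * u^(m-i-1))))
      + (m:ℝ) * u^(m-1) := by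
    have hL : (u*v)^m = ‖(z*w)^m‖ := by rw [norm_pow, norm_mul]
    rw [hL, main]
    apply le_trans (norm_add_le _ _)
    apply add_le_add
    · apply le_trans (norm_sum_le _ _)
      apply Finset.sum_le_sum
      intro i hi
      rw [norm_mul, norm_mul, int_norm_complex', norm_pow, norm_mul]
      apply mul_le_mul_of_nonneg_left _ (abs_nonneg _)
      apply mul_le_mul_of_nonneg_left _ (by positivity)
      exact le_trans (hσ (m-i)) (by rw [Nat.sub_sub])
    · rw [norm_mul, norm_pow, norm_neg, norm_one, one_pow, one_mul]
      exact hσ m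
  have hterm2 : ∀ i ∈ Finset.Ico 1 m,
      |(a i:ℝ)| * ((u*v)^i * ((m-i:ℕ) * u^(m-i-1))) * (2*u) ≤ |(a i:ℝ)| * (u*v)^m := by
    intro i hi
    obtain ⟨h1i, him⟩ := Finset.mem_Ico.mp hi
    have hk : 1 ≤ m - i := by omega
    have hsplit : (u*v)^m = (u*v)^i * (u^(m-i) * v^(m-i)) := by
      rw [show (u*v)^m = (u*v)^(i+(m-i)) by congr 1; omega, pow_add]
      ring
    have hup : u^(m-i-1) * u = u^(m-i) := by rw [← pow_succ]; congr 1; omega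
    have h2k : ((m-i:ℕ):ℝ) * 2 ≤ v^(m-i) := by
      have := nat_two_mul_le_two_pow hk
      have h := real_le_pow_of_two_le h2w (k := m-i) (c := 2*(m-i)) this
      calc ((m-i:ℕ):ℝ) * 2 = ((2*(m-i):ℕ):ℝ) := by push_cast; ring
      _ ≤ v^(m-i) := h
    calc |(a i:ℝ)| * ((u*v)^i * ((m-i:ℕ) * u^(m-i-1))) * (2*u)
        = |(a i:ℝ)| * (u*v)^i * ((((m-i:ℕ):ℝ) * 2) * (u^(m-i-1) * u)) := by ring
    _ ≤ |(a i:ℝ)| * (u*v)^i * (v^(m-i) * u^(m-i)) := by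
        apply mul_le_mul_of_nonneg_left _ (by positivity)
        rw [hup]
        exact mul_le_mul_of_nonneg_right h2k (by positivity)
    _ = |(a i:ℝ)| * (u*v)^m := by rw [hsplit]; ring
  have heps2 : (m:ℝ) * u^(m-1) * (2*u) ≤ (u*v)^m := by
    have h2m : ((m:ℕ):ℝ) * 2 ≤ v^m := by
      have := nat_two_mul_le_two_pow hm
      have h := real_le_pow_of_two_le h2w (k := m) (c := 2*m) this
      calc ((m:ℕ):ℝ) * 2 = ((2*m:ℕ):ℝ) := by push_cast; ring
      _ ≤ v^m := h
    have hup : u^(m-1) * u = u^m := by rw [← pow_succ]; congr 1; omega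
    calc (m:ℝ) * u^(m-1) * (2*u) = ((m:ℝ) * 2) * (u^(m-1) * u) := by ring
    _ ≤ v^m * u^m := by
        rw [hup]; exact mul_le_mul_of_nonneg_right h2m (by positivity)
    _ = (u*v)^m := by rw [mul_pow]; ring
  have hfin : (u*v)^m * (2*u) ≤ (S+1) * (u*v)^m := by
    calc (u*v)^m * (2*u)
        ≤ ((∑ i ∈ Finset.Ico 1 m, |(a i:ℝ)| * ((u*v)^i * ((m-i:ℕ) * u^(m-i-1))))
          + (m:ℝ) * u^(m-1)) * (2*u) := by
          apply mul_le_mul_of_nonneg_right hnorm (by positivity)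
    _ = (∑ i ∈ Finset.Ico 1 m, |(a i:ℝ)| * ((u*v)^i * ((m-i:ℕ) * u^(m-i-1))) * (2*u))
          + (m:ℝ) * u^(m-1) * (2*u) := by rw [add_mul, Finset.sum_mul]
    _ ≤ (∑ i ∈ Finset.Ico 1 m, |(a i:ℝ)| * (u*v)^m) + (u*v)^m := by
          exact add_le_add (Finset.sum_le_sum hterm2) heps2
    _ = (S+1) * (u*v)^m := by rw [← Finset.sum_mul, ← hS]; ring
  have huv : (0:ℝ) < (u*v)^m := by positivity
  have h2uS : 2*u ≤ S+1 :=
    le_of_mul_le_mul_right (by linarith [hfin] : (2*u) * (u*v)^m ≤ (S+1) * (u*v)^m) huv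
  linarith [hbig, h2uS]

/-! ### Main theorem -/

/-- If `|a_{n-1}| > |a_{n-2}| + ⋯ + |a_1| + 2` then `p` is irreducible over `ℚ`. -/
theorem pisotPoly_irreducible (n : ℕ) (hn : 1 < n) (a : ℕ → ℤ)
    (ha : (∑ i ∈ Finset.Ico 1 (n - 1), |a i|) + 2 < |a (n - 1)|) :
    Irreducible ((pisotPoly n a).map (Int.castRingHom ℚ)) := by
  have hn1 : 1 ≤ n := by omega
  have hmon := pisot_monic n hn1 a
  rw [← Polynomial.IsPrimitive.Int.irreducible_iff_irreducible_map_cast hmon.isPrimitive]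
  have hSA : (∑ i ∈ Finset.Ico 1 (n-1), |(a i : ℝ)|) + 3 ≤ |(a (n-1) : ℝ)| := by
    have h3 : (∑ i ∈ Finset.Ico 1 (n - 1), |a i|) + 3 ≤ |a (n - 1)| := by omega
    exact_mod_cast h3
  constructor
  · intro hu
    have := natDegree_eq_zero_of_isUnit hu
    rw [pisot_natDegree n hn1 a] at this
    omega
  · rintro g h hgh
    by_contra hcon
    push_neg at hcon
    obtain ⟨hgu, hhu⟩ := hcon
    have hp0 : pisotPoly n a ≠ 0 := hmon.ne_zero
    have hg0 : g ≠ 0 := fun h0 => hp0 (by rw [hgh, h0, zero_mul])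
    have hh0 : h ≠ 0 := fun h0 => hp0 (by rw [hgh, h0, mul_zero])
    have hlead : g.leadingCoeff * h.leadingCoeff = 1 := by
      have hm2 := hmon
      rw [Monic, hgh, leadingCoeff_mul] at hm2
      exact hm2
    have hgl : IsUnit g.leadingCoeff := IsUnit.of_mul_eq_one _ hlead
    have hhl : IsUnit h.leadingCoeff :=
      IsUnit.of_mul_eq_one _ (by rw [mul_comm] at hlead; exact hlead)
    have hdg : g.natDegree ≠ 0 := by
      intro h0
      refine hgu ?_
      rw [eq_C_of_natDegree_eq_zero h0]
      refine isUnit_C.mpr ?_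
      rw [Polynomial.leadingCoeff, h0] at hgl
      exact hgl
    have hdh : h.natDegree ≠ 0 := by
      intro h0
      refine hhu ?_
      rw [eq_C_of_natDegree_eq_zero h0]
      refine isUnit_C.mpr ?_
      rw [Polynomial.leadingCoeff, h0] at hhl
      exact hhl
    have hcc : g.coeff 0 * h.coeff 0 = (-1:ℤ)^(n+1) := by
      rw [← mul_coeff_zero, ← hgh, pisot_coeff_zero n hn1 a]
    have hccu : IsUnit (g.coeff 0 * h.coeff 0) := by
      rw [hcc]; exact (isUnit_one.neg).pow (n+1)
    have hgc : IsUnit (g.coeff 0) := isUnit_of_mul_isUnit_left hccu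
    have hhc : IsUnit (h.coeff 0) := isUnit_of_mul_isUnit_right hccu
    -- pass to ℂ
    have hinj : Function.Injective (Int.castRingHom ℂ) := fun x y hxy => Int.cast_injective hxy
    set P := (pisotPoly n a).map (Int.castRingHom ℂ) with hPdef
    set G := g.map (Int.castRingHom ℂ) with hGdef
    set H := h.map (Int.castRingHom ℂ) with hHdef
    have hPGH : P = G * H := by rw [hPdef, hgh, Polynomial.map_mul]
    have hG0 : G ≠ 0 := (Polynomial.map_ne_zero_iff hinj).mpr hg0
    have hH0 : H ≠ 0 := (Polynomial.map_ne_zero_iff hinj).mpr hh0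
    have hP0 : P ≠ 0 := by rw [hPGH]; exact mul_ne_zero hG0 hH0
    -- each nonconstant factor has a root of norm at least 1
    have key : ∀ q : Polynomial ℤ, q ≠ 0 → q.natDegree ≠ 0 → IsUnit (q.coeff 0) →
        IsUnit q.leadingCoeff → ∃ r ∈ (q.map (Int.castRingHom ℂ)).roots, 1 ≤ ‖r‖ := by
      intro q hq0 hqd hqc hql
      by_contra hall
      push_neg at hall
      set Q := q.map (Int.castRingHom ℂ) with hQdef
      have hQ0 : Q ≠ 0 := (Polynomial.map_ne_zero_iff hinj).mpr hq0
      have hsplits : Splits Q := IsAlgClosed.splits Q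
      have hcard : Q.roots.card = Q.natDegree := splits_iff_card_roots.mp hsplits
      have hQd : Q.natDegree = q.natDegree := natDegree_map_eq_of_injective hinj q
      have hne : Q.roots ≠ 0 := by
        intro h0
        rw [h0] at hcard
        simp only [Multiset.card_zero] at hcard
        rw [hQd] at hcard
        exact hqd hcard.symm
      have hprod := hsplits.eq_prod_roots
      have he0 : Q.eval 0 = Q.leadingCoeff * (Q.roots.map (fun r => -r)).prod := by
        conv_lhs => rw [hprod]
        rw [eval_mul, eval_C, eval_multiset_prod, Multiset.map_map]
        have hmapeq : Multiset.map (eval 0 ∘ fun a => X - C a) Q.roots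
            = Multiset.map (fun r => -r) Q.roots :=
          Multiset.map_congr rfl fun r _ => by simp
        rw [hmapeq]
      -- norms
      have hnorm1 : ‖Q.eval 0‖ = 1 := by
        rw [hQdef, eval_map, eval₂_at_zero, Int.coe_castRingHom, int_norm_complex']
        rcases Int.isUnit_iff.mp hqc with h1 | h1 <;> rw [h1] <;> norm_num
      have hnormL : ‖Q.leadingCoeff‖ = 1 := by
        rw [hQdef, leadingCoeff_map_of_injective hinj, Int.coe_castRingHom, int_norm_complex']
        rcases Int.isUnit_iff.mp hql with h1 | h1 <;> rw [h1] <;> norm_num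
      have hprodnorm : ((Q.roots.map (fun r => -r)).map (fun x => ‖x‖)).prod
          = ‖(Q.roots.map (fun r => -r)).prod‖ := by
        exact Multiset.prod_hom _ (normHom.toMonoidHom : ℂ →* ℝ)
      have hlt : ((Q.roots.map (fun r => -r)).map (fun x => ‖x‖)).prod < 1 := by
        apply multiset_prod_lt_one
        · intro x hx
          obtain ⟨y, _, rfl⟩ := Multiset.mem_map.mp hx
          exact norm_nonneg y
        · intro x hx
          obtain ⟨y, hy, rfl⟩ := Multiset.mem_map.mp hx
          obtain ⟨r, hr, rfl⟩ := Multiset.mem_map.mp hy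
          rw [norm_neg]
          exact hall r hr
        · intro h0
          apply hne
          rw [← Multiset.card_eq_zero] at h0 ⊢
          simpa using h0
      rw [hprodnorm] at hlt
      have : ‖Q.eval 0‖ < 1 := by
        rw [he0, norm_mul, hnormL, one_mul]
        exact hlt
      rw [hnorm1] at this
      linarith
    obtain ⟨ξg, hξgmem, hξg1⟩ := key g hg0 hdg hgc hgl
    obtain ⟨ξh, hξhmem, hξh1⟩ := key h hh0 hdh hhc hhl
    have hroots : P.roots = G.roots + H.roots := by
      rw [hPGH]
      exact roots_mul (by rw [← hPGH]; exact hP0)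
    have hξgP : ξg ∈ P.roots := by rw [hroots]; exact Multiset.mem_add.mpr (Or.inl hξgmem)
    have hξhP : ξh ∈ P.roots := by rw [hroots]; exact Multiset.mem_add.mpr (Or.inr hξhmem)
    have hξgroot : P.IsRoot ξg := (mem_roots'.mp hξgP).2
    have hξhroot : P.IsRoot ξh := (mem_roots'.mp hξhP).2
    have heqgF := pisot_rootEq_full n a ξg hξgroot
    have heqhF := pisot_rootEq_full n a ξh hξhroot
    have heqgS := pisot_rootEq n hn a ξg hξgroot
    have heqhS := pisot_rootEq n hn a ξh hξhroot
    obtain ⟨hg2, hgbig⟩ := big_root n hn a ξg heqgS hSA hξg1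
    obtain ⟨hh2, hhbig⟩ := big_root n hn a ξh heqhS hSA hξh1
    -- replace n by m+1
    obtain ⟨m, rfl⟩ : ∃ m, n = m + 1 := ⟨n - 1, by omega⟩
    have hm : 1 ≤ m := by omega
    simp only [Nat.add_sub_cancel] at hSA heqgF heqhF hgbig hhbig
    by_cases hne : ξg = ξh
    · -- double root: use the derivative
      have hcnt : 2 ≤ P.roots.count ξg := by
        rw [hroots, Multiset.count_add]
        have h1 : 1 ≤ G.roots.count ξg := Multiset.one_le_count_iff_mem.mpr hξgmem
        have h2 : 1 ≤ H.roots.count ξg := Multiset.one_le_count_iff_mem.mpr (by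
          rw [hne]; exact hξhmem)
        omega
      rw [count_roots] at hcnt
      have hdvd : (X - C ξg)^2 ∣ P := (le_rootMultiplicity_iff hP0).mp hcnt
      obtain ⟨q, hq⟩ := hdvd
      have hdz : Polynomial.eval ξg (Polynomial.derivative P) = 0 := by
        rw [hq, derivative_mul, derivative_pow]
        simp
      have hd' := pisot_deriv_rootEq (m+1) a ξg hdz
      simp only [Nat.add_sub_cancel] at hd'
      push_cast at hd'
      exact no_double m hm a ξg heqgF hd' hSA hg2
    · -- two distinct roots
      rcases le_total ‖ξh‖ ‖ξg‖ with hle | hle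
      · exact no_two_roots m hm a ξg ξh hne heqgF heqhF hle hh2 hgbig
      · exact no_two_roots m hm a ξh ξg (Ne.symm hne) heqhF heqgF hle hg2 hhbig
end
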